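/- arXiv:2306.15370 — 5 statements merged into one kernel-verified Lean document; each statement's English description precedes it below -/
import Mathlib

section
/- For every group Γ with a finite generating set S, there exist a constant c > 0 and N ∈ ℕ such that for all n ≥ N there exists a nontrivial element w ∈ Γ∗⟨x⟩ with |w|_{S∪{x}} ≤ n satisfying w(g) = e for every g ∈ Γ with |g|_S < c·log(n). (Equivalently, the MIF growth function satisfies M_Γ^S(n) ≥ c·log(n) for all large n.) -/
open scoped Classical

/-- Word length of `g` with respect to generating set `S` (letters from `S ∪ S⁻¹`). -/
noncomputable def wordLength {G : Type*} [Group G] (S : Set G) (g : G) : ℕ :=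
  sInf {m | ∃ l : List G, l.length = m ∧ (∀ a ∈ l, a ∈ S ∨ a⁻¹ ∈ S) ∧ l.prod = g}

/-- The free product `G ∗ ⟨x⟩`. -/
abbrev FPZ (G : Type*) [Group G] := Monoid.Coprod G (Multiplicative ℤ)

/-- The stable letter `x` raised to the power `m`. -/
def xpow (G : Type*) [Group G] (m : ℤ) : FPZ G :=
  Monoid.Coprod.inr (Multiplicative.ofAdd m)

/-- Evaluation of words with constants: the unique hom `G ∗ ⟨x⟩ → G` restricting to
the identity on `G` and sending `x` to `g`. -/
def wordEval {G : Type*} [Group G] (g : G) : FPZ G →* G :=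
  Monoid.Coprod.lift (MonoidHom.id G) (zpowersHom G g)

/-- The generating set `S ∪ {x}` of `G ∗ ⟨x⟩`. -/
def genSet {G : Type*} [Group G] (S : Set G) : Set (FPZ G) :=
  ((Monoid.Coprod.inl : G →* FPZ G) '' S) ∪ {xpow G 1}


section Aux

open scoped commutatorElement

variable {G : Type u} [Group G] {S : Set G}


lemma wordLength_le_of_list {g : G} (l : List G) (hl : ∀ a ∈ l, a ∈ S ∨ a⁻¹ ∈ S)
    (hp : l.prod = g) : wordLength S g ≤ l.length :=
  Nat.sInf_le ⟨l, rfl, hl, hp⟩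

lemma exists_list_rep (hSgen : Subgroup.closure S = ⊤) (g : G) :
    ∃ l : List G, (∀ a ∈ l, a ∈ S ∨ a⁻¹ ∈ S) ∧ l.prod = g ∧ l.length = wordLength S g := by
  have hg : g ∈ Subgroup.closure S := hSgen ▸ Subgroup.mem_top g
  have hne : ∃ l : List G, (∀ a ∈ l, a ∈ S ∨ a⁻¹ ∈ S) ∧ l.prod = g := by
    induction hg using Subgroup.closure_induction with
    | mem x hx => exact ⟨[x], by simp [hx], by simp⟩
    | one => exact ⟨[], by simp, by simp⟩
    | mul x y _ _ hx hy =>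
      obtain ⟨l1, h1, h1p⟩ := hx; obtain ⟨l2, h2, h2p⟩ := hy
      refine ⟨l1 ++ l2, ?_, by simp [h1p, h2p]⟩
      intro a ha
      rcases List.mem_append.1 ha with h | h
      · exact h1 a h
      · exact h2 a h
    | inv x _ hx =>
      obtain ⟨l, h1, h1p⟩ := hx
      refine ⟨(l.map fun a => a⁻¹).reverse, ?_, ?_⟩
      · intro a ha
        simp only [List.mem_reverse, List.mem_map] at ha
        obtain ⟨b, hb, rfl⟩ := ha
        rcases h1 b hb with h | h
        · exact Or.inr (by simpa using h)
        · exact Or.inl h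
      · rw [← List.prod_inv_reverse, h1p]
  have hmem : wordLength S g ∈
      {m | ∃ l : List G, l.length = m ∧ (∀ a ∈ l, a ∈ S ∨ a⁻¹ ∈ S) ∧ l.prod = g} := by
    apply Nat.sInf_mem
    obtain ⟨l, h1, h2⟩ := hne
    exact ⟨l.length, l, rfl, h1, h2⟩
  obtain ⟨l, hlen, hmem', hprod⟩ := hmem
  exact ⟨l, hmem', hprod, hlen⟩



variable {G : Type u} [Group G]

/-- The two-element family for the free product. -/
abbrev Mfam (G : Type u) [Group G] : Bool → Type u :=
  fun b => cond b G (ULift (Multiplicative ℤ))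

instance : ∀ b, Group (Mfam G b)
  | true => inferInstanceAs (Group G)
  | false => inferInstanceAs (Group (ULift (Multiplicative ℤ)))

def ofT : G →* Monoid.CoprodI (Mfam G) :=
  (Monoid.CoprodI.of : Mfam G true →* Monoid.CoprodI (Mfam G))

def ofF : Multiplicative ℤ →* Monoid.CoprodI (Mfam G) :=
  ((Monoid.CoprodI.of : Mfam G false →* Monoid.CoprodI (Mfam G)) :
      ULift (Multiplicative ℤ) →* Monoid.CoprodI (Mfam G)).comp
    (MulEquiv.ulift (α := Multiplicative ℤ)).symm.toMonoidHom

def fwd : FPZ G →* Monoid.CoprodI (Mfam G) :=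
  Monoid.Coprod.lift ofT ofF

def bwdF : ∀ b, Mfam G b →* FPZ G
  | true => (Monoid.Coprod.inl : G →* FPZ G)
  | false => ((Monoid.Coprod.inr : Multiplicative ℤ →* FPZ G).comp
      (MulEquiv.ulift (α := Multiplicative ℤ)).toMonoidHom : ULift (Multiplicative ℤ) →* FPZ G)

def bwd : Monoid.CoprodI (Mfam G) →* FPZ G := Monoid.CoprodI.lift bwdF

lemma fwd_inl (g : G) : fwd (Monoid.Coprod.inl g) = ofT g := by
  simp [fwd]

lemma fwd_xpow (z : ℤ) : fwd (xpow G z) = ofF (Multiplicative.ofAdd z) := by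
  simp [fwd, xpow]

/-- An alternating nonempty word has nontrivial product in the free product. -/
lemma alt_prod_ne_one (L : List (Σ b, Mfam G b)) (hne : L ≠ [])
    (h1 : ∀ l ∈ L, Sigma.snd l ≠ 1)
    (hc : L.Chain' fun l l' => Sigma.fst l ≠ Sigma.fst l') :
    (L.map fun l => Monoid.CoprodI.of l.snd).prod ≠ 1 := by
  set W : Monoid.CoprodI.Word (Mfam G) := ⟨L, h1, hc⟩ with hW
  have hprod : (L.map fun l => Monoid.CoprodI.of l.snd).prod = W.prod := rfl
  rw [hprod]
  intro h
  have hinj : Function.Injective (Monoid.CoprodI.Word.prod (M := Mfam G)) := by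
    intro a b hab
    exact (Monoid.CoprodI.Word.equiv (M := Mfam G)).symm.injective hab
  have hWe : W = Monoid.CoprodI.Word.empty := by
    apply hinj
    rw [h]
    exact (Monoid.CoprodI.Word.prod_empty).symm
  apply hne
  have h2 : W.toList = ([] : List (Σ b, Mfam G b)) := by rw [hWe]; rfl
  simpa [hW] using h2

lemma bwd_ofT (g : G) : bwd (ofT g) = Monoid.Coprod.inl g := by
  rw [ofT, bwd]
  exact Monoid.CoprodI.lift_of (M := Mfam G) bwdF (i := true) g

lemma bwd_ofF (z : Multiplicative ℤ) : bwd (ofF z) = (Monoid.Coprod.inr z : FPZ G) := by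
  rw [ofF, MonoidHom.comp_apply, bwd]
  refine Eq.trans (Monoid.CoprodI.lift_of (M := Mfam G) bwdF (i := false)
    ((MulEquiv.ulift (α := Multiplicative ℤ)).symm.toMonoidHom z)) ?_
  show (Monoid.Coprod.inr : Multiplicative ℤ →* FPZ G)
    ((MulEquiv.ulift (α := Multiplicative ℤ) : ULift.{0} (Multiplicative ℤ) ≃* Multiplicative ℤ)
      ((MulEquiv.ulift (α := Multiplicative ℤ) :
        ULift.{0} (Multiplicative ℤ) ≃* Multiplicative ℤ).symm z)) = _
  rw [MulEquiv.apply_symm_apply]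

lemma bwd_fwd (w : FPZ G) : bwd (fwd w) = w := by
  have h : (bwd.comp (fwd (G := G))) = MonoidHom.id _ := by
    apply Monoid.Coprod.hom_ext
    · refine MonoidHom.ext fun g => ?_
      show bwd (fwd (Monoid.Coprod.inl g)) = Monoid.Coprod.inl g
      rw [fwd_inl, bwd_ofT]
    · refine MonoidHom.ext fun g => ?_
      show bwd (fwd (Monoid.Coprod.inr g)) = Monoid.Coprod.inr g
      have hg : (Monoid.Coprod.inr g : FPZ G) = xpow G (Multiplicative.toAdd g) := by
        simp [xpow]
      rw [hg, fwd_xpow, bwd_ofF]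
      simp [xpow]
  calc bwd (fwd w) = (bwd.comp (fwd (G := G))) w := rfl
    _ = w := by rw [h]; rfl

lemma fwd_injective : Function.Injective (fwd (G := G)) :=
  Function.LeftInverse.injective bwd_fwd

lemma xpow_add (a b : ℤ) : xpow G a * xpow G b = xpow G (a + b) := by
  simp [xpow, ← map_mul]

lemma xpow_zero : xpow G 0 = 1 := by simp [xpow]

lemma xpow_neg (a : ℤ) : (xpow G a)⁻¹ = xpow G (-a) := by
  rw [inv_eq_iff_mul_eq_one, xpow_add]; simp [xpow_zero]

/-- Representation of a "mid word" `γ₀ x^{e₀} γ₁ x^{e₁} ⋯ γₖ`. -/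
abbrev MidRep (G : Type u) := List (G × ℤ) × G

def midProd : MidRep G → FPZ G := fun m =>
  (m.1.map fun p => Monoid.Coprod.inl p.1 * xpow G p.2).prod * Monoid.Coprod.inl m.2

def invMidAux : List (G × ℤ) → G → MidRep G
  | [], γ => ([], γ⁻¹)
  | (γ0, e0) :: L, γL =>
    let r := invMidAux L γL
    (r.1 ++ [(r.2, -e0)], γ0⁻¹)

def invMid (m : MidRep G) : MidRep G := invMidAux m.1 m.2

def catMid (m : MidRep G) (j : ℤ) (m' : MidRep G) : MidRep G :=
  (m.1 ++ (m.2, j) :: m'.1, m'.2)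

lemma midProd_cons (p : G × ℤ) (L : List (G × ℤ)) (γ : G) :
    midProd ((p :: L, γ) : MidRep G) = Monoid.Coprod.inl p.1 * xpow G p.2 * midProd (L, γ) := by
  simp [midProd, mul_assoc]

lemma midProd_cat (m m' : MidRep G) (j : ℤ) :
    midProd (catMid m j m') = midProd m * xpow G j * midProd m' := by
  obtain ⟨L, γ⟩ := m; obtain ⟨L', γ'⟩ := m'
  simp [catMid, midProd, mul_assoc]

lemma midProd_inv (m : MidRep G) : midProd (invMid m) = (midProd m)⁻¹ := by
  obtain ⟨L, γ⟩ := m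
  induction L generalizing γ with
  | nil => simp [invMid, invMidAux, midProd]
  | cons p L ih =>
    obtain ⟨γ0, e0⟩ := p
    have : invMid ((γ0, e0) :: L, γ) =
        catMid (invMid (L, γ)) (-e0) (([], γ0⁻¹) : MidRep G) := by
      simp [invMid, invMidAux, catMid, midProd]
    rw [this, midProd_cat, ih, midProd_cons]
    simp [midProd, mul_assoc, xpow_neg]

def OKmid (m : MidRep G) : Prop := (∀ p ∈ m.1, p.1 ≠ 1 ∧ p.2 ≠ 0) ∧ m.2 ≠ 1

lemma OKmid_cat {m m' : MidRep G} {j : ℤ} (h : OKmid m) (h' : OKmid m') (hj : j ≠ 0) :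
    OKmid (catMid m j m') := by
  obtain ⟨h1, h2⟩ := h; obtain ⟨h1', h2'⟩ := h'
  refine ⟨?_, h2'⟩
  intro p hp
  rcases List.mem_append.1 hp with hp | hp
  · exact h1 p hp
  · rcases List.mem_cons.1 hp with rfl | hp
    · exact ⟨h2, hj⟩
    · exact h1' p hp

lemma OKmid_inv_aux (L : List (G × ℤ)) : ∀ γ : G, OKmid (L, γ) → OKmid (invMid (L, γ)) := by
  induction L with
  | nil =>
    intro γ h
    exact ⟨by simp [invMid, invMidAux], by simpa [invMid, invMidAux] using h.2⟩
  | cons p L ih =>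
    intro γ h
    obtain ⟨γ0, e0⟩ := p
    obtain ⟨h1, h2⟩ := h
    have hok : OKmid (invMid ((L, γ) : MidRep G)) :=
      ih γ ⟨fun q hq => h1 q (List.mem_cons_of_mem _ hq), h2⟩
    constructor
    · intro q hq
      rcases List.mem_append.1 hq with hq | hq
      · exact hok.1 q hq
      · rcases List.mem_cons.1 hq with rfl | hq
        · refine ⟨hok.2, ?_⟩
          simpa using (h1 (γ0, e0) List.mem_cons_self).2
        · simp at hq
    · simpa [invMid, invMidAux] using (h1 (γ0, e0) List.mem_cons_self).1

lemma OKmid_inv {m : MidRep G} (h : OKmid m) : OKmid (invMid m) :=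
  OKmid_inv_aux m.1 m.2 h

/-- Letter `x^e` in the `CoprodI` picture. -/
def xLetter (e : ℤ) : (Σ b, Mfam G b) := ⟨false, (⟨Multiplicative.ofAdd e⟩ : ULift (Multiplicative ℤ))⟩

def gLetter (g : G) : (Σ b, Mfam G b) := ⟨true, g⟩

def lettersMid (m : MidRep G) : List (Σ b, Mfam G b) :=
  (m.1.flatMap fun p => [gLetter p.1, xLetter p.2]) ++ [gLetter m.2]

def elt (s : ℤ) (m : MidRep G) (t : ℤ) : FPZ G := xpow G s * midProd m * xpow G (-t)

lemma fwd_midProd (m : MidRep G) :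
    fwd (midProd m) = ((lettersMid m).map fun l => Monoid.CoprodI.of l.snd).prod := by
  obtain ⟨L, γ⟩ := m
  induction L with
  | nil =>
    simp [midProd, lettersMid, gLetter, fwd_inl]
    rfl
  | cons p L ih =>
    rw [midProd_cons, map_mul, map_mul, fwd_inl, fwd_xpow, ih]
    simp only [lettersMid, List.flatMap_cons, List.map_cons, List.map_append, List.prod_cons,
      List.append_assoc, List.cons_append, List.nil_append, List.map_nil]
    rw [← mul_assoc]
    rfl

lemma fwd_elt (s : ℤ) (m : MidRep G) (t : ℤ) :
    fwd (elt s m t) =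
      ((xLetter s :: (lettersMid m ++ [xLetter (G := G) (-t)])).map
        fun l => Monoid.CoprodI.of l.snd).prod := by
  rw [elt, map_mul, map_mul, fwd_xpow, fwd_xpow, fwd_midProd]
  simp only [List.map_cons, List.map_append, List.prod_cons, List.prod_append,
    List.map_nil, List.prod_nil, mul_one]
  rw [mul_assoc]
  rfl

lemma chain_letters (m : MidRep G) (a b : ℤ) :
    (xLetter a :: (lettersMid m ++ [xLetter (G := G) b])).Chain'
      fun l l' => Sigma.fst l ≠ Sigma.fst l' := by
  obtain ⟨L, γ⟩ := m
  induction L generalizing a with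
  | nil =>
    simp [lettersMid, gLetter, xLetter, List.Chain', List.isChain_cons_cons]
  | cons p L ih =>
    have h2 := ih p.2
    simp only [lettersMid, List.flatMap_cons, List.cons_append, List.append_assoc] at h2 ⊢
    refine List.IsChain.cons_cons ?_ (List.IsChain.cons_cons ?_ ?_) <;>
      simp_all [xLetter, gLetter, List.cons_append, List.Chain']

lemma ne_one_letters (m : MidRep G) (hm : OKmid m) (a b : ℤ) (ha : a ≠ 0) (hb : b ≠ 0) :
    ∀ l ∈ xLetter a :: (lettersMid m ++ [xLetter (G := G) b]), Sigma.snd l ≠ 1 := by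
  have hx : ∀ e : ℤ, e ≠ 0 → Sigma.snd (xLetter (G := G) e) ≠ 1 := by
    intro e he h
    apply he
    have : (⟨Multiplicative.ofAdd e⟩ : ULift (Multiplicative ℤ)) = ⟨1⟩ := h
    simpa using congrArg ULift.down this
  intro l hl
  rcases List.mem_cons.1 hl with rfl | hl
  · exact hx a ha
  rcases List.mem_append.1 hl with hl | hl
  · obtain ⟨L, γ⟩ := m
    simp only [lettersMid] at hl
    rcases List.mem_append.1 hl with hl | hl
    · rw [List.mem_flatMap] at hl
      obtain ⟨p, hp, hl⟩ := hl
      rcases List.mem_cons.1 hl with rfl | hl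
      · exact (hm.1 p hp).1
      · rcases List.mem_cons.1 hl with rfl | hl
        · exact hx p.2 (hm.1 p hp).2
        · simp at hl
    · rcases List.mem_cons.1 hl with rfl | hl
      · exact hm.2
      · simp at hl
  · rcases List.mem_cons.1 hl with rfl | hl
    · exact hx b hb
    · simp at hl

lemma elt_ne_one (s : ℤ) (m : MidRep G) (t : ℤ) (hs : s ≠ 0) (ht : t ≠ 0) (hm : OKmid m) :
    elt s m t ≠ 1 := by
  intro h
  have h1 : fwd (elt s m t) = 1 := by rw [h, map_one]
  rw [fwd_elt] at h1
  exact alt_prod_ne_one _ (by simp) (ne_one_letters m hm s (-t) hs (by simpa using ht))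
    (chain_letters m s (-t)) h1
/-- `(s, t)` exponent bookkeeping. -/
def stExp : ℕ → ℤ × ℤ
  | 0 => (2, 1)
  | d + 1 => ((stExp d).2 + 2 * (stExp d).1 + 1, (stExp d).1)

def sE (d : ℕ) : ℤ := (stExp d).1
def tE (d : ℕ) : ℤ := (stExp d).2
def cE (d : ℕ) : ℤ := sE d + tE d + 1

lemma sE_succ (d : ℕ) : sE (d + 1) = sE d + cE d := by
  simp [sE, tE, cE, stExp]; ring
lemma tE_succ (d : ℕ) : tE (d + 1) = sE d := rfl

lemma stE_pos (d : ℕ) : 1 ≤ sE d ∧ 1 ≤ tE d := by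
  induction d with
  | zero => exact ⟨by norm_num [sE, stExp], by norm_num [tE, stExp]⟩
  | succ d ih =>
    refine ⟨?_, ?_⟩
    · rw [sE_succ]; have := ih.1; have := ih.2; simp [cE] at *; omega
    · rw [tE_succ]; exact ih.1

lemma stE_growth (d : ℕ) : sE d + tE d ≤ 3 * 4 ^ d := by
  induction d with
  | zero => norm_num [sE, tE, stExp]
  | succ d ih =>
    rw [sE_succ, tE_succ]
    have h1 := (stE_pos d).1
    have h2 := (stE_pos d).2
    simp only [cE] at *
    have : (4:ℤ) ^ (d+1) = 4 * 4 ^ d := by ring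
    rw [this]
    omega

lemma cE_le (d : ℕ) : cE d ≤ 4 ^ (d + 1) := by
  have := stE_growth d
  have : (4:ℤ) ^ (d+1) = 4 * 4^d := by ring
  simp only [cE] at *
  have h4 : (1:ℤ) ≤ 4 ^ d := one_le_pow₀ (by norm_num)
  omega

variable (f : ℕ → G)

def midT : ℕ → ℕ → MidRep G
  | 0, o => ([(f o, -1)], (f o)⁻¹)
  | d + 1, o =>
      catMid
        (catMid
          (catMid (midT d (2 * o)) (-(2 * tE d + 1)) (midT d (2 * o + 1)))
          (cE d) (invMid (midT d (2 * o))))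
        (-(2 * sE d + 1)) (invMid (midT d (2 * o + 1)))

def treeT (d o : ℕ) : FPZ G := elt (sE d) (midT f d o) (tE d)

lemma xpow_eq_zpow (z : ℤ) : xpow G z = (xpow G 1) ^ z := by
  have h : ∀ n : ℕ, xpow G (n : ℤ) = (xpow G 1) ^ (n : ℤ) := by
    intro n
    induction n with
    | zero => simp [xpow_zero]
    | succ n ih =>
      push_cast
      rw [← xpow_add, ih, zpow_add, zpow_one]
  rcases le_or_gt 0 z with hz | hz
  · obtain ⟨n, rfl⟩ := Int.eq_ofNat_of_zero_le hz
    exact h n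
  · obtain ⟨n, rfl⟩ : ∃ n : ℕ, z = -(n : ℤ) := ⟨z.natAbs, by omega⟩
    rw [← xpow_neg, h n, zpow_neg]

lemma treeT_succ (d o : ℕ) :
    treeT f (d + 1) o =
      ⁅xpow G (cE d) * treeT f d (2 * o) * xpow G (-(cE d)), treeT f d (2 * o + 1)⁆ := by
  rw [commutatorElement_def]
  simp only [treeT, elt, midT, midProd_cat, midProd_inv, sE_succ, tE_succ]
  set X := xpow G 1 with hX
  have hXz : ∀ z, xpow G z = X ^ z := fun z => by rw [hX]; exact xpow_eq_zpow z
  simp only [hXz, cE]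
  group

-- ===== further tree lemmas =====

lemma wordEval_inl (g h : G) : wordEval g (Monoid.Coprod.inl h) = h :=
  Monoid.Coprod.lift_apply_inl _ _ _

lemma wordEval_xpow (g : G) (z : ℤ) : wordEval g (xpow G z) = g ^ z := by
  rw [wordEval, xpow, Monoid.Coprod.lift_apply_inr]
  simp

-- nontriviality
lemma OKmid_midT (hf1 : ∀ i, f i ≠ 1) (d o : ℕ) : OKmid (midT f d o) := by
  induction d generalizing o with
  | zero =>
    refine ⟨?_, by simp only [midT]; simpa using hf1 o⟩
    intro p hp
    simp only [midT, List.mem_singleton] at hp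
    subst hp
    exact ⟨hf1 o, by norm_num⟩
  | succ d ih =>
    have h1 := (stE_pos d).1
    have h2 := (stE_pos d).2
    refine OKmid_cat (OKmid_cat (OKmid_cat (ih _) (ih _) (by omega)) (OKmid_inv (ih _)) ?_)
      (OKmid_inv (ih _)) (by omega)
    simp only [cE]; omega

lemma treeT_ne_one (hf1 : ∀ i, f i ≠ 1) (d o : ℕ) : treeT f d o ≠ 1 := by
  have h1 := (stE_pos d).1
  have h2 := (stE_pos d).2
  exact elt_ne_one _ _ _ (by omega) (by omega) (OKmid_midT f hf1 d o)

-- leaf identity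
lemma treeT_zero (o : ℕ) :
    treeT f 0 o = xpow G 1 * ⁅xpow G 1, Monoid.Coprod.inl (f o)⁆ * xpow G (-1) := by
  rw [commutatorElement_def]
  simp only [treeT, elt, midT, midProd, List.map_cons, List.map_nil, List.prod_cons,
    List.prod_nil]
  set X := xpow G 1 with hX
  have hXz : ∀ z, xpow G z = X ^ z := fun z => by rw [hX]; exact xpow_eq_zpow z
  simp only [hXz, sE, tE, stExp, map_inv]
  group
  rw [zpow_two]

-- evaluation vanishing
lemma treeT_eval (g : G) (d : ℕ) : ∀ o : ℕ,
    (∃ i, 2 ^ d * o ≤ i ∧ i < 2 ^ d * (o + 1) ∧ ⁅g, f i⁆ = 1) →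
    wordEval g (treeT f d o) = 1 := by
  induction d with
  | zero =>
    intro o ⟨i, hi1, hi2, hi⟩
    have : i = o := by omega
    subst this
    rw [treeT_zero, map_mul, map_mul, map_commutatorElement, wordEval_xpow, wordEval_xpow,
      wordEval_inl]
    simp only [zpow_one] at *
    rw [hi]
    simp
  | succ d ih =>
    intro o ⟨i, hi1, hi2, hi⟩
    rw [treeT_succ, map_commutatorElement]
    have e1 : 2 ^ d * (2 * o) = 2 ^ (d+1) * o := by ring
    have e2 : 2 ^ d * (2 * o + 1) = 2 ^ (d+1) * o + 2 ^ d := by ring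
    have e3 : 2 ^ d * (2 * o + 1 + 1) = 2 ^ (d+1) * o + 2 ^ d + 2 ^ d := by ring
    have e4 : 2 ^ (d+1) * (o + 1) = 2 ^ (d+1) * o + 2 ^ d + 2 ^ d := by ring
    have hsplit : (2 ^ d * (2 * o) ≤ i ∧ i < 2 ^ d * (2 * o + 1)) ∨
        (2 ^ d * (2 * o + 1) ≤ i ∧ i < 2 ^ d * (2 * o + 1 + 1)) := by
      rw [e1, e2, e3]
      rw [e4] at hi2
      omega
    rcases hsplit with ⟨ha, hb⟩ | ⟨ha, hb⟩
    · have h0 : wordEval g (treeT f d (2 * o)) = 1 := ih _ ⟨i, ha, hb, hi⟩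
      rw [map_mul, map_mul, h0, wordEval_xpow, wordEval_xpow, mul_one]
      rw [← zpow_add]
      simp
    · have h0 : wordEval g (treeT f d (2 * o + 1)) = 1 := ih _ ⟨i, ha, hb, hi⟩
      rw [h0]
      simp

-- representation by generators
def RepBy {G : Type u} [Group G] (S : Set G) (w : FPZ G) (n : ℕ) : Prop :=
  ∃ l : List (FPZ G), (∀ a ∈ l, a ∈ genSet S ∨ a⁻¹ ∈ genSet S) ∧ l.prod = w ∧ l.length ≤ n

variable {S : Set G}

lemma RepBy.mul {w w' : FPZ G} {n n' : ℕ} (h : RepBy S w n) (h' : RepBy S w' n') :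
    RepBy S (w * w') (n + n') := by
  obtain ⟨l, hl, hp, hn⟩ := h
  obtain ⟨l', hl', hp', hn'⟩ := h'
  refine ⟨l ++ l', ?_, by simp [hp, hp'], by simp; omega⟩
  intro a ha
  rcases List.mem_append.1 ha with ha | ha
  · exact hl a ha
  · exact hl' a ha

lemma RepBy.inv {w : FPZ G} {n : ℕ} (h : RepBy S w n) : RepBy S w⁻¹ n := by
  obtain ⟨l, hl, hp, hn⟩ := h
  refine ⟨(l.map fun a => a⁻¹).reverse, ?_, ?_, by simpa using hn⟩
  · intro a ha
    simp only [List.mem_reverse, List.mem_map] at ha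
    obtain ⟨b, hb, rfl⟩ := ha
    rcases hl b hb with hb' | hb'
    · exact Or.inr (by simpa using hb')
    · exact Or.inl hb'
  · rw [← List.prod_inv_reverse, hp]

lemma RepBy.mono {w : FPZ G} {n n' : ℕ} (h : RepBy S w n) (hle : n ≤ n') : RepBy S w n' := by
  obtain ⟨l, hl, hp, hn⟩ := h
  exact ⟨l, hl, hp, hn.trans hle⟩

lemma rep_xpow (z : ℤ) : RepBy S (xpow G z) z.natAbs := by
  rcases le_or_gt 0 z with hz | hz
  · refine ⟨List.replicate z.natAbs (xpow G 1), ?_, ?_, by simp⟩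
    · intro a ha
      rw [List.eq_of_mem_replicate ha]
      exact Or.inl (Or.inr rfl)
    · rw [List.prod_replicate, ← zpow_natCast, ← xpow_eq_zpow]
      congr 1
      omega
  · refine ⟨List.replicate z.natAbs (xpow G (-1)), ?_, ?_, by simp⟩
    · intro a ha
      rw [List.eq_of_mem_replicate ha]
      refine Or.inr ?_
      rw [xpow_neg]
      exact Or.inr (by norm_num)
    · rw [List.prod_replicate, ← zpow_natCast, xpow_eq_zpow (-1), ← zpow_mul, ← xpow_eq_zpow]
      congr 1
      omega

lemma rep_inl {g : G} {n : ℕ} (lg : List G) (hlg : ∀ a ∈ lg, a ∈ S ∨ a⁻¹ ∈ S)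
    (hp : lg.prod = g) (hn : lg.length ≤ n) : RepBy S (Monoid.Coprod.inl g) n := by
  refine ⟨lg.map (Monoid.Coprod.inl : G →* FPZ G), ?_, ?_, by simpa using hn⟩
  · intro a ha
    simp only [List.mem_map] at ha
    obtain ⟨b, hb, rfl⟩ := ha
    rcases hlg b hb with hb' | hb'
    · exact Or.inl (Or.inl ⟨b, hb', rfl⟩)
    · refine Or.inr (Or.inl ⟨b⁻¹, hb', ?_⟩)
      rw [← map_inv]
  · rw [← hp, ← map_list_prod]

lemma natAbs_cE_le (d : ℕ) : (cE d).natAbs ≤ 4 ^ (d + 1) := by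
  have h1 : (0:ℤ) ≤ cE d := by
    have := (stE_pos d).1; have := (stE_pos d).2; simp only [cE]; omega
  have h2 := cE_le d
  have h3 : ((cE d).natAbs : ℤ) = cE d := Int.natAbs_of_nonneg h1
  have : ((cE d).natAbs : ℤ) ≤ ((4 ^ (d+1) : ℕ) : ℤ) := by rw [h3]; push_cast; exact h2
  exact_mod_cast this

lemma rep_treeT (m : ℕ)
    (hf : ∀ i, ∃ lg : List G, (∀ a ∈ lg, a ∈ S ∨ a⁻¹ ∈ S) ∧ lg.prod = f i ∧ lg.length ≤ m)
    (d : ℕ) : ∀ o : ℕ, RepBy S (treeT f d o) ((2 * m + 20) * 16 ^ d) := by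
  induction d with
  | zero =>
    intro o
    obtain ⟨lg, h1, h2, h3⟩ := hf o
    have hT : treeT f 0 o = xpow G 2 * (Monoid.Coprod.inl (f o) * xpow G (-1) *
        Monoid.Coprod.inl (f o)⁻¹) * xpow G (-1) := by
      simp [treeT, elt, midT, midProd, mul_assoc, sE, tE, stExp]
    rw [hT]
    have r1 : RepBy S (xpow G 2) 2 := rep_xpow 2
    have r2 : RepBy S (Monoid.Coprod.inl (f o) : FPZ G) m := rep_inl lg h1 h2 h3
    have r3 : RepBy S (xpow G (-1)) 1 := rep_xpow (-1)
    have r4 : RepBy S (Monoid.Coprod.inl (f o)⁻¹ : FPZ G) m := by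
      have := r2.inv
      rwa [← map_inv] at this
    refine ((r1.mul ((r2.mul r3).mul r4)).mul r3).mono ?_
    simp
    omega
  | succ d ih =>
    intro o
    rw [treeT_succ, commutatorElement_def]
    set Λ := (2 * m + 20) * 16 ^ d with hΛ
    set cn := (cE d).natAbs with hcn
    have rc : RepBy S (xpow G (cE d)) cn := rep_xpow _
    have rc' : RepBy S (xpow G (-(cE d))) cn := by
      have := (rep_xpow (S := S) (G := G) (cE d)).inv
      rwa [xpow_neg] at this
    have rA : RepBy S (xpow G (cE d) * treeT f d (2 * o) * xpow G (-(cE d))) (cn + Λ + cn) :=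
      (rc.mul (ih (2 * o))).mul rc'
    have rB : RepBy S (treeT f d (2 * o + 1)) Λ := ih (2 * o + 1)
    have rAll := ((rA.mul rB).mul rA.inv).mul rB.inv
    refine rAll.mono ?_
    have hcnle : cn ≤ Λ := by
      calc cn ≤ 4 ^ (d + 1) := natAbs_cE_le d
        _ ≤ 16 ^ (d + 1) := Nat.pow_le_pow_left (by norm_num) _
        _ = 16 * 16 ^ d := by ring
        _ ≤ (2 * m + 20) * 16 ^ d := Nat.mul_le_mul_right _ (by omega)
    have h16 : (2 * m + 20) * 16 ^ (d + 1) = 16 * Λ := by rw [hΛ]; ring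
    omega

lemma ball_finite_card (hSfin : S.Finite) (hSgen : Subgroup.closure S = ⊤) (m : ℕ) :
    {g : G | wordLength S g ≤ m}.Finite ∧
      {g : G | wordLength S g ≤ m}.ncard ≤ ((S ∪ S⁻¹).ncard + 1) ^ m := by
  classical
  set A : Set G := S ∪ S⁻¹ with hA
  have hAfin : A.Finite := hSfin.union hSfin.inv
  set Bs : Set G := {g : G | wordLength S g ≤ m} with hBs
  -- choice of minimal lists
  have hrep : ∀ g : G, ∃ l : List G, (∀ a ∈ l, a ∈ S ∨ a⁻¹ ∈ S) ∧ l.prod = g ∧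
      l.length = wordLength S g := fun g => exists_list_rep hSgen g
  let lof : G → List G := fun g => (hrep g).choose
  have hlof : ∀ g : G, (∀ a ∈ lof g, a ∈ S ∨ a⁻¹ ∈ S) ∧ (lof g).prod = g ∧
      (lof g).length = wordLength S g := fun g => (hrep g).choose_spec
  have hmemA : ∀ g, ∀ a ∈ lof g, a ∈ A := by
    intro g a ha
    rcases (hlof g).1 a ha with h | h
    · exact Or.inl h
    · exact Or.inr (Set.mem_inv.2 h)
  letI : Fintype A := hAfin.fintype
  let F : Bs → (Fin m → Option A) := fun g i =>
    if h : (i : ℕ) < (lof g).length then some ⟨(lof g).get ⟨i, h⟩, hmemA _ _ (List.get_mem _ _)⟩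
    else none
  have hF : Function.Injective F := by
    intro g g' hgg'
    have hlen : (lof (g : G)).length ≤ m := by
      rw [(hlof g).2.2]; exact g.2
    have hlen' : (lof (g' : G)).length ≤ m := by
      rw [(hlof g').2.2]; exact g'.2
    have hlists : lof (g : G) = lof (g' : G) := by
      apply List.ext_getElem?
      intro i
      by_cases him : i < m
      · have := congrFun hgg' ⟨i, him⟩
        simp only [F] at this
        by_cases h1 : i < (lof (g : G)).length
        · rw [dif_pos h1] at this
          by_cases h2 : i < (lof (g' : G)).length
          · rw [dif_pos h2] at this
            have hval : (lof (g : G)).get ⟨i, h1⟩ = (lof (g' : G)).get ⟨i, h2⟩ := by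
              have := congrArg (fun o => Option.map (Subtype.val) o) this
              simpa using this
            rw [List.getElem?_eq_getElem h1, List.getElem?_eq_getElem h2]; simpa using hval
          · rw [dif_neg h2] at this
            simp at this
        · rw [dif_neg h1] at this
          by_cases h2 : i < (lof (g' : G)).length
          · rw [dif_pos h2] at this
            simp at this
          · rw [List.getElem?_eq_none (by omega), List.getElem?_eq_none (by omega)]
      · rw [List.getElem?_eq_none (by omega), List.getElem?_eq_none (by omega)]
    have : (g : G) = (g' : G) := by
      rw [← (hlof g).2.1, ← (hlof g').2.1, hlists]
    exact Subtype.ext this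
  have hfinB : Finite Bs := Finite.of_injective F hF
  have hBfin : Bs.Finite := Set.finite_coe_iff.1 hfinB
  refine ⟨hBfin, ?_⟩
  have hcard : Nat.card Bs ≤ Nat.card (Fin m → Option A) :=
    Nat.card_le_card_of_injective F hF
  have hAcard : A.ncard = Fintype.card A := by
    rw [Set.ncard_eq_toFinset_card', Set.toFinset_card]
  have h1 : Nat.card (Fin m → Option A) = (A.ncard + 1) ^ m := by
    rw [Nat.card_eq_fintype_card, Fintype.card_fun, Fintype.card_option, Fintype.card_fin, hAcard]
  rw [← Nat.card_coe_set_eq]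
  exact hcard.trans_eq h1

end Aux

theorem stmt0 (Γ : Type*) [Group Γ] (S : Set Γ) (hSfin : S.Finite)
    (hSgen : Subgroup.closure S = ⊤) :
    ∃ c : ℝ, 0 < c ∧ ∃ N : ℕ, ∀ n : ℕ, N ≤ n →
      ∃ w : FPZ Γ, w ≠ 1 ∧ wordLength (genSet S) w ≤ n ∧
        ∀ g : Γ, (wordLength S g : ℝ) < c * Real.log n → wordEval g w = 1 := by
  classical
  set K : ℕ := 2 * hSfin.toFinset.card + 2 with hKdef
  have hK2 : 2 ≤ K := by omega
  have hK1R : (1:ℝ) < K := by exact_mod_cast (by omega : 1 < K)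
  have hlogK : 0 < Real.log K := Real.log_pos hK1R
  refine ⟨(6 * Real.log K)⁻¹, by positivity, K ^ 80, ?_⟩
  intro n hn
  have hKpow : 1 ≤ K ^ 80 := Nat.one_le_pow _ _ (by omega)
  have hn1 : 1 ≤ n := le_trans hKpow hn
  set L := Nat.log K n with hLdef
  have hL80 : 80 ≤ L := by
    calc 80 = Nat.log K (K ^ 80) := (Nat.log_pow (by omega) 80).symm
      _ ≤ L := Nat.log_mono_right hn
  set m := L / 6 with hmdef
  -- translation of the real bound
  have hup : ∀ g : Γ, (wordLength S g : ℝ) < (6 * Real.log K)⁻¹ * Real.log n →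
      wordLength S g ≤ m := by
    intro g hg
    have hnK : (n : ℝ) < (K:ℝ) ^ (L + 1) := by
      exact_mod_cast Nat.lt_pow_succ_log_self (by omega : 1 < K) n
    have hlogn : Real.log n < ((L:ℝ) + 1) * Real.log K := by
      calc Real.log n < Real.log ((K:ℝ) ^ (L+1)) :=
            Real.log_lt_log (by exact_mod_cast hn1) hnK
        _ = ((L:ℝ) + 1) * Real.log K := by rw [Real.log_pow]; push_cast; ring
    have h1 : (6 * Real.log K)⁻¹ * Real.log n < ((L:ℝ) + 1) / 6 := by
      calc (6 * Real.log K)⁻¹ * Real.log n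
          < (6 * Real.log K)⁻¹ * (((L:ℝ) + 1) * Real.log K) :=
            mul_lt_mul_of_pos_left hlogn (by positivity)
        _ = ((L:ℝ) + 1) / 6 := by field_simp
    have h2 : ((L:ℝ) + 1) / 6 ≤ (m : ℝ) + 1 := by
      have hnat : L + 1 ≤ 6 * (m + 1) := by omega
      rw [div_le_iff₀ (by norm_num : (0:ℝ) < 6)]
      have : ((L:ℝ) + 1) ≤ 6 * ((m:ℝ) + 1) := by exact_mod_cast hnat
      linarith
    have hlt : (wordLength S g : ℝ) < (m : ℝ) + 1 := lt_of_lt_of_le (hg.trans h1) h2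
    have : wordLength S g < m + 1 := by exact_mod_cast hlt
    omega
  -- the ball
  obtain ⟨hBsfin, hBscard⟩ := ball_finite_card hSfin hSgen m
  set Bp : Set Γ := {g : Γ | wordLength S g ≤ m ∧ g ≠ 1} with hBpdef
  have hBpfin : Bp.Finite := hBsfin.subset (fun g hg => hg.1)
  have hBp_le : Bp.ncard ≤ K ^ m := by
    have h1 : Bp.ncard ≤ {g : Γ | wordLength S g ≤ m}.ncard :=
      Set.ncard_le_ncard (fun g hg => hg.1) hBsfin
    have hA : (S ∪ S⁻¹).ncard + 1 ≤ K := by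
      have h2 : (S ∪ S⁻¹).ncard ≤ S.ncard + (S⁻¹).ncard := Set.ncard_union_le _ _
      have h3 : (S⁻¹).ncard = S.ncard := by
        have himg : (fun a : Γ => a⁻¹) '' S = S⁻¹ := by
          ext x
          simp only [Set.mem_image, Set.mem_inv]
          constructor
          · rintro ⟨b, hb, rfl⟩; simpa using hb
          · intro hx; exact ⟨x⁻¹, hx, by simp⟩
        rw [← himg]
        exact Set.ncard_image_of_injective _ inv_injective
      have h4 : S.ncard = hSfin.toFinset.card := Set.ncard_eq_toFinset_card _ hSfin
      omega
    calc Bp.ncard ≤ ((S ∪ S⁻¹).ncard + 1) ^ m := h1.trans hBscard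
      _ ≤ K ^ m := Nat.pow_le_pow_left hA m
  set bl : List Γ := hBpfin.toFinset.toList with hbldef
  have hblmem : ∀ a ∈ bl, a ∈ Bp := fun a ha =>
    (Set.Finite.mem_toFinset hBpfin).1 (Finset.mem_toList.1 ha)
  have hbllen : bl.length = Bp.ncard := by
    rw [hbldef, Finset.length_toList, Set.ncard_eq_toFinset_card _ hBpfin]
  by_cases hbl : bl = []
  · -- the ball (minus 1) is empty: use w = x
    refine ⟨xpow Γ 1, ?_, ?_, ?_⟩
    · intro h
      have h' : (Monoid.Coprod.inr (Multiplicative.ofAdd (1:ℤ)) : FPZ Γ) =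
          Monoid.Coprod.inr (1 : Multiplicative ℤ) := by
        rw [show (Monoid.Coprod.inr (1 : Multiplicative ℤ) : FPZ Γ) = 1 from map_one _]
        exact h
      have h2 := Monoid.Coprod.inr_injective h'
      have h3 : (1:ℤ) = 0 := by simpa using congrArg Multiplicative.toAdd h2
      exact one_ne_zero h3
    · refine le_trans (wordLength_le_of_list [xpow Γ 1] ?_ (by simp)) (by simpa using hn1)
      intro a ha
      simp only [List.mem_singleton] at ha
      subst ha
      exact Or.inl (Or.inr rfl)
    · intro g hg
      have hgm := hup g hg
      have hg1 : g = 1 := by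
        by_contra hg1
        have hmem : g ∈ Bp := ⟨hgm, hg1⟩
        have : hBpfin.toFinset = ∅ := Finset.toList_eq_nil.1 hbl
        rw [← Set.Finite.mem_toFinset hBpfin, this] at hmem
        simp at hmem
      subst hg1
      rw [wordEval_xpow]
      simp
  · -- main case
    set γ0 : Γ := bl.head hbl with hγ0
    set f : ℕ → Γ := fun i => bl.getD i γ0 with hfdef
    have hfBp : ∀ i, f i ∈ Bp := by
      intro i
      by_cases h : i < bl.length
      · rw [hfdef]
        simp only
        rw [List.getD_eq_getElem _ _ h]
        exact hblmem _ (List.getElem_mem h)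
      · rw [hfdef]
        simp only
        rw [List.getD_eq_default _ _ (le_of_not_gt h)]
        exact hblmem _ (List.head_mem hbl)
    have hf1 : ∀ i, f i ≠ 1 := fun i => (hfBp i).2
    have hfm : ∀ i, ∃ lg : List Γ, (∀ a ∈ lg, a ∈ S ∨ a⁻¹ ∈ S) ∧ lg.prod = f i ∧
        lg.length ≤ m := by
      intro i
      obtain ⟨l, h1, h2, h3⟩ := exists_list_rep hSgen (f i)
      exact ⟨l, h1, h2, h3 ▸ (hfBp i).1⟩
    set D := Nat.log 2 bl.length + 1 with hDdef
    have hD : bl.length < 2 ^ D := Nat.lt_pow_succ_log_self one_lt_two _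
    refine ⟨treeT f D 0, treeT_ne_one f hf1 D 0, ?_, ?_⟩
    · -- length bound
      obtain ⟨lw, hw1, hw2, hw3⟩ := rep_treeT f m hfm D 0
      refine le_trans (le_trans (wordLength_le_of_list lw hw1 hw2) hw3) ?_
      have hlen1 : 1 ≤ bl.length := List.length_pos_iff.2 hbl
      have h2D : 2 ^ D ≤ 2 * bl.length := by
        have hh := Nat.pow_log_le_self 2 (by omega : bl.length ≠ 0)
        calc 2 ^ D = 2 * 2 ^ (Nat.log 2 bl.length) := by rw [hDdef, pow_succ]; ring
          _ ≤ 2 * bl.length := by omega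
      have h16 : 16 ^ D ≤ 16 * bl.length ^ 4 := by
        have h1 : (16:ℕ) ^ D = (2 ^ D) ^ 4 := by
          rw [← pow_mul]
          rw [show (16:ℕ) = 2 ^ 4 by norm_num, ← pow_mul]
          congr 1
          ring
        calc (16:ℕ) ^ D = (2 ^ D) ^ 4 := h1
          _ ≤ (2 * bl.length) ^ 4 := Nat.pow_le_pow_left h2D 4
          _ = 16 * bl.length ^ 4 := by ring
      have hlenK : bl.length ≤ K ^ m := by rw [hbllen]; exact hBp_le
      have h2m : 2 * m + 20 ≤ K ^ (m + 5) := by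
        have h1 : m < 2 ^ m := Nat.lt_two_pow_self
        have h2 : (2:ℕ) ^ (m + 5) = 32 * 2 ^ m := by ring
        have h3 : 2 * m + 20 ≤ 2 ^ (m + 5) := by omega
        exact h3.trans (Nat.pow_le_pow_left hK2 _)
      have h16K : (16:ℕ) ≤ K ^ 4 := by
        calc (16:ℕ) = 2 ^ 4 := by norm_num
          _ ≤ K ^ 4 := Nat.pow_le_pow_left hK2 4
      calc (2 * m + 20) * 16 ^ D
          ≤ K ^ (m + 5) * (16 * (K ^ m) ^ 4) := by
            refine Nat.mul_le_mul h2m (h16.trans ?_)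
            exact Nat.mul_le_mul_left 16 (Nat.pow_le_pow_left hlenK 4)
        _ ≤ K ^ (m + 5) * (K ^ 4 * (K ^ m) ^ 4) := by
            refine Nat.mul_le_mul_left _ (Nat.mul_le_mul_right _ h16K)
        _ = K ^ (5 * m + 9) := by
            rw [← pow_mul, ← pow_add, ← pow_add]
            congr 1
            ring
        _ ≤ K ^ L := Nat.pow_le_pow_right (by omega) (by omega)
        _ ≤ n := Nat.pow_log_le_self K (by omega)
    · -- evaluation
      intro g hg
      have hgm := hup g hg
      by_cases hg1 : g = 1
      · subst hg1
        refine treeT_eval f 1 D 0 ⟨0, by simp, ?_, by simp [commutatorElement_def]⟩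
        have : 0 < 2 ^ D := Nat.pow_pos (by norm_num)
        omega
      · have hgBp : g ∈ Bp := ⟨hgm, hg1⟩
        have hgbl : g ∈ bl := Finset.mem_toList.2 ((Set.Finite.mem_toFinset hBpfin).2 hgBp)
        obtain ⟨⟨i, hi⟩, hig⟩ := List.mem_iff_get.1 hgbl
        have hfi : f i = g := by
          rw [hfdef]
          simp only
          rw [List.getD_eq_getElem _ _ hi]
          rw [← hig]
          simp [List.get_eq_getElem]
        refine treeT_eval f g D 0 ⟨i, by simp, ?_, by rw [hfi]; simp [commutatorElement_def]⟩
        have : i < 2 ^ D := lt_trans hi hD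
        omega
end

section
/- With K, O_K, μ, d, Γ, S, s*, δ(s) and M as in the context: there exists c̃ > 0 (depending only on S, d and K) such that for every rational prime p which splits completely in K and every prime ideal P of O_K lying above p which divides no δ(s) (s ∈ S), the restriction of the reduction homomorphism π_P : Γ → SL_d(𝔽_p) to the ball B_S(c̃·log p) = {g ∈ Γ : |g|_S ≤ c̃·log p} is injective. -/
set_option synthInstance.maxHeartbeats 1000000

open NumberField

/-- The house `μ(x)` of `x ∈ K`: the maximum of `|σ(x)|` over all field embeddings
`σ : K ↪ ℂ`. -/
noncomputable def houseK (K : Type*) [Field K] [NumberField K] (x : K) : ℝ :=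
  ⨆ σ : K →+* ℂ, ‖σ x‖

/-- A rational prime `p` splits completely in the number field `K`. -/
def SplitsCompletely (K : Type*) [Field K] [NumberField K] (p : ℕ) : Prop :=
  p.Prime ∧ ∀ P : Ideal (𝓞 K), P.IsPrime → P ≠ ⊥ → (p : 𝓞 K) ∈ P →
    Ideal.ramificationIdx' (Ideal.span {(p : ℤ)}) P = 1 ∧
    Ideal.inertiaDeg' (Ideal.span {(p : ℤ)}) P = 1

/-- `π` is the entrywise reduction modulo `P` on `Γ`: whenever `δ ∉ P` clears the
denominators of `g ∈ Γ`, i.e. `δ·g = A` entrywise with `A` integral, then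
`δ·π(g) = A mod P` entrywise. -/
def IsReductionHom {d : ℕ} {K : Type*} [Field K] [NumberField K]
    (Γ : Subgroup (Matrix.SpecialLinearGroup (Fin d) K)) (P : Ideal (𝓞 K))
    (π : Γ →* Matrix.SpecialLinearGroup (Fin d) ((𝓞 K) ⧸ P)) : Prop :=
  ∀ (g : Γ) (A : Matrix (Fin d) (Fin d) (𝓞 K)) (δ : 𝓞 K), δ ∉ P →
    (∀ i j : Fin d, algebraMap (𝓞 K) K δ *
        ((g : Matrix.SpecialLinearGroup (Fin d) K) : Matrix (Fin d) (Fin d) K) i j =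
        algebraMap (𝓞 K) K (A i j)) →
    ∀ i j : Fin d,
      Ideal.Quotient.mk P δ * ((π g : Matrix (Fin d) (Fin d) ((𝓞 K) ⧸ P)) i j) =
        Ideal.Quotient.mk P (A i j)

section Helpers


variable (K : Type*) [Field K] [NumberField K]

instance : Nonempty (K →+* ℂ) := by
  rw [← Fintype.card_pos_iff, NumberField.Embeddings.card K ℂ]
  exact Module.finrank_pos

lemma apply_le_houseK (σ : K →+* ℂ) (x : K) : ‖σ x‖ ≤ houseK K x :=
  le_ciSup (Set.Finite.bddAbove (Set.finite_range (fun σ : K →+* ℂ => ‖σ x‖))) σ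

lemma houseK_nonneg (x : K) : 0 ≤ houseK K x :=
  le_trans (norm_nonneg _) (apply_le_houseK K (Classical.arbitrary _) x)

lemma houseK_le {x : K} {B : ℝ} (h : ∀ σ : K →+* ℂ, ‖σ x‖ ≤ B) :
    houseK K x ≤ B := ciSup_le h

lemma houseK_mul_le (x y : K) : houseK K (x * y) ≤ houseK K x * houseK K y := by
  refine houseK_le K fun σ => ?_
  rw [map_mul, norm_mul]
  exact mul_le_mul (apply_le_houseK K σ x) (apply_le_houseK K σ y) (norm_nonneg _)
    (houseK_nonneg K x)

lemma houseK_sub_le (x y : K) : houseK K (x - y) ≤ houseK K x + houseK K y := by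
  refine houseK_le K fun σ => ?_
  rw [map_sub]
  exact le_trans (norm_sub_le _ _)
    (add_le_add (apply_le_houseK K σ x) (apply_le_houseK K σ y))

lemma houseK_one : houseK K 1 = 1 := by
  have : ∀ σ : K →+* ℂ, ‖σ 1‖ = 1 := fun σ => by simp
  simp [houseK, this]

lemma houseK_zero : houseK K 0 = 0 := by simp [houseK]

lemma houseK_sum_le {ι : Type*} (s : Finset ι) (f : ι → K) :
    houseK K (∑ i ∈ s, f i) ≤ ∑ i ∈ s, houseK K (f i) := by
  refine houseK_le K fun σ => ?_
  rw [map_sum]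
  exact le_trans (norm_sum_le _ _) (Finset.sum_le_sum fun i _ => apply_le_houseK K σ (f i))

lemma abs_norm_eq_prod_abs (x : K) :
    ((|Algebra.norm ℚ x| : ℚ) : ℝ) = ∏ σ : K →+* ℂ, ‖σ x‖ := by
  have h := congr_arg (‖·‖) (Algebra.norm_eq_prod_embeddings ℚ ℂ (x := x))
  rw [norm_prod] at h
  rw [Fintype.prod_equiv (RingHom.equivRatAlgHom K ℂ) (fun σ : K →+* ℂ => ‖σ x‖)
      (fun φ : K →ₐ[ℚ] ℂ => ‖φ x‖)
      (fun _ => by simp [RingHom.equivRatAlgHom_apply]), ← h, eq_ratCast]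
  rw [show ((Algebra.norm ℚ x : ℚ) : ℂ) = ((((Algebra.norm ℚ x : ℚ) : ℝ)) : ℂ) by push_cast; ring,
    Complex.norm_real, Real.norm_eq_abs, Rat.cast_abs]

lemma natAbs_norm_le_houseK_pow (x : 𝓞 K) :
    (((Algebra.norm ℤ x).natAbs : ℕ) : ℝ) ≤
      houseK K (algebraMap (𝓞 K) K x) ^ Fintype.card (K →+* ℂ) := by
  have e1 : (((Algebra.norm ℤ x).natAbs : ℕ) : ℝ) =
      ((|Algebra.norm ℚ (algebraMap (𝓞 K) K x)| : ℚ) : ℝ) := by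
    rw [← Algebra.coe_norm_int]
    push_cast [Nat.cast_natAbs]
    norm_num
  rw [e1, abs_norm_eq_prod_abs]
  calc ∏ σ : K →+* ℂ, ‖σ (algebraMap (𝓞 K) K x)‖
      ≤ ∏ _σ : K →+* ℂ, houseK K (algebraMap (𝓞 K) K x) :=
        Finset.prod_le_prod (fun _ _ => norm_nonneg _)
          (fun σ _ => apply_le_houseK K σ _)
    _ = _ := by rw [Finset.prod_const, Finset.card_univ]

lemma prime_le_natAbs_norm (p : ℕ) (hp : p.Prime) (P : Ideal (𝓞 K)) (hP : P.IsPrime)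
    (hpP : (p : 𝓞 K) ∈ P) (x : 𝓞 K) (hx0 : x ≠ 0) (hxP : x ∈ P) :
    (p : ℝ) ≤ (((Algebra.norm ℤ x).natAbs : ℕ) : ℝ) := by
  have habs1 : Ideal.absNorm P ≠ 1 := by
    simp only [ne_eq, Ideal.absNorm_eq_one_iff]; exact hP.ne_top
  have hdvd : (Ideal.absNorm P : ℤ) ∣ Algebra.norm ℤ ((p : ℕ) : 𝓞 K) :=
    Ideal.absNorm_dvd_norm_of_mem hpP
  have hmap : ((p : ℕ) : 𝓞 K) = algebraMap ℤ (𝓞 K) ((p : ℕ) : ℤ) := by push_cast; rfl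
  rw [hmap, Algebra.norm_algebraMap_of_basis (Module.Free.chooseBasis ℤ (𝓞 K))] at hdvd
  have hdvd' : Ideal.absNorm P ∣
      p ^ Fintype.card (Module.Free.ChooseBasisIndex ℤ (𝓞 K)) := by
    rw [← Int.natCast_dvd_natCast]
    push_cast
    exact_mod_cast hdvd
  obtain ⟨k, -, hk⟩ := (Nat.dvd_prime_pow hp).mp hdvd'
  have hk0 : k ≠ 0 := by rintro rfl; rw [pow_zero] at hk; exact habs1 hk
  have hpdvd : p ∣ Ideal.absNorm P := hk ▸ dvd_pow_self p hk0
  have hdvd2 : (Ideal.absNorm P : ℤ) ∣ Algebra.norm ℤ x :=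
    Ideal.absNorm_dvd_norm_of_mem hxP
  have hdvd3 : Ideal.absNorm P ∣ (Algebra.norm ℤ x).natAbs := by
    rwa [← Int.natCast_dvd] 
  have hne : (Algebra.norm ℤ x).natAbs ≠ 0 :=
    Int.natAbs_ne_zero.mpr (Algebra.norm_ne_zero_iff.mpr hx0)
  have : p ≤ (Algebra.norm ℤ x).natAbs :=
    Nat.le_of_dvd (Nat.pos_of_ne_zero hne) (hpdvd.trans hdvd3)
  exact_mod_cast this

lemma word_exists {G : Type*} [Group G] {S : Set G} (hsym : ∀ s ∈ S, s⁻¹ ∈ S)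
    (hgen : Subgroup.closure S = ⊤) (g : G) :
    ∃ l : List G, (∀ a ∈ l, a ∈ S) ∧ l.prod = g ∧ l.length = wordLength S g := by
  have hne : {m | ∃ l : List G, l.length = m ∧ (∀ a ∈ l, a ∈ S ∨ a⁻¹ ∈ S) ∧
      l.prod = g}.Nonempty := by
    have hg : g ∈ Subgroup.closure S := by rw [hgen]; trivial
    have hg' : g ∈ Submonoid.closure (S ∪ S⁻¹) := by
      rw [← Subgroup.closure_toSubmonoid]; exact hg
    obtain ⟨l, hl, hlp⟩ := Submonoid.exists_list_of_mem_closure hg'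
    exact ⟨l.length, l, rfl, fun a ha => (hl a ha).imp id (fun h => Set.mem_inv.mp h), hlp⟩
  obtain ⟨l, hlen, hmem, hprod⟩ := Nat.sInf_mem hne
  refine ⟨l, fun a ha => ?_, hprod, hlen⟩
  rcases hmem a ha with h | h
  · exact h
  · have := hsym _ h; rwa [inv_inv] at this

section Mat

variable {d : ℕ} {K : Type*} [Field K] [NumberField K]
  {Γ : Subgroup (Matrix.SpecialLinearGroup (Fin d) K)} {S : Set Γ}
  (sstar : Γ → Matrix (Fin d) (Fin d) (𝓞 K)) (δ : Γ → 𝓞 K)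

lemma list_rep
    (hrep : ∀ s ∈ S, ∀ i j : Fin d,
      algebraMap (𝓞 K) K (δ s) *
        ((s : Matrix.SpecialLinearGroup (Fin d) K) : Matrix (Fin d) (Fin d) K) i j =
      algebraMap (𝓞 K) K (sstar s i j))
    (l : List Γ) (hl : ∀ a ∈ l, a ∈ S) :
    ((l.map sstar).prod).map (algebraMap (𝓞 K) K) =
      algebraMap (𝓞 K) K ((l.map δ).prod) •
        (((l.prod : Γ) : Matrix.SpecialLinearGroup (Fin d) K) : Matrix (Fin d) (Fin d) K) := by
  induction l with
  | nil =>
      simp [Matrix.map_one (algebraMap (𝓞 K) K) (map_zero _) (map_one _)]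
  | cons a t ih =>
      simp only [List.map_cons, List.prod_cons]
      have ha : ((sstar a).map (algebraMap (𝓞 K) K)) =
          algebraMap (𝓞 K) K (δ a) •
            ((a : Matrix.SpecialLinearGroup (Fin d) K) : Matrix (Fin d) (Fin d) K) := by
        ext i j
        simp only [Matrix.map_apply, Matrix.smul_apply, smul_eq_mul]
        exact (hrep a (hl a (List.mem_cons_self)) i j).symm
      rw [Matrix.map_mul, ha, ih (fun b hb => hl b (List.mem_cons_of_mem _ hb)),
        smul_mul_smul_comm, map_mul]
      rfl

set_option linter.unusedSectionVars false in
lemma entry_bound (M' : ℝ) (hM1 : 1 ≤ M')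
    (hM : ∀ s ∈ S, ∀ i j : Fin d, houseK K (algebraMap (𝓞 K) K (sstar s i j)) ≤ M')
    (l : List Γ) (hl : ∀ a ∈ l, a ∈ S) :
    ∀ i j : Fin d, houseK K (algebraMap (𝓞 K) K (((l.map sstar).prod) i j)) ≤
      ((d : ℝ) * M') ^ l.length := by
  induction l with
  | nil =>
      intro i j
      simp only [List.map_nil, List.prod_nil, List.length_nil, pow_zero]
      rw [Matrix.one_apply]
      split
      · rw [map_one, houseK_one]
      · rw [map_zero, houseK_zero]; norm_num
  | cons a t ih =>
      intro i j
      have hmem := fun b hb => hl b (List.mem_cons_of_mem a hb)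
      have haS := hl a (List.mem_cons_self)
      simp only [List.map_cons, List.prod_cons, List.length_cons]
      rw [Matrix.mul_apply, map_sum]
      have hd0 : (0:ℝ) ≤ (d : ℝ) * M' := by positivity
      calc houseK K (∑ k, algebraMap (𝓞 K) K (sstar a i k * ((t.map sstar).prod) k j))
          ≤ ∑ k, houseK K (algebraMap (𝓞 K) K (sstar a i k * ((t.map sstar).prod) k j)) :=
            houseK_sum_le K _ _
        _ ≤ ∑ _k : Fin d, M' * ((d : ℝ) * M') ^ t.length := by
            refine Finset.sum_le_sum fun k _ => ?_
            rw [map_mul]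
            exact le_trans (houseK_mul_le K _ _)
              (mul_le_mul (hM a haS i k) (ih hmem k j) (houseK_nonneg K _)
                (le_trans zero_le_one hM1))
        _ = (d : ℝ) * (M' * ((d : ℝ) * M') ^ t.length) := by
            rw [Finset.sum_const, Finset.card_univ, Fintype.card_fin, nsmul_eq_mul]
        _ = ((d : ℝ) * M') ^ (t.length + 1) := by ring

set_option linter.unusedSectionVars false in
lemma delta_bound (M' : ℝ) (hM1 : 1 ≤ M')
    (hM : ∀ s ∈ S, houseK K (algebraMap (𝓞 K) K (δ s)) ≤ M')
    (l : List Γ) (hl : ∀ a ∈ l, a ∈ S) :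
    houseK K (algebraMap (𝓞 K) K ((l.map δ).prod)) ≤ M' ^ l.length := by
  induction l with
  | nil => simp [houseK_one]
  | cons a t ih =>
      simp only [List.map_cons, List.prod_cons, List.length_cons, map_mul]
      calc houseK K (algebraMap (𝓞 K) K (δ a) * algebraMap (𝓞 K) K ((t.map δ).prod))
          ≤ M' * M' ^ t.length :=
            le_trans (houseK_mul_le K _ _)
              (mul_le_mul (hM a (hl a (List.mem_cons_self)))
                (ih (fun b hb => hl b (List.mem_cons_of_mem a hb))) (houseK_nonneg K _)
                (le_trans zero_le_one hM1))
        _ = M' ^ (t.length + 1) := by ring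

set_option linter.unusedSectionVars false in
lemma delta_notmem (P : Ideal (𝓞 K)) (hP : P.IsPrime) (h : ∀ s ∈ S, δ s ∉ P)
    (l : List Γ) (hl : ∀ a ∈ l, a ∈ S) : (l.map δ).prod ∉ P := by
  induction l with
  | nil => simp only [List.map_nil, List.prod_nil]; exact fun hm => hP.ne_top (P.eq_top_of_isUnit_mem hm isUnit_one)
  | cons a t ih =>
      simp only [List.map_cons, List.prod_cons]
      intro hmem
      rcases hP.mem_or_mem hmem with hc | hc
      · exact h a (hl a (List.mem_cons_self)) hc
      · exact ih (fun b hb => hl b (List.mem_cons_of_mem a hb)) hc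

end Mat

end Helpers

set_option maxHeartbeats 2000000 in
theorem stmt11 (d : ℕ) (hd : 2 ≤ d) (K : Type*) [Field K] [NumberField K]
    (Γ : Subgroup (Matrix.SpecialLinearGroup (Fin d) K))
    (S : Set Γ) (hSfin : S.Finite) (hSsymm : ∀ s ∈ S, s⁻¹ ∈ S) (hSone : (1 : Γ) ∈ S)
    (hSgen : Subgroup.closure S = ⊤)
    (sstar : Γ → Matrix (Fin d) (Fin d) (𝓞 K)) (δ : Γ → 𝓞 K)
    (hδ : ∀ s ∈ S, δ s ≠ 0)
    (hrep : ∀ s ∈ S, ∀ i j : Fin d,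
      algebraMap (𝓞 K) K (δ s) *
        ((s : Matrix.SpecialLinearGroup (Fin d) K) : Matrix (Fin d) (Fin d) K) i j =
      algebraMap (𝓞 K) K (sstar s i j))
    (M : ℝ)
    (hMs : ∀ s ∈ S, ∀ i j : Fin d, sstar s i j ≠ 0 →
      houseK K (algebraMap (𝓞 K) K (sstar s i j)) ≤ M)
    (hMδ : ∀ s ∈ S, houseK K (algebraMap (𝓞 K) K (δ s)) ≤ M) :
    ∃ c : ℝ, 0 < c ∧
      ∀ p : ℕ, SplitsCompletely K p →
        ∀ P : Ideal (𝓞 K), P.IsPrime → P ≠ ⊥ → (p : 𝓞 K) ∈ P →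
          (∀ s ∈ S, δ s ∉ P) →
          ∀ π : Γ →* Matrix.SpecialLinearGroup (Fin d) ((𝓞 K) ⧸ P),
            IsReductionHom Γ P π →
            ∀ g h : Γ, (wordLength S g : ℝ) ≤ c * Real.log p →
              (wordLength S h : ℝ) ≤ c * Real.log p → π g = π h → g = h := by
  classical
  set M' : ℝ := max M 1 with hM'def
  set C : ℝ := (d : ℝ) * M' with hCdef
  set D : ℕ := Fintype.card (K →+* ℂ) with hDdef
  have hM'1 : (1:ℝ) ≤ M' := le_max_right _ _
  have hC2 : (2:ℝ) ≤ C := by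
    have h2d : (2:ℝ) ≤ (d:ℝ) := by exact_mod_cast hd
    calc (2:ℝ) = 2*1 := by ring
      _ ≤ (d:ℝ) * M' := mul_le_mul h2d hM'1 zero_le_one (by linarith)
  have hM'C : M' ≤ C := by
    have h1d : (1:ℝ) ≤ (d:ℝ) := by
      have : (2:ℝ) ≤ (d:ℝ) := by exact_mod_cast hd
      linarith
    calc M' = 1 * M' := by ring
      _ ≤ (d:ℝ) * M' := mul_le_mul_of_nonneg_right h1d (by linarith)
  have hlC : 0 < Real.log C := Real.log_pos (by linarith)
  have hD1 : 0 < D := Fintype.card_pos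
  have hDR : (1:ℝ) ≤ (D:ℝ) := by exact_mod_cast hD1
  have hden : 0 < 8 * (D:ℝ) * Real.log C := by positivity
  refine ⟨(8 * (D:ℝ) * Real.log C)⁻¹, by positivity, ?_⟩
  intro p hsplit P hP hPbot hpP hδP π hred g h hg hh hππ
  set c : ℝ := (8 * (D:ℝ) * Real.log C)⁻¹ with hcdef
  have hcpos : 0 < c := by positivity
  have hF5 : c * (8 * (D:ℝ) * Real.log C) = 1 := inv_mul_cancel₀ (ne_of_gt hden)
  by_contra hne
  -- house bounds hypotheses in convenient form
  have hMent : ∀ s ∈ S, ∀ i j : Fin d,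
      houseK K (algebraMap (𝓞 K) K (sstar s i j)) ≤ M' := by
    intro s hs i j
    by_cases h0 : sstar s i j = 0
    · rw [h0, map_zero, houseK_zero]; linarith
    · exact le_trans (hMs s hs i j h0) (le_max_left _ _)
  have hMδ' : ∀ s ∈ S, houseK K (algebraMap (𝓞 K) K (δ s)) ≤ M' :=
    fun s hs => le_trans (hMδ s hs) (le_max_left _ _)
  -- words
  obtain ⟨lg, hlgS, hlgprod, hlglen⟩ := word_exists hSsymm hSgen g
  obtain ⟨lh, hlhS, hlhprod, hlhlen⟩ := word_exists hSsymm hSgen h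
  set A := (lg.map sstar).prod with hAdef
  set B := (lh.map sstar).prod with hBdef
  set δg := (lg.map δ).prod with hδgdef
  set δh := (lh.map δ).prod with hδhdef
  have hrepg := list_rep sstar δ hrep lg hlgS
  have hreph := list_rep sstar δ hrep lh hlhS
  rw [hlgprod] at hrepg
  rw [hlhprod] at hreph
  have hgK : ∀ i j : Fin d, algebraMap (𝓞 K) K δg *
      ((g : Matrix.SpecialLinearGroup (Fin d) K) : Matrix (Fin d) (Fin d) K) i j =
      algebraMap (𝓞 K) K (A i j) := by
    intro i j
    have h1 : (A.map (algebraMap (𝓞 K) K)) i j =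
        (algebraMap (𝓞 K) K δg •
          ((g : Matrix.SpecialLinearGroup (Fin d) K) : Matrix (Fin d) (Fin d) K)) i j := by
      rw [hrepg]
    simp only [Matrix.map_apply, Matrix.smul_apply, smul_eq_mul] at h1
    exact h1.symm
  have hhK : ∀ i j : Fin d, algebraMap (𝓞 K) K δh *
      ((h : Matrix.SpecialLinearGroup (Fin d) K) : Matrix (Fin d) (Fin d) K) i j =
      algebraMap (𝓞 K) K (B i j) := by
    intro i j
    have h1 : (B.map (algebraMap (𝓞 K) K)) i j =
        (algebraMap (𝓞 K) K δh •
          ((h : Matrix.SpecialLinearGroup (Fin d) K) : Matrix (Fin d) (Fin d) K)) i j := by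
      rw [hreph]
    simp only [Matrix.map_apply, Matrix.smul_apply, smul_eq_mul] at h1
    exact h1.symm
  have hδgP : δg ∉ P := delta_notmem δ P hP hδP lg hlgS
  have hδhP : δh ∉ P := delta_notmem δ P hP hδP lh hlhS
  have hδg0 : δg ≠ 0 := fun h0 => hδgP (h0 ▸ P.zero_mem)
  have hδh0 : δh ≠ 0 := fun h0 => hδhP (h0 ▸ P.zero_mem)
  have hmodg := hred g A δg hδgP hgK
  have hmodh := hred h B δh hδhP hhK
  -- a differing entry
  have hex : ∃ i j : Fin d,
      ((g : Matrix.SpecialLinearGroup (Fin d) K) : Matrix (Fin d) (Fin d) K) i j ≠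
      ((h : Matrix.SpecialLinearGroup (Fin d) K) : Matrix (Fin d) (Fin d) K) i j := by
    by_contra hc
    push_neg at hc
    exact hne (Subtype.ext (Subtype.ext (Matrix.ext fun i j => hc i j)))
  obtain ⟨i, j, hij⟩ := hex
  set x : 𝓞 K := δh * A i j - δg * B i j with hxdef
  have finj : Function.Injective (algebraMap (𝓞 K) K) :=
    FaithfulSMul.algebraMap_injective _ _
  have hfg0 : algebraMap (𝓞 K) K δg ≠ 0 := fun h0 => hδg0 (finj (by rw [h0, map_zero]))
  have hfh0 : algebraMap (𝓞 K) K δh ≠ 0 := fun h0 => hδh0 (finj (by rw [h0, map_zero]))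
  have hx0 : x ≠ 0 := by
    intro h0
    apply hij
    have heq : δh * A i j = δg * B i j := by
      have := sub_eq_zero.mp (hxdef ▸ h0)
      exact this
    have heqK := congrArg (algebraMap (𝓞 K) K) heq
    rw [map_mul, map_mul, ← hgK i j, ← hhK i j] at heqK
    have hcancel : (algebraMap (𝓞 K) K δg * algebraMap (𝓞 K) K δh) *
        ((g : Matrix.SpecialLinearGroup (Fin d) K) : Matrix (Fin d) (Fin d) K) i j =
        (algebraMap (𝓞 K) K δg * algebraMap (𝓞 K) K δh) *
        ((h : Matrix.SpecialLinearGroup (Fin d) K) : Matrix (Fin d) (Fin d) K) i j := by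
      linear_combination heqK
    exact mul_left_cancel₀ (mul_ne_zero hfg0 hfh0) hcancel
  have hxP : x ∈ P := by
    rw [← Ideal.Quotient.eq_zero_iff_mem]
    have e1 := hmodg i j
    have e2 := hmodh i j
    rw [hππ] at e1
    calc Ideal.Quotient.mk P x
        = Ideal.Quotient.mk P δh * Ideal.Quotient.mk P (A i j) -
          Ideal.Quotient.mk P δg * Ideal.Quotient.mk P (B i j) := by
          rw [hxdef, map_sub, map_mul, map_mul]
      _ = Ideal.Quotient.mk P δh * (Ideal.Quotient.mk P δg *
            ((π h : Matrix (Fin d) (Fin d) ((𝓞 K) ⧸ P)) i j)) -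
          Ideal.Quotient.mk P δg * (Ideal.Quotient.mk P δh *
            ((π h : Matrix (Fin d) (Fin d) ((𝓞 K) ⧸ P)) i j)) := by
          rw [e1, e2]
      _ = 0 := by ring
  -- house bound on x
  have hAb : houseK K (algebraMap (𝓞 K) K (A i j)) ≤ C ^ lg.length :=
    entry_bound sstar M' hM'1 hMent lg hlgS i j
  have hBb : houseK K (algebraMap (𝓞 K) K (B i j)) ≤ C ^ lh.length :=
    entry_bound sstar M' hM'1 hMent lh hlhS i j
  have hδgb : houseK K (algebraMap (𝓞 K) K δg) ≤ C ^ lg.length :=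
    le_trans (delta_bound δ M' hM'1 hMδ' lg hlgS)
      (pow_le_pow_left₀ (by linarith) hM'C _)
  have hδhb : houseK K (algebraMap (𝓞 K) K δh) ≤ C ^ lh.length :=
    le_trans (delta_bound δ M' hM'1 hMδ' lh hlhS)
      (pow_le_pow_left₀ (by linarith) hM'C _)
  have hCpow : ∀ n : ℕ, (0:ℝ) ≤ C ^ n := fun n => pow_nonneg (by linarith) n
  have hhx : houseK K (algebraMap (𝓞 K) K x) ≤ C ^ (lg.length + lh.length + 1) := by
    have hsub : houseK K (algebraMap (𝓞 K) K x) ≤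
        houseK K (algebraMap (𝓞 K) K δh * algebraMap (𝓞 K) K (A i j)) +
        houseK K (algebraMap (𝓞 K) K δg * algebraMap (𝓞 K) K (B i j)) := by
      rw [hxdef, map_sub, map_mul, map_mul]
      exact houseK_sub_le K _ _
    have hm1 : houseK K (algebraMap (𝓞 K) K δh * algebraMap (𝓞 K) K (A i j)) ≤
        C ^ lh.length * C ^ lg.length :=
      le_trans (houseK_mul_le K _ _)
        (mul_le_mul hδhb hAb (houseK_nonneg K _) (hCpow _))
    have hm2 : houseK K (algebraMap (𝓞 K) K δg * algebraMap (𝓞 K) K (B i j)) ≤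
        C ^ lg.length * C ^ lh.length :=
      le_trans (houseK_mul_le K _ _)
        (mul_le_mul hδgb hBb (houseK_nonneg K _) (hCpow _))
    have hpow : C ^ lh.length * C ^ lg.length + C ^ lg.length * C ^ lh.length ≤
        C ^ (lg.length + lh.length + 1) := by
      rw [pow_succ' C (lg.length + lh.length)]
      have h1 : C ^ lh.length * C ^ lg.length = C ^ (lg.length + lh.length) := by
        rw [← pow_add, Nat.add_comm]
      have h2 : C ^ lg.length * C ^ lh.length = C ^ (lg.length + lh.length) := by
        rw [← pow_add]
      rw [h1, h2]
      nlinarith [hCpow (lg.length + lh.length)]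
    linarith
  -- the prime bound
  have hp1 : (p : ℝ) ≤ (((Algebra.norm ℤ x).natAbs : ℕ) : ℝ) :=
    prime_le_natAbs_norm K p hsplit.1 P hP hpP x hx0 hxP
  have hp2 : (((Algebra.norm ℤ x).natAbs : ℕ) : ℝ) ≤
      houseK K (algebraMap (𝓞 K) K x) ^ D := natAbs_norm_le_houseK_pow K x
  have hp3 : houseK K (algebraMap (𝓞 K) K x) ^ D ≤
      (C ^ (lg.length + lh.length + 1)) ^ D :=
    pow_le_pow_left₀ (houseK_nonneg K _) hhx D
  have hpC : (p : ℝ) ≤ C ^ ((lg.length + lh.length + 1) * D) := by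
    rw [pow_mul]
    linarith
  -- logarithms
  have hppos : (0:ℝ) < p := by
    have := hsplit.1.two_le
    exact_mod_cast lt_of_lt_of_le (by norm_num : (0:ℕ) < 2) this
  have hlp0 : 0 ≤ Real.log p := Real.log_nonneg (by exact_mod_cast hsplit.1.one_lt.le)
  have hlog : Real.log p ≤ ((lg.length + lh.length + 1) * D : ℕ) * Real.log C := by
    rw [← Real.log_pow]
    exact Real.log_le_log hppos hpC
  -- word length bounds
  have hgl : (lg.length : ℝ) ≤ c * Real.log p := by rw [hlglen]; exact hg
  have hhl : (lh.length : ℝ) ≤ c * Real.log p := by rw [hlhlen]; exact hh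
  -- not both words empty
  have hL1 : 1 ≤ lg.length + lh.length := by
    by_contra hc
    push_neg at hc
    have hg1 : lg = [] := List.length_eq_zero_iff.mp (by omega)
    have hh1 : lh = [] := List.length_eq_zero_iff.mp (by omega)
    apply hne
    rw [hg1] at hlgprod
    rw [hh1] at hlhprod
    simp only [List.prod_nil] at hlgprod hlhprod
    rw [← hlgprod, ← hlhprod]
  -- final contradiction
  set lp := Real.log p with hlpdef
  set lc := Real.log C with hlcdef
  set L : ℝ := (lg.length : ℝ) + (lh.length : ℝ) with hLdef
  have hF1 : (1:ℝ) ≤ L := by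
    rw [hLdef]
    exact_mod_cast hL1
  have hF4 : lp ≤ (L + 1) * ((D:ℝ) * lc) := by
    have : (((lg.length + lh.length + 1) * D : ℕ) : ℝ) = (L + 1) * (D:ℝ) := by
      push_cast; ring
    calc lp ≤ (((lg.length + lh.length + 1) * D : ℕ) : ℝ) * lc := hlog
      _ = (L + 1) * ((D:ℝ) * lc) := by rw [this]; ring
  have k0 : (0:ℝ) < (D:ℝ) * lc := by positivity
  have k1 : L ≤ 2 * c * lp := by rw [hLdef]; linarith
  have k4 : 2 * c * ((D:ℝ) * lc) = 1/4 := by linear_combination (1/4) * hF5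
  have k3 : L * ((D:ℝ) * lc) ≤ (2 * c * lp) * ((D:ℝ) * lc) :=
    mul_le_mul_of_nonneg_right k1 k0.le
  have k3' : L * ((D:ℝ) * lc) ≤ lp / 4 := by nlinarith [k3, k4]
  have k2 : lp ≤ lp / 4 + (D:ℝ) * lc := by nlinarith [hF4, k3']
  have k5 : 1 ≤ 2 * c * lp := le_trans hF1 k1
  have k6 : 4 * ((D:ℝ) * lc) ≤ lp := by nlinarith [k5, k4, k0]
  linarith
end

section
/- For every prime p and every proper subgroup H of SL₂(𝔽_p), either H is metabelian (the commutator subgroup [H,H] is abelian) or the order of H divides 240. -/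
open Matrix

open scoped commutatorElement

namespace Dickson

variable {k : Type*} [Field k]

lemma vec2_ne_zero {v : Fin 2 → k} (h : v ≠ 0) : v 0 ≠ 0 ∨ v 1 ≠ 0 := by
  by_contra hc
  push_neg at hc
  exact h (funext fun i => by fin_cases i <;> simp [hc.1, hc.2])

lemma mulVec2 (A : Matrix (Fin 2) (Fin 2) k) (v : Fin 2 → k) (i : Fin 2) :
    A.mulVec v i = A i 0 * v 0 + A i 1 * v 1 := by
  simp [Matrix.mulVec, dotProduct, Fin.sum_univ_two]

/-- Cayley–Hamilton for 2×2 matrices. -/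
lemma cayley2 (A : Matrix (Fin 2) (Fin 2) k) :
    A * A = A.trace • A - A.det • (1 : Matrix (Fin 2) (Fin 2) k) := by
  ext i j
  fin_cases i <;> fin_cases j <;>
    simp [Matrix.mul_apply, Fin.sum_univ_two, Matrix.trace_fin_two, Matrix.det_fin_two,
      Matrix.one_apply] <;> ring

/-- two vectors in k² with zero "cross product" are proportional -/
lemma prop_of_cross {v w : Fin 2 → k} (hv : v ≠ 0) (h : v 0 * w 1 = v 1 * w 0) :
    ∃ c : k, w = c • v := by
  rcases vec2_ne_zero hv with h0 | h1
  · refine ⟨w 0 / v 0, funext fun i => ?_⟩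
    fin_cases i
    · simp [div_mul_cancel₀, h0]
    · show w 1 = w 0 / v 0 * v 1
      field_simp
      linear_combination h
  · refine ⟨w 1 / v 1, funext fun i => ?_⟩
    fin_cases i
    · show w 0 = w 1 / v 1 * v 0
      field_simp
      linear_combination -h
    · simp [div_mul_cancel₀, h1]

lemma eq_zero_of_two_kernel {A : Matrix (Fin 2) (Fin 2) k} {v w : Fin 2 → k}
    (hv : A.mulVec v = 0) (hw : A.mulVec w = 0) (hind : v 0 * w 1 - v 1 * w 0 ≠ 0) :
    A = 0 := by
  ext i j
  have e1 : A i 0 * v 0 + A i 1 * v 1 = 0 := by rw [← mulVec2, hv]; rfl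
  have e2 : A i 0 * w 0 + A i 1 * w 1 = 0 := by rw [← mulVec2, hw]; rfl
  have h0 : A i 0 * (v 0 * w 1 - v 1 * w 0) = 0 := by linear_combination w 1 * e1 - v 1 * e2
  have h1 : A i 1 * (v 0 * w 1 - v 1 * w 0) = 0 := by linear_combination v 0 * e2 - w 0 * e1
  fin_cases j
  · exact (mul_eq_zero.1 h0).resolve_right hind
  · exact (mul_eq_zero.1 h1).resolve_right hind

/-- a nonzero 2×2 matrix with `v` in its kernel has 1-dim kernel -/
lemma kernel_unique {A : Matrix (Fin 2) (Fin 2) k} {v w : Fin 2 → k}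
    (hA : A ≠ 0) (hv0 : v ≠ 0) (hv : A.mulVec v = 0) (hw : A.mulVec w = 0) :
    ∃ c : k, w = c • v := by
  refine prop_of_cross hv0 ?_
  by_contra hc
  exact hA (eq_zero_of_two_kernel hv hw (sub_ne_zero.2 hc))

/-- key commuting lemma: traceless matrices killing a common nonzero vector multiply to zero -/
lemma mul_eq_zero_of_traceless {N M : Matrix (Fin 2) (Fin 2) k} {v : Fin 2 → k}
    (hv : v ≠ 0) (htN : N.trace = 0) (htM : M.trace = 0)
    (hN : N.mulVec v = 0) (hM : M.mulVec v = 0) : N * M = 0 := by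
  have rN : ∀ i, N i 0 * v 0 + N i 1 * v 1 = 0 := fun i => by rw [← mulVec2, hN]; rfl
  have rM : ∀ i, M i 0 * v 0 + M i 1 * v 1 = 0 := fun i => by rw [← mulVec2, hM]; rfl
  have tN : N 0 0 + N 1 1 = 0 := by rw [← Matrix.trace_fin_two]; exact htN
  have tM : M 0 0 + M 1 1 = 0 := by rw [← Matrix.trace_fin_two]; exact htM
  have key : ∀ i j, N i 0 * M 0 j + N i 1 * M 1 j = 0 := by
    intro i j
    rcases vec2_ne_zero hv with h0 | h1
    · fin_cases j
    -- case v 0 ≠ 0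
      · have : (N i 0 * M 0 0 + N i 1 * M 1 0) * v 0 = 0 := by
          linear_combination M 0 0 * rN i + N i 1 * rM 1 - (N i 1 * v 1) * tM
        exact (mul_eq_zero.1 this).resolve_right h0
      · have : (N i 0 * M 0 1 + N i 1 * M 1 1) * (v 0 * v 0) = 0 := by
          linear_combination (v 0 * M 0 1) * rN i - (N i 1 * v 0) * rM 0 +
            (N i 1 * v 0 * v 0) * tM
        rcases mul_eq_zero.1 this with h | h
        · exact h
        · exact absurd (mul_self_eq_zero.1 h) h0
    · fin_cases j
    -- case v 1 ≠ 0
      · have : (N i 0 * M 0 0 + N i 1 * M 1 0) * (v 1 * v 1) = 0 := by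
          linear_combination (v 1 * M 1 0) * rN i + (N i 0 * v 1 * v 1) * tM -
            (N i 0 * v 1) * rM 1
        rcases mul_eq_zero.1 this with h | h
        · exact h
        · exact absurd (mul_self_eq_zero.1 h) h1
      · have : (N i 0 * M 0 1 + N i 1 * M 1 1) * v 1 = 0 := by
          linear_combination M 1 1 * rN i + N i 0 * rM 0 - (N i 0 * v 0) * tM
        exact (mul_eq_zero.1 this).resolve_right h1
  ext i j
  rw [Matrix.mul_apply, Fin.sum_univ_two]
  exact key i j


/-! ### SL2 eigen machinery -/

local notation "SL2" k => Matrix.SpecialLinearGroup (Fin 2) k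

lemma det_sub_smul (A : Matrix (Fin 2) (Fin 2) k) (lam : k) :
    (A - lam • 1).det = lam ^ 2 - A.trace * lam + A.det := by
  simp [Matrix.det_fin_two, Matrix.trace_fin_two, Matrix.one_apply]
  ring

lemma sl2_inv_mul (g : SL2 k) : (g⁻¹).val * g.val = 1 := by
  rw [← Matrix.SpecialLinearGroup.coe_mul, inv_mul_cancel, Matrix.SpecialLinearGroup.coe_one]

lemma mulVec_sl2_ne_zero (g : SL2 k) {v : Fin 2 → k} (hv : v ≠ 0) :
    g.val.mulVec v ≠ 0 := by
  intro h
  apply hv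
  have h2 : (g⁻¹).val.mulVec (g.val.mulVec v) = 0 := by rw [h, Matrix.mulVec_zero]
  rwa [Matrix.mulVec_mulVec, sl2_inv_mul, Matrix.one_mulVec] at h2

lemma eigen_nonzero {g : SL2 k} {v : Fin 2 → k} {c : k} (hv : v ≠ 0)
    (h : g.val.mulVec v = c • v) : c ≠ 0 := by
  intro hc
  exact mulVec_sl2_ne_zero g hv (by rw [h, hc, zero_smul])

lemma eigen_inv {g : SL2 k} {v : Fin 2 → k} {c : k} (hv : v ≠ 0)
    (h : g.val.mulVec v = c • v) : (g⁻¹).val.mulVec v = c⁻¹ • v := by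
  have hc := eigen_nonzero hv h
  have h1 : (g⁻¹).val.mulVec (g.val.mulVec v) = v := by
    rw [Matrix.mulVec_mulVec, sl2_inv_mul, Matrix.one_mulVec]
  rw [h, Matrix.mulVec_smul] at h1
  have h3 : c⁻¹ • (c • ((g⁻¹).val.mulVec v)) = c⁻¹ • v := by rw [h1]
  rwa [smul_smul, inv_mul_cancel₀ hc, one_smul] at h3

lemma eigen_pow {A : Matrix (Fin 2) (Fin 2) k} {v : Fin 2 → k} {c : k}
    (h : A.mulVec v = c • v) (m : ℕ) : (A ^ m).mulVec v = c ^ m • v := by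
  induction m with
  | zero => simp
  | succ n ih =>
      rw [pow_succ, ← Matrix.mulVec_mulVec, h, Matrix.mulVec_smul, ih, smul_smul, ← pow_succ']

/-- trace of an SL2 element fixing a nonzero vector is 2 -/
lemma trace_eq_two_of_fix {g : SL2 k} {v : Fin 2 → k} (hv : v ≠ 0)
    (h : g.val.mulVec v = v) : g.val.trace = 2 := by
  have hdet : (g.val - (1:k) • 1).det = 0 := by
    rw [← Matrix.exists_mulVec_eq_zero_iff]
    exact ⟨v, hv, by rw [Matrix.sub_mulVec, h, Matrix.smul_mulVec, Matrix.one_mulVec,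
      one_smul, sub_self]⟩
  rw [det_sub_smul, Matrix.SpecialLinearGroup.det_coe] at hdet
  have : g.val.trace = 1 ^ 2 + 1 := by linear_combination -hdet
  rw [this]; norm_num

lemma nil_of_fix {g : SL2 k} {v : Fin 2 → k} (hv : v ≠ 0)
    (h : g.val.mulVec v = v) :
    (g.val - 1) * (g.val - 1) = 0 ∧ (g.val - 1).trace = 0 ∧ (g.val - 1).mulVec v = 0 := by
  have ht := trace_eq_two_of_fix hv h
  refine ⟨?_, ?_, ?_⟩
  · have hch := cayley2 g.val
    rw [ht, Matrix.SpecialLinearGroup.det_coe, one_smul] at hch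
    have h2 : (2:k) • g.val = g.val + g.val := two_smul k g.val
    calc (g.val - 1) * (g.val - 1) = g.val * g.val - (g.val + g.val) + 1 := by noncomm_ring
      _ = 0 := by rw [← h2, hch]; abel
  · rw [Matrix.trace_sub, ht, Matrix.trace_one]; norm_num
  · rw [Matrix.sub_mulVec, h, Matrix.one_mulVec, sub_self]

/-- two SL2 elements fixing a common nonzero vector commute -/
lemma comm_of_fix {x y : SL2 k} {v : Fin 2 → k} (hv : v ≠ 0)
    (hx : x.val.mulVec v = v) (hy : y.val.mulVec v = v) : x * y = y * x := by
  obtain ⟨hx2, hxt, hxv⟩ := nil_of_fix hv hx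
  obtain ⟨hy2, hyt, hyv⟩ := nil_of_fix hv hy
  have h1 : (x.val - 1) * (y.val - 1) = 0 := mul_eq_zero_of_traceless hv hxt hyt hxv hyv
  have h2 : (y.val - 1) * (x.val - 1) = 0 := mul_eq_zero_of_traceless hv hyt hxt hyv hxv
  have : x.val * y.val = y.val * x.val := by
    have e1 : x.val * y.val - x.val - y.val + 1 = 0 := by rw [← h1]; noncomm_ring
    have e2 : y.val * x.val - y.val - x.val + 1 = 0 := by rw [← h2]; noncomm_ring
    have := e1.trans e2.symm
    linear_combination (norm := noncomm_ring) this
  apply Subtype.ext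
  rw [Matrix.SpecialLinearGroup.coe_mul, Matrix.SpecialLinearGroup.coe_mul]
  exact this

/-- commutators of elements with a common eigenvector fix that eigenvector -/
lemma commutator_fix {a b : SL2 k} {v : Fin 2 → k} (hv : v ≠ 0)
    {ca cb : k} (ha : a.val.mulVec v = ca • v) (hb : b.val.mulVec v = cb • v) :
    (⁅a, b⁆ : SL2 k).val.mulVec v = v := by
  have hca := eigen_nonzero hv ha
  have hcb := eigen_nonzero hv hb
  have ha' := eigen_inv hv ha
  have hb' := eigen_inv hv hb
  show ((a * b * a⁻¹ * b⁻¹ : SL2 k)).val.mulVec v = v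
  simp only [Matrix.SpecialLinearGroup.coe_mul, ← Matrix.mulVec_mulVec, hb',
    Matrix.mulVec_smul, ha', hb, ha, smul_smul]
  rw [show cb⁻¹ * (ca⁻¹ * (cb * ca)) = 1 by field_simp, one_smul]

/-- LemM : if every element of S has v as an eigenvector then double commutators vanish -/
lemma lemM {S : Subgroup (SL2 k)} {v : Fin 2 → k} (hv : v ≠ 0)
    (hS : ∀ s ∈ S, ∃ c : k, s.val.mulVec v = c • v) :
    ∀ a ∈ S, ∀ b ∈ S, ∀ c ∈ S, ∀ d ∈ S, ⁅(⁅a, b⁆ : SL2 k), (⁅c, d⁆ : SL2 k)⁆ = 1 := by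
  intro a ha b hb c hc d hd
  obtain ⟨ca, hca⟩ := hS a ha
  obtain ⟨cb, hcb⟩ := hS b hb
  obtain ⟨cc, hcc⟩ := hS c hc
  obtain ⟨cd, hcd⟩ := hS d hd
  have h1 := commutator_fix hv hca hcb
  have h2 := commutator_fix hv hcc hcd
  rw [commutatorElement_eq_one_iff_mul_comm]
  exact comm_of_fix hv h1 h2

/-- binomial for 1 + nilpotent -/
lemma one_add_nil_pow {N : Matrix (Fin 2) (Fin 2) k} (hN : N * N = 0) (m : ℕ) :
    (1 + N) ^ m = 1 + (m : k) • N := by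
  induction m with
  | zero => simp
  | succ n ih =>
      rw [pow_succ, ih]
      push_cast
      have : ((n:k) • N) * N = (n:k) • (N * N) := by rw [Matrix.smul_mul]
      rw [mul_add, mul_one, add_mul, one_mul, this, hN, smul_zero, add_zero, add_smul, one_smul]
      abel

/-- LemK : a subgroup with common eigenvector and no p-torsion is commutative -/
lemma lemK (p : ℕ) [CharP k p] {S : Subgroup (SL2 k)} {v : Fin 2 → k} (hv : v ≠ 0)
    (hS : ∀ s ∈ S, ∃ c : k, s.val.mulVec v = c • v)
    (htor : ∀ s ∈ S, s ^ p = 1 → s = 1) :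
    ∀ x ∈ S, ∀ y ∈ S, x * y = y * x := by
  intro x hx y hy
  obtain ⟨cx, hcx⟩ := hS x hx
  obtain ⟨cy, hcy⟩ := hS y hy
  have hq := commutator_fix hv hcx hcy
  set q : SL2 k := ⁅x, y⁆ with hqdef
  obtain ⟨h2, ht, hvq⟩ := nil_of_fix hv hq
  have hqp : q ^ p = 1 := by
    ext1
    rw [Matrix.SpecialLinearGroup.coe_pow, Matrix.SpecialLinearGroup.coe_one]
    have : q.val = 1 + (q.val - 1) := by abel
    rw [this, one_add_nil_pow h2, CharP.cast_eq_zero k p, zero_smul, add_zero]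
  have hqmem : q ∈ S := by
    show x * y * x⁻¹ * y⁻¹ ∈ S
    exact S.mul_mem (S.mul_mem (S.mul_mem hx hy) (S.inv_mem hx)) (S.inv_mem hy)
  have : q = 1 := htor q hqmem hqp
  rwa [hqdef, commutatorElement_eq_one_iff_mul_comm] at this


/-! ### nilpotent binomial, general scalar -/

lemma smul_one_add_nil_pow {N : Matrix (Fin 2) (Fin 2) k} (hN : N * N = 0) (a : k) :
    ∀ m : ℕ, (a • 1 + N) ^ (m + 1) = a ^ (m + 1) • 1 + (((m:k) + 1) * a ^ m) • N := by
  intro m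
  induction m with
  | zero => simp
  | succ n ih =>
      rw [pow_succ, ih]
      have e1 : (a ^ (n + 1) • 1 + (((n:k) + 1) * a ^ n) • N) * (a • 1 + N)
          = a ^ (n + 2) • 1 + (a ^ (n+1) + ((n:k)+1) * a ^ n * a) • N
            + (((n:k)+1) * a ^ n) • (N * N) := by
        rw [add_mul, mul_add, mul_add, Matrix.smul_mul, Matrix.smul_mul, Matrix.smul_mul,
          Matrix.smul_mul, Matrix.mul_smul, Matrix.mul_smul, one_mul, mul_one, Matrix.one_mul,
          smul_smul, add_smul, smul_smul]
        rw [show a ^ (n+1) * a = a ^ (n+2) by ring]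
        abel
      rw [e1, hN, smul_zero, add_zero]
      congr 2
      push_cast
      ring

section AlgClosed
variable [IsAlgClosed k]

lemma exists_eigen_pair (g : SL2 k) : ∃ lam mu : k, lam * mu = 1 ∧ lam + mu = g.val.trace ∧
    (∃ v, v ≠ 0 ∧ g.val.mulVec v = lam • v) ∧ (∃ w, w ≠ 0 ∧ g.val.mulVec w = mu • w) := by
  set t := g.val.trace with ht
  obtain ⟨lam, hlam⟩ := IsAlgClosed.exists_root
    (Polynomial.C 1 * Polynomial.X ^ 2 + Polynomial.C (-t) * Polynomial.X + Polynomial.C 1)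
    (by rw [Polynomial.degree_quadratic one_ne_zero]; exact (by norm_num))
  have hlam' : lam ^ 2 - t * lam + 1 = 0 := by
    have := hlam
    simp only [Polynomial.IsRoot, Polynomial.eval_add, Polynomial.eval_mul, Polynomial.eval_pow,
      Polynomial.eval_C, Polynomial.eval_X] at this
    linear_combination this
  refine ⟨lam, t - lam, by linear_combination -hlam', by ring, ?_, ?_⟩
  · have hdet : (g.val - lam • 1).det = 0 := by
      rw [det_sub_smul, Matrix.SpecialLinearGroup.det_coe]; linear_combination hlam'
    obtain ⟨v, hv, hv0⟩ := Matrix.exists_mulVec_eq_zero_iff.2 hdet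
    refine ⟨v, hv, ?_⟩
    rw [Matrix.sub_mulVec, Matrix.smul_mulVec, Matrix.one_mulVec, sub_eq_zero] at hv0
    exact hv0
  · have hdet : (g.val - (t - lam) • 1).det = 0 := by
      rw [det_sub_smul, Matrix.SpecialLinearGroup.det_coe]; linear_combination hlam'
    obtain ⟨w, hw, hw0⟩ := Matrix.exists_mulVec_eq_zero_iff.2 hdet
    refine ⟨w, hw, ?_⟩
    rw [Matrix.sub_mulVec, Matrix.smul_mulVec, Matrix.one_mulVec, sub_eq_zero] at hw0
    exact hw0

/-- an element of finite order prime to the characteristic is ±1 or has two distinct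
eigenvalues -/
lemma scalar_or_distinct (g : SL2 k) {m : ℕ} (hm : g ^ m = 1) (hmk : (m : k) ≠ 0) :
    (g.val = 1 ∨ g.val = -1) ∨
      ∃ (lam mu : k) (v w : Fin 2 → k), v ≠ 0 ∧ w ≠ 0 ∧
        g.val.mulVec v = lam • v ∧ g.val.mulVec w = mu • w ∧ lam ≠ mu := by
  obtain ⟨lam, mu, hprod, hsum, ⟨v, hv, hgv⟩, ⟨w, hw, hgw⟩⟩ := exists_eigen_pair g
  by_cases hlm : lam = mu
  · left
    subst hlm
    have hlam1 : lam * lam = 1 := hprod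
    have hlam0 : lam ≠ 0 := fun h => by simp [h] at hlam1
    set N := g.val - lam • 1 with hNdef
    have hNN : N * N = 0 := by
      have hch := cayley2 g.val
      rw [Matrix.SpecialLinearGroup.det_coe, ← hsum, one_smul] at hch
      have e1 : N * N = g.val * g.val - lam • g.val - lam • g.val + (lam * lam) • 1 := by
        simp only [hNdef, sub_mul, mul_sub, Matrix.smul_mul, Matrix.mul_smul,
          Matrix.one_mul, Matrix.mul_one, smul_smul]
        abel
      rw [e1, hch, hlam1, add_smul, one_smul]
      abel
    have hm0 : m ≠ 0 := fun h => hmk (by rw [h]; exact Nat.cast_zero)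
    obtain ⟨m', rfl⟩ := Nat.exists_eq_succ_of_ne_zero hm0
    have hgval : g.val = lam • 1 + N := by rw [hNdef]; abel
    have hpow : g.val ^ (m' + 1) = 1 := by
      rw [← Matrix.SpecialLinearGroup.coe_pow, hm, Matrix.SpecialLinearGroup.coe_one]
    rw [hgval, smul_one_add_nil_pow hNN lam m'] at hpow
    set d := ((m' : k) + 1) * lam ^ m' with hd
    have hd0 : d ≠ 0 := by
      apply mul_ne_zero
      · intro h
        apply hmk
        rw [Nat.cast_succ]
        exact h
      · exact pow_ne_zero _ hlam0
    have hNsc : N = (d⁻¹ * (1 - lam ^ (m' + 1))) • 1 := by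
      have e2 : d • N = (1 - lam ^ (m' + 1)) • (1 : Matrix (Fin 2) (Fin 2) k) := by
        rw [sub_smul, one_smul]
        exact eq_sub_of_add_eq' hpow
      have e5 := congrArg (fun X => d⁻¹ • X) e2
      simp only [smul_smul, inv_mul_cancel₀ hd0, one_smul] at e5
      exact e5
    set c := d⁻¹ * (1 - lam ^ (m' + 1)) with hc
    have hc0 : c = 0 := by
      have e3 : (c • (1 : Matrix (Fin 2) (Fin 2) k)) * (c • 1) = (c * c) • 1 := by
        rw [Matrix.smul_mul, Matrix.mul_smul, smul_smul, Matrix.one_mul]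
      have e4 : (c * c) • (1 : Matrix (Fin 2) (Fin 2) k) = 0 := by
        rw [← e3, ← hNsc, hNN]
      have h00 := congrFun (congrFun e4 0) 0
      simp only [Matrix.smul_apply, Matrix.one_apply_eq, smul_eq_mul, mul_one,
        Matrix.zero_apply] at h00
      exact mul_self_eq_zero.1 h00
    have hN0 : N = 0 := by rw [hNsc, hc0, zero_smul]
    have hgsc : g.val = lam • 1 := by rw [hgval, hN0, add_zero]
    rcases mul_self_eq_one_iff.1 hlam1 with h1 | h1
    · left; rw [hgsc, h1, one_smul]
    · right; rw [hgsc, h1, neg_smul, one_smul]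
  · exact Or.inr ⟨lam, mu, v, w, hv, hw, hgv, hgw, hlm⟩

/-- eigenvectors for distinct eigenvalues: any other eigenvector is proportional to one of
them -/
lemma eigen_classify {g : SL2 k} {lam mu : k} {v w u : Fin 2 → k}
    (hv : v ≠ 0) (hw : w ≠ 0) (hu : u ≠ 0)
    (hgv : g.val.mulVec v = lam • v) (hgw : g.val.mulVec w = mu • w) (hlm : lam ≠ mu)
    {kap : k} (hgu : g.val.mulVec u = kap • u) :
    (∃ c : k, u = c • v) ∨ (∃ c : k, u = c • w) := by
  have hdv : lam ^ 2 - g.val.trace * lam + 1 = 0 := by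
    have hdet : (g.val - lam • 1).det = 0 := by
      rw [← Matrix.exists_mulVec_eq_zero_iff]
      exact ⟨v, hv, by rw [Matrix.sub_mulVec, hgv, Matrix.smul_mulVec,
        Matrix.one_mulVec, sub_self]⟩
    rw [det_sub_smul, Matrix.SpecialLinearGroup.det_coe] at hdet
    exact hdet
  have hdw : mu ^ 2 - g.val.trace * mu + 1 = 0 := by
    have hdet : (g.val - mu • 1).det = 0 := by
      rw [← Matrix.exists_mulVec_eq_zero_iff]
      exact ⟨w, hw, by rw [Matrix.sub_mulVec, hgw, Matrix.smul_mulVec,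
        Matrix.one_mulVec, sub_self]⟩
    rw [det_sub_smul, Matrix.SpecialLinearGroup.det_coe] at hdet
    exact hdet
  have hsum : lam + mu = g.val.trace := by
    have h := sub_eq_zero.2 (hdv.trans hdw.symm)
    have h2 : (lam - mu) * (lam + mu - g.val.trace) = 0 := by linear_combination hdv - hdw
    rcases mul_eq_zero.1 h2 with h3 | h3
    · exact absurd (sub_eq_zero.1 h3) hlm
    · exact sub_eq_zero.1 h3
  have hprod : lam * mu = 1 := by
    have : lam ^ 2 - (lam + mu) * lam + 1 = 0 := by rw [hsum]; exact hdv
    linear_combination -this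
  set A := g.val - lam • 1 with hA
  set B := g.val - mu • 1 with hB
  have hch := cayley2 g.val
  rw [Matrix.SpecialLinearGroup.det_coe, ← hsum, one_smul] at hch
  have hAB : A * B = 0 := by
    have e1 : A * B = g.val * g.val - mu • g.val - lam • g.val + (lam * mu) • 1 := by
      simp only [hA, hB, sub_mul, mul_sub, Matrix.smul_mul, Matrix.mul_smul,
        Matrix.one_mul, Matrix.mul_one, smul_smul, mul_comm mu lam]
      abel
    rw [e1, hch, hprod, add_smul, one_smul]
    abel
  have hBA : B * A = 0 := by
    have e1 : B * A = g.val * g.val - lam • g.val - mu • g.val + (mu * lam) • 1 := by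
      simp only [hA, hB, sub_mul, mul_sub, Matrix.smul_mul, Matrix.mul_smul,
        Matrix.one_mul, Matrix.mul_one, smul_smul, mul_comm mu lam]
      abel
    rw [e1] 
    rw [mul_comm mu lam, hch, hprod, add_smul, one_smul]
    abel
  have hAv : A.mulVec v = 0 := by
    rw [hA, Matrix.sub_mulVec, hgv, Matrix.smul_mulVec, Matrix.one_mulVec, sub_self]
  have hBw : B.mulVec w = 0 := by
    rw [hB, Matrix.sub_mulVec, hgw, Matrix.smul_mulVec, Matrix.one_mulVec, sub_self]
  have hAw : A.mulVec w = (mu - lam) • w := by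
    rw [hA, Matrix.sub_mulVec, hgw, Matrix.smul_mulVec, Matrix.one_mulVec, sub_smul]
  have hBv : B.mulVec v = (lam - mu) • v := by
    rw [hB, Matrix.sub_mulVec, hgv, Matrix.smul_mulVec, Matrix.one_mulVec, sub_smul]
  have hAne : A ≠ 0 := by
    intro h
    rw [h, Matrix.zero_mulVec] at hAw
    exact hw (by simpa [smul_eq_zero, sub_eq_zero, (Ne.symm hlm)] using hAw.symm)
  have hBne : B ≠ 0 := by
    intro h
    rw [h, Matrix.zero_mulVec] at hBv
    exact hv (by simpa [smul_eq_zero, sub_eq_zero, hlm] using hBv.symm)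
  have hBu : B.mulVec u = (kap - mu) • u := by
    rw [hB, Matrix.sub_mulVec, hgu, Matrix.smul_mulVec, Matrix.one_mulVec, sub_smul]
  have hAu : A.mulVec u = (kap - lam) • u := by
    rw [hA, Matrix.sub_mulVec, hgu, Matrix.smul_mulVec, Matrix.one_mulVec, sub_smul]
  by_cases hkm : kap = mu
  · -- u proportional to w
    right
    have hABu : B.mulVec ((kap - lam) • u) = 0 := by
      rw [← hAu, Matrix.mulVec_mulVec, hBA, Matrix.zero_mulVec]
    obtain ⟨c, hc⟩ := kernel_unique hBne hw hBw hABu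
    have hkl : kap - lam ≠ 0 := sub_ne_zero.2 (hkm ▸ (Ne.symm hlm))
    refine ⟨(kap - lam)⁻¹ * c, ?_⟩
    have := congrArg (fun x => (kap - lam)⁻¹ • x) hc
    simpa [smul_smul, inv_mul_cancel₀ hkl] using this
  · -- u proportional to v
    left
    have hBAu : A.mulVec ((kap - mu) • u) = 0 := by
      rw [← hBu, Matrix.mulVec_mulVec, hAB, Matrix.zero_mulVec]
    obtain ⟨c, hc⟩ := kernel_unique hAne hv hAv hBAu
    have hkm' : kap - mu ≠ 0 := sub_ne_zero.2 hkm
    refine ⟨(kap - mu)⁻¹ * c, ?_⟩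
    have := congrArg (fun x => (kap - mu)⁻¹ • x) hc
    simpa [smul_smul, inv_mul_cancel₀ hkm'] using this

lemma eigen_indep {g : SL2 k} {lam mu : k} {v w : Fin 2 → k} (hw : w ≠ 0)
    (hgv : g.val.mulVec v = lam • v) (hgw : g.val.mulVec w = mu • w) (hlm : lam ≠ mu) :
    ∀ c : k, w ≠ c • v := by
  intro c hc
  have hc0 : c ≠ 0 ∧ v ≠ 0 := smul_ne_zero_iff.1 (hc ▸ hw)
  rw [hc, Matrix.mulVec_smul, hgv] at hgw
  have e1 : (c * lam - mu * c) • v = 0 := by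
    rw [sub_smul, ← smul_smul, ← smul_smul, hgw, sub_self]
  rcases smul_eq_zero.1 e1 with h | h
  · have h2 : c * (lam - mu) = 0 := by linear_combination h
    rcases mul_eq_zero.1 h2 with h3 | h3
    · exact hc0.1 h3
    · exact hlm (sub_eq_zero.1 h3)
  · exact hc0.2 h

end AlgClosed


/-! ### projective line -/

variable (k) in
instance PLSetoid : Setoid {v : Fin 2 → k // v ≠ 0} where
  r v w := ∃ c : k, c ≠ 0 ∧ w.1 = c • v.1
  iseqv := by
    constructor
    · exact fun v => ⟨1, one_ne_zero, (one_smul _ _).symm⟩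
    · rintro v w ⟨c, hc, h⟩
      exact ⟨c⁻¹, inv_ne_zero hc, by rw [h, smul_smul, inv_mul_cancel₀ hc, one_smul]⟩
    · rintro u v w ⟨c, hc, h⟩ ⟨d, hd, h2⟩
      exact ⟨d * c, mul_ne_zero hd hc, by rw [h2, h, smul_smul]⟩

variable (k) in
def PL : Type _ := Quotient (PLSetoid k)

def PL.mk (v : Fin 2 → k) (hv : v ≠ 0) : PL k := Quotient.mk (PLSetoid k) ⟨v, hv⟩

lemma PL.ind {motive : PL k → Prop} (h : ∀ (v : Fin 2 → k) (hv : v ≠ 0), motive (PL.mk v hv))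
    (x : PL k) : motive x := by
  induction x using Quotient.inductionOn with
  | h v => exact h v.1 v.2

lemma PL.mk_eq_mk {v w : Fin 2 → k} {hv : v ≠ 0} {hw : w ≠ 0} :
    PL.mk v hv = PL.mk w hw ↔ ∃ c : k, c ≠ 0 ∧ w = c • v := by
  constructor
  · intro h
    exact Quotient.exact h
  · intro h
    exact Quotient.sound h

def PL.smulAux (g : SL2 k) : PL k → PL k :=
  Quotient.map (fun v => ⟨g.val.mulVec v.1, mulVec_sl2_ne_zero g v.2⟩)
    (by rintro ⟨v, hv⟩ ⟨w, hw⟩ ⟨c, hc, h⟩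
        refine ⟨c, hc, ?_⟩
        show g.val.mulVec w = c • g.val.mulVec v
        rw [show w = c • v from h, Matrix.mulVec_smul])

instance PLAction : MulAction (Matrix.SpecialLinearGroup (Fin 2) k) (PL k) where
  smul := PL.smulAux
  one_smul := by
    intro x
    induction x using PL.ind with
    | h v hv =>
      show PL.smulAux 1 (PL.mk v hv) = PL.mk v hv
      apply Quotient.sound
      refine ⟨1, one_ne_zero, ?_⟩
      show v = (1:k) • ((1 : Matrix.SpecialLinearGroup (Fin 2) k).val.mulVec v)
      rw [Matrix.SpecialLinearGroup.coe_one, Matrix.one_mulVec, one_smul]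
  mul_smul := by
    intro g h x
    induction x using PL.ind with
    | h v hv =>
      show PL.smulAux (g * h) (PL.mk v hv) = PL.smulAux g (PL.smulAux h (PL.mk v hv))
      apply Quotient.sound
      refine ⟨1, one_ne_zero, ?_⟩
      show g.val.mulVec (h.val.mulVec v) = (1:k) • ((g * h).val.mulVec v)
      rw [one_smul, Matrix.SpecialLinearGroup.coe_mul, Matrix.mulVec_mulVec]

lemma PL.smul_mk (g : Matrix.SpecialLinearGroup (Fin 2) k) (v : Fin 2 → k) (hv : v ≠ 0) :
    g • PL.mk v hv = PL.mk (g.val.mulVec v) (mulVec_sl2_ne_zero g hv) := rfl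

lemma PL.smul_fixed_iff (g : Matrix.SpecialLinearGroup (Fin 2) k) (v : Fin 2 → k) (hv : v ≠ 0) :
    g • PL.mk v hv = PL.mk v hv ↔ ∃ c : k, g.val.mulVec v = c • v := by
  rw [PL.smul_mk, PL.mk_eq_mk]
  constructor
  · rintro ⟨c, hc, h⟩
    have h2 := congrArg (fun x => c⁻¹ • x) h
    simp only [smul_smul, inv_mul_cancel₀ hc, one_smul] at h2
    exact ⟨c⁻¹, h2.symm⟩
  · rintro ⟨c, h⟩
    have hc : c ≠ 0 := eigen_nonzero hv h
    exact ⟨c⁻¹, inv_ne_zero hc, by rw [h, smul_smul, inv_mul_cancel₀ hc, one_smul]⟩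

/-- scalars act trivially -/
lemma PL.neg_one_smul (g : Matrix.SpecialLinearGroup (Fin 2) k) (hg : g.val = 1 ∨ g.val = -1)
    (x : PL k) : g • x = x := by
  induction x using PL.ind with
  | h v hv =>
    rw [PL.smul_fixed_iff]
    rcases hg with h | h
    · exact ⟨1, by rw [h, Matrix.one_mulVec, one_smul]⟩
    · exact ⟨-1, by rw [h, Matrix.neg_mulVec, Matrix.one_mulVec, neg_smul, one_smul]⟩

/-- a non-scalar element of order prime to char has exactly two fixed points -/
lemma PL.two_fixed_points [IsAlgClosed k] {g : Matrix.SpecialLinearGroup (Fin 2) k} {m : ℕ}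
    (hm : g ^ m = 1) (hmk : (m : k) ≠ 0) (h1 : g.val ≠ 1) (h2 : g.val ≠ -1) :
    ∃ x y : PL k, x ≠ y ∧ {z : PL k | g • z = z} = {x, y} := by
  rcases scalar_or_distinct g hm hmk with hsc | ⟨lam, mu, v, w, hv, hw, hgv, hgw, hlm⟩
  · rcases hsc with h | h
    · exact absurd h h1
    · exact absurd h h2
  refine ⟨PL.mk v hv, PL.mk w hw, ?_, ?_⟩
  · intro h
    obtain ⟨c, hc, h⟩ := PL.mk_eq_mk.1 h
    exact eigen_indep hw hgv hgw hlm c h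
  · ext z
    induction z using PL.ind with
    | h u hu =>
      simp only [Set.mem_setOf_eq, Set.mem_insert_iff, Set.mem_singleton_iff]
      constructor
      · intro hfix
        obtain ⟨c, hc⟩ := (PL.smul_fixed_iff g u hu).1 hfix
        rcases eigen_classify hv hw hu hgv hgw hlm hc with ⟨c2, h⟩ | ⟨c2, h⟩
        · left
          have hc2 : c2 ≠ 0 := by
            intro h0
            exact hu (by rw [h, h0, zero_smul])
          rw [PL.mk_eq_mk]
          exact ⟨c2⁻¹, inv_ne_zero hc2, by rw [h, smul_smul, inv_mul_cancel₀ hc2, one_smul]⟩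
        · right
          have hc2 : c2 ≠ 0 := by
            intro h0
            exact hu (by rw [h, h0, zero_smul])
          rw [PL.mk_eq_mk]
          exact ⟨c2⁻¹, inv_ne_zero hc2, by rw [h, smul_smul, inv_mul_cancel₀ hc2, one_smul]⟩
      · intro hz
        rcases hz with h | h
        · rw [h, PL.smul_fixed_iff]
          exact ⟨lam, hgv⟩
        · rw [h, PL.smul_fixed_iff]
          exact ⟨mu, hgw⟩


/-! ### trace-two nilpotency -/

lemma nil_of_trace_two {g : SL2 k} (htr : g.val.trace = 2) :
    (g.val - 1) * (g.val - 1) = 0 := by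
  have hch := cayley2 g.val
  rw [htr, Matrix.SpecialLinearGroup.det_coe, one_smul] at hch
  have h2 : (2:k) • g.val = g.val + g.val := two_smul k g.val
  calc (g.val - 1) * (g.val - 1) = g.val * g.val - (g.val + g.val) + 1 := by noncomm_ring
    _ = 0 := by rw [← h2, hch]; abel

/-! ### part 1 : subgroups containing a unipotent -/

def E12 : Matrix (Fin 2) (Fin 2) k := !![0, 1; 0, 0]
def E21 : Matrix (Fin 2) (Fin 2) k := !![0, 0; 1, 0]
def F12 (x : k) : Matrix (Fin 2) (Fin 2) k := 1 + x • E12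
def F21 (x : k) : Matrix (Fin 2) (Fin 2) k := 1 + x • E21

lemma F12_eq (x : k) : F12 x = !![1, x; 0, 1] := by
  ext i j
  fin_cases i <;> fin_cases j <;>
    simp [F12, E12, Matrix.one_apply]

lemma F21_eq (x : k) : F21 x = !![1, 0; x, 1] := by
  ext i j
  fin_cases i <;> fin_cases j <;>
    simp [F21, E21, Matrix.one_apply]

/-- explicit Bruhat-type decomposition -/
lemma decomp_lemma {n : Matrix (Fin 2) (Fin 2) k} (hdet : n.det = 1) (hc : n 1 0 ≠ 0) :
    n = F12 ((n 0 0 - 1) / n 1 0) * F21 (n 1 0) * F12 ((n 1 1 - 1) / n 1 0) := by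
  have hd : n 0 0 * n 1 1 - n 0 1 * n 1 0 = 1 := by
    rw [← Matrix.det_fin_two]; exact hdet
  rw [F12_eq, F21_eq, F12_eq]
  ext i j
  fin_cases i <;> fin_cases j
  · simp [Matrix.mul_apply, Fin.sum_univ_two]
    field_simp
    ring
  · simp [Matrix.mul_apply, Fin.sum_univ_two]
    field_simp
    linear_combination -hd
  · simp [Matrix.mul_apply, Fin.sum_univ_two]
  · simp [Matrix.mul_apply, Fin.sum_univ_two]
    field_simp
    ring

lemma part1 (p : ℕ) [Fact p.Prime] (S : Subgroup (Matrix.SpecialLinearGroup (Fin 2) (ZMod p)))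
    {u : Matrix.SpecialLinearGroup (Fin 2) (ZMod p)} (hu : u ∈ S)
    (htr : u.val.trace = 2) (hu1 : u ≠ 1) :
    (∃ v : Fin 2 → ZMod p, v ≠ 0 ∧ ∀ h ∈ S, ∃ c : ZMod p, h.val.mulVec v = c • v) ∨ S = ⊤ := by
  set N := u.val - 1 with hNdef
  have hN0 : N ≠ 0 := by
    intro h
    exact hu1 (Subtype.ext (by rwa [hNdef, sub_eq_zero] at h))
  have hNN : N * N = 0 := nil_of_trace_two htr
  have htrN : N.trace = 0 := by
    rw [hNdef, Matrix.trace_sub, htr, Matrix.trace_one]; norm_num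
  have hdetN : N.det = 0 := by
    have : N.det * N.det = 0 := by rw [← Matrix.det_mul, hNN, Matrix.det_zero]
    exact mul_self_eq_zero.1 this
  obtain ⟨v, hv, hNv⟩ := Matrix.exists_mulVec_eq_zero_iff.2 hdetN
  have huval : u.val = 1 + N := by rw [hNdef]; abel
  by_cases hcase : ∀ h ∈ S, ∃ c : ZMod p, h.val.mulVec v = c • v
  · exact Or.inl ⟨v, hv, hcase⟩
  right
  push_neg at hcase
  obtain ⟨h₁, hh₁S, hh₁⟩ := hcase
  set v' := h₁.val.mulVec v with hv'def
  have hv' : v' ≠ 0 := mulVec_sl2_ne_zero h₁ hv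
  have hcross : v 0 * v' 1 - v 1 * v' 0 ≠ 0 := by
    intro h
    obtain ⟨c, hc⟩ := prop_of_cross hv (sub_eq_zero.1 h)
    exact hh₁ c hc
  set A := h₁.val with hAdef
  set Ainv := (h₁⁻¹).val with hAinvdef
  have hAA : A * Ainv = 1 := by
    rw [hAdef, hAinvdef, ← Matrix.SpecialLinearGroup.coe_mul, mul_inv_cancel,
      Matrix.SpecialLinearGroup.coe_one]
  have hAA' : Ainv * A = 1 := by
    rw [hAdef, hAinvdef, ← Matrix.SpecialLinearGroup.coe_mul, inv_mul_cancel,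
      Matrix.SpecialLinearGroup.coe_one]
  set u' := h₁ * u * h₁⁻¹ with hu'def
  have hu'S : u' ∈ S := S.mul_mem (S.mul_mem hh₁S hu) (S.inv_mem hh₁S)
  set N' := u'.val - 1 with hN'def
  have hu'val : u'.val = A * u.val * Ainv := by
    rw [hu'def, Matrix.SpecialLinearGroup.coe_mul, Matrix.SpecialLinearGroup.coe_mul]
  have hN'eq : N' = A * N * Ainv := by
    rw [hN'def, hu'val, hNdef]
    calc A * u.val * Ainv - 1 = A * u.val * Ainv - A * Ainv := by rw [hAA]
      _ = A * (u.val - 1) * Ainv := by noncomm_ring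
  have hN'N' : N' * N' = 0 := by
    rw [hN'eq]
    calc A * N * Ainv * (A * N * Ainv) = A * N * (Ainv * A) * N * Ainv := by noncomm_ring
      _ = A * (N * N) * Ainv := by rw [hAA']; noncomm_ring
      _ = 0 := by rw [hNN, Matrix.mul_zero, Matrix.zero_mul]
  have hN'0 : N' ≠ 0 := by
    intro h
    apply hN0
    have : Ainv * N' * A = N := by
      rw [hN'eq]
      calc Ainv * (A * N * Ainv) * A = (Ainv * A) * N * (Ainv * A) := by noncomm_ring
        _ = N := by rw [hAA']; noncomm_ring
    rw [← this, h, Matrix.mul_zero, Matrix.zero_mul]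
  have hN'v' : N'.mulVec v' = 0 := by
    have e0 : v' = A.mulVec v := rfl
    rw [hN'eq, e0, Matrix.mulVec_mulVec]
    calc (A * N * Ainv * A).mulVec v = (A * N).mulVec v := by rw [show A * N * Ainv * A = A * N * (Ainv * A) from by noncomm_ring, hAA', Matrix.mul_one]
      _ = A.mulVec (N.mulVec v) := by rw [← Matrix.mulVec_mulVec]
      _ = 0 := by rw [hNv, Matrix.mulVec_zero]
  -- eigen-relations between N, N' and v, v'
  have hNNv' : N.mulVec (N.mulVec v') = 0 := by
    rw [Matrix.mulVec_mulVec, hNN, Matrix.zero_mulVec]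
  obtain ⟨a, ha⟩ := kernel_unique hN0 hv hNv hNNv'
  have ha0 : a ≠ 0 := by
    intro h
    rw [h, zero_smul] at ha
    exact hN0 (eq_zero_of_two_kernel hNv ha hcross)
  have hN'N'v : N'.mulVec (N'.mulVec v) = 0 := by
    rw [Matrix.mulVec_mulVec, hN'N', Matrix.zero_mulVec]
  obtain ⟨b, hb⟩ := kernel_unique hN'0 hv' hN'v' hN'N'v
  have hb0 : b ≠ 0 := by
    intro h
    rw [h, zero_smul] at hb
    apply hN'0
    apply eq_zero_of_two_kernel hb hN'v' hcross
  -- the base-change matrix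
  set G : Matrix (Fin 2) (Fin 2) (ZMod p) := !![v 0, v' 0; v 1, v' 1] with hGdef
  set d : ZMod p := v 0 * v' 1 - v 1 * v' 0 with hddef
  set Ginv : Matrix (Fin 2) (Fin 2) (ZMod p) := d⁻¹ • !![v' 1, -(v' 0); -(v 1), v 0]
    with hGinvdef
  have hGGinv : G * Ginv = 1 := by
    rw [hGdef, hGinvdef]
    ext i j
    fin_cases i <;> fin_cases j <;>
      · simp [Matrix.mul_apply, Fin.sum_univ_two, Matrix.one_apply]
        field_simp
        ring
  have hGinvG : Ginv * G = 1 := by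
    rw [hGdef, hGinvdef]
    ext i j
    fin_cases i <;> fin_cases j <;>
      · simp [Matrix.mul_apply, Fin.sum_univ_two, Matrix.one_apply]
        field_simp
        ring
  -- column relations
  have hNG : N * G = G * (a • E12) := by
    have c0 : ∀ i, N i 0 * v 0 + N i 1 * v 1 = 0 := fun i => by rw [← mulVec2, hNv]; rfl
    have c1 : ∀ i, N i 0 * v' 0 + N i 1 * v' 1 = a * v i := fun i => by
      rw [← mulVec2, ha]; rfl
    ext i j
    fin_cases i <;> fin_cases j
    · simp [hGdef, E12, Matrix.mul_apply, Fin.sum_univ_two]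
      linear_combination c0 0
    · simp [hGdef, E12, Matrix.mul_apply, Fin.sum_univ_two]
      linear_combination c1 0
    · simp [hGdef, E12, Matrix.mul_apply, Fin.sum_univ_two]
      linear_combination c0 1
    · simp [hGdef, E12, Matrix.mul_apply, Fin.sum_univ_two]
      linear_combination c1 1
  have hN'G : N' * G = G * (b • E21) := by
    have c0 : ∀ i, N' i 0 * v 0 + N' i 1 * v 1 = b * v' i := fun i => by
      rw [← mulVec2, hb]; rfl
    have c1 : ∀ i, N' i 0 * v' 0 + N' i 1 * v' 1 = 0 := fun i => by
      rw [← mulVec2, hN'v']; rfl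
    ext i j
    fin_cases i <;> fin_cases j
    · simp [hGdef, E21, Matrix.mul_apply, Fin.sum_univ_two]
      linear_combination c0 0
    · simp [hGdef, E21, Matrix.mul_apply, Fin.sum_univ_two]
      linear_combination c1 0
    · simp [hGdef, E21, Matrix.mul_apply, Fin.sum_univ_two]
      linear_combination c0 1
    · simp [hGdef, E21, Matrix.mul_apply, Fin.sum_univ_two]
      linear_combination c1 1
  -- membership families
  have E1mem : ∀ s : ZMod p, ∃ g' ∈ S, g'.val = 1 + s • N := by
    intro s
    refine ⟨u ^ s.val, S.pow_mem hu _, ?_⟩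
    rw [Matrix.SpecialLinearGroup.coe_pow, huval, one_add_nil_pow hNN, ZMod.natCast_val,
      ZMod.cast_id]
  have E2mem : ∀ s : ZMod p, ∃ g' ∈ S, g'.val = 1 + s • N' := by
    intro s
    refine ⟨u' ^ s.val, S.pow_mem hu'S _, ?_⟩
    have hu'val2 : u'.val = 1 + N' := by rw [hN'def]; abel
    rw [Matrix.SpecialLinearGroup.coe_pow, hu'val2, one_add_nil_pow hN'N', ZMod.natCast_val,
      ZMod.cast_id]
  -- conjugation formulas
  have hE1G : ∀ s : ZMod p, (1 + s • N) * G = G * F12 (s * a) := by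
    intro s
    rw [F12, Matrix.add_mul, Matrix.one_mul, Matrix.mul_add, Matrix.mul_one,
      Matrix.smul_mul, hNG, Matrix.mul_smul, Matrix.mul_smul, smul_smul]
  have hE2G : ∀ s : ZMod p, (1 + s • N') * G = G * F21 (s * b) := by
    intro s
    rw [F21, Matrix.add_mul, Matrix.one_mul, Matrix.mul_add, Matrix.mul_one,
      Matrix.smul_mul, hN'G, Matrix.mul_smul, Matrix.mul_smul, smul_smul]
  -- cancellation
  have hcancel : ∀ M1 M2 : Matrix (Fin 2) (Fin 2) (ZMod p), M1 * G = M2 * G → M1 = M2 := by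
    intro M1 M2 h
    have h2 := congrArg (fun X => X * Ginv) h
    simpa only [Matrix.mul_assoc, hGGinv, Matrix.mul_one] using h2
  have hsplit : ∀ M1 M2 : Matrix (Fin 2) (Fin 2) (ZMod p),
      Ginv * (M1 * M2) * G = (Ginv * M1 * G) * (Ginv * M2 * G) := by
    intro M1 M2
    calc Ginv * (M1 * M2) * G = Ginv * M1 * 1 * M2 * G := by noncomm_ring
      _ = Ginv * M1 * (G * Ginv) * M2 * G := by rw [hGGinv]
      _ = (Ginv * M1 * G) * (Ginv * M2 * G) := by noncomm_ring
  have hdetfact : ∀ m : Matrix.SpecialLinearGroup (Fin 2) (ZMod p),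
      (Ginv * m.val * G).det = 1 := by
    intro m
    have h1 : Ginv.det * G.det = 1 := by
      rw [← Matrix.det_mul, hGinvG, Matrix.det_one]
    rw [Matrix.det_mul, Matrix.det_mul, Matrix.SpecialLinearGroup.det_coe]
    calc Ginv.det * 1 * G.det = Ginv.det * G.det := by ring
      _ = 1 := h1
  -- the key step
  have key : ∀ m : Matrix.SpecialLinearGroup (Fin 2) (ZMod p),
      (Ginv * m.val * G) 1 0 ≠ 0 → m ∈ S := by
    intro m hm10
    set n := Ginv * m.val * G with hndef
    have hmG : m.val * G = G * n := by
      rw [hndef]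
      calc m.val * G = (G * Ginv) * m.val * G := by rw [hGGinv, Matrix.one_mul]
        _ = G * (Ginv * m.val * G) := by noncomm_ring
    have hdetn : n.det = 1 := hdetfact m
    have hFform := decomp_lemma hdetn hm10
    obtain ⟨w1, hw1S, hw1⟩ := E1mem (((n 0 0 - 1) / n 1 0) * a⁻¹)
    obtain ⟨w2, hw2S, hw2⟩ := E2mem ((n 1 0) * b⁻¹)
    obtain ⟨w3, hw3S, hw3⟩ := E1mem (((n 1 1 - 1) / n 1 0) * a⁻¹)
    have hx1 : ((n 0 0 - 1) / n 1 0 * a⁻¹) * a = (n 0 0 - 1) / n 1 0 := by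
      rw [mul_assoc, inv_mul_cancel₀ ha0, mul_one]
    have hx2 : (n 1 0 * b⁻¹) * b = n 1 0 := by
      rw [mul_assoc, inv_mul_cancel₀ hb0, mul_one]
    have hx3 : ((n 1 1 - 1) / n 1 0 * a⁻¹) * a = (n 1 1 - 1) / n 1 0 := by
      rw [mul_assoc, inv_mul_cancel₀ ha0, mul_one]
    have hprod : (w1 * w2 * w3).val * G = m.val * G := by
      rw [Matrix.SpecialLinearGroup.coe_mul, Matrix.SpecialLinearGroup.coe_mul,
        hw1, hw2, hw3]
      calc (1 + ((n 0 0 - 1) / n 1 0 * a⁻¹) • N) * (1 + (n 1 0 * b⁻¹) • N')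
            * (1 + ((n 1 1 - 1) / n 1 0 * a⁻¹) • N) * G
          = (1 + ((n 0 0 - 1) / n 1 0 * a⁻¹) • N) * (1 + (n 1 0 * b⁻¹) • N')
            * ((1 + ((n 1 1 - 1) / n 1 0 * a⁻¹) • N) * G) := by
            rw [Matrix.mul_assoc]
        _ = (1 + ((n 0 0 - 1) / n 1 0 * a⁻¹) • N) * (1 + (n 1 0 * b⁻¹) • N')
            * (G * F12 ((n 1 1 - 1) / n 1 0 * a⁻¹ * a)) := by rw [hE1G]
        _ = (1 + ((n 0 0 - 1) / n 1 0 * a⁻¹) • N) * ((1 + (n 1 0 * b⁻¹) • N') * G)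
            * F12 ((n 1 1 - 1) / n 1 0 * a⁻¹ * a) := by noncomm_ring
        _ = (1 + ((n 0 0 - 1) / n 1 0 * a⁻¹) • N) * (G * F21 (n 1 0 * b⁻¹ * b))
            * F12 ((n 1 1 - 1) / n 1 0 * a⁻¹ * a) := by rw [hE2G]
        _ = ((1 + ((n 0 0 - 1) / n 1 0 * a⁻¹) • N) * G) * F21 (n 1 0 * b⁻¹ * b)
            * F12 ((n 1 1 - 1) / n 1 0 * a⁻¹ * a) := by noncomm_ring
        _ = (G * F12 ((n 0 0 - 1) / n 1 0 * a⁻¹ * a)) * F21 (n 1 0 * b⁻¹ * b)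
            * F12 ((n 1 1 - 1) / n 1 0 * a⁻¹ * a) := by rw [hE1G]
        _ = G * (F12 ((n 0 0 - 1) / n 1 0 * a⁻¹ * a) * F21 (n 1 0 * b⁻¹ * b)
            * F12 ((n 1 1 - 1) / n 1 0 * a⁻¹ * a)) := by noncomm_ring
        _ = G * (F12 ((n 0 0 - 1) / n 1 0) * F21 (n 1 0) * F12 ((n 1 1 - 1) / n 1 0)) := by
            rw [hx1, hx2, hx3]
        _ = G * n := by rw [← hFform]
        _ = m.val * G := by
            rw [hndef]
            calc G * (Ginv * m.val * G) = (G * Ginv) * m.val * G := by noncomm_ring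
              _ = m.val * G := by rw [hGGinv, Matrix.one_mul]
    have heq : w1 * w2 * w3 = m := Subtype.ext (hcancel _ _ hprod)
    rw [← heq]
    exact S.mul_mem (S.mul_mem hw1S hw2S) hw3S
  -- conclude
  rw [Subgroup.eq_top_iff']
  intro m
  by_cases hm10 : (Ginv * m.val * G) 1 0 = 0
  · obtain ⟨w4, hw4S, hw4⟩ := E2mem b⁻¹
    have hw4G : Ginv * w4.val * G = F21 1 := by
      rw [hw4]
      have h2 := hE2G b⁻¹
      rw [inv_mul_cancel₀ hb0] at h2
      calc Ginv * (1 + b⁻¹ • N') * G = Ginv * ((1 + b⁻¹ • N') * G) := by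
            rw [Matrix.mul_assoc]
        _ = Ginv * (G * F21 1) := by rw [h2]
        _ = (Ginv * G) * F21 1 := by rw [Matrix.mul_assoc]
        _ = F21 1 := by rw [hGinvG, Matrix.one_mul]
    have hn2 : (Ginv * (m * w4).val * G) 1 0 ≠ 0 := by
      rw [Matrix.SpecialLinearGroup.coe_mul, hsplit, hw4G]
      set n := Ginv * m.val * G with hndef
      have hdetn : n.det = 1 := hdetfact m
      have hn11 : n 1 1 ≠ 0 := by
        intro h
        rw [Matrix.det_fin_two, h, hm10] at hdetn
        simp at hdetn
      have : (n * F21 (1 : ZMod p)) 1 0 = n 1 1 := by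
        rw [F21_eq]
        rw [Matrix.mul_apply, Fin.sum_univ_two]
        simp [hm10]
      rw [this]
      exact hn11
    have hmem2 := key (m * w4) hn2
    have : m = (m * w4) * w4⁻¹ := by group
    rw [this]
    exact S.mul_mem hmem2 (S.inv_mem hw4S)
  · exact key m hm10



/-! ### more helpers -/

lemma eigenval_pow_eq_one {g : SL2 k} {v : Fin 2 → k} {lam : k} {m : ℕ} (hv : v ≠ 0)
    (h : g.val.mulVec v = lam • v) (hm : g ^ m = 1) : lam ^ m = 1 := by
  have h1 : (g.val ^ m).mulVec v = lam ^ m • v := eigen_pow h m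
  rw [← Matrix.SpecialLinearGroup.coe_pow, hm, Matrix.SpecialLinearGroup.coe_one,
    Matrix.one_mulVec] at h1
  have h2 : (lam ^ m - 1) • v = 0 := by rw [sub_smul, one_smul, ← h1, sub_self]
  rcases smul_eq_zero.1 h2 with h3 | h3
  · linear_combination h3
  · exact absurd h3 hv

lemma trace_two_of_pow_p [IsAlgClosed k] (p : ℕ) [Fact p.Prime] [CharP k p] {g : SL2 k}
    (hg : g ^ p = 1) : g.val.trace = 2 := by
  obtain ⟨lam, mu, hprod, hsum, ⟨v, hv, hgv⟩, ⟨w, hw, hgw⟩⟩ := exists_eigen_pair g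
  have hl : lam = 1 := by
    have h1 : lam ^ p = 1 := eigenval_pow_eq_one hv hgv hg
    have h2 : (lam - 1) ^ p = 0 := by
      rw [sub_pow_char, h1, one_pow, sub_self]
    have h3 := pow_eq_zero_iff (n := p) (Nat.Prime.ne_zero Fact.out) |>.1 h2
    exact sub_eq_zero.1 h3
  have hm : mu = 1 := by
    have h1 : mu ^ p = 1 := eigenval_pow_eq_one hw hgw hg
    have h2 : (mu - 1) ^ p = 0 := by
      rw [sub_pow_char, h1, one_pow, sub_self]
    have h3 := pow_eq_zero_iff (n := p) (Nat.Prime.ne_zero Fact.out) |>.1 h2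
    exact sub_eq_zero.1 h3
  rw [← hsum, hl, hm]
  norm_num

/-- an element of SL2 fixing every point of the projective line is ±1 -/
lemma scalar_of_fix_all {g : SL2 k} (hfix : ∀ x : PL k, g • x = x) :
    g.val = 1 ∨ g.val = -1 := by
  have h0 : (![1, 0] : Fin 2 → k) ≠ 0 := by
    intro h
    have := congrFun h 0
    simp at this
  have h1 : (![0, 1] : Fin 2 → k) ≠ 0 := by
    intro h
    have := congrFun h 1
    simp at this
  have h2 : (![1, 1] : Fin 2 → k) ≠ 0 := by
    intro h
    have := congrFun h 0
    simp at this
  obtain ⟨c0, hc0⟩ := (PL.smul_fixed_iff g _ h0).1 (hfix (PL.mk ![1, 0] h0))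
  obtain ⟨c1, hc1⟩ := (PL.smul_fixed_iff g _ h1).1 (hfix (PL.mk ![0, 1] h1))
  obtain ⟨c2, hc2⟩ := (PL.smul_fixed_iff g _ h2).1 (hfix (PL.mk ![1, 1] h2))
  have e00 : g.val 0 0 = c0 := by
    have := congrFun hc0 0
    rw [mulVec2] at this
    simpa using this
  have e10 : g.val 1 0 = 0 := by
    have := congrFun hc0 1
    rw [mulVec2] at this
    simpa using this
  have e01 : g.val 0 1 = 0 := by
    have := congrFun hc1 0
    rw [mulVec2] at this
    simpa using this
  have e11 : g.val 1 1 = c1 := by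
    have := congrFun hc1 1
    rw [mulVec2] at this
    simpa using this
  have f0 : g.val 0 0 + g.val 0 1 = c2 := by
    have := congrFun hc2 0
    rw [mulVec2] at this
    simpa using this
  have f1 : g.val 1 0 + g.val 1 1 = c2 := by
    have := congrFun hc2 1
    rw [mulVec2] at this
    simpa using this
  have hcc : c0 = c1 := by
    rw [e00, e01] at f0
    rw [e10, e11] at f1
    rw [add_zero] at f0
    rw [zero_add] at f1
    rw [f0, f1]
  have hdet := g.prop
  rw [Matrix.det_fin_two, e00, e01, e10, e11, hcc] at hdet
  have hc1sq : c1 * c1 = 1 := by linear_combination hdet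
  have hgform : g.val = c1 • 1 := by
    ext i j
    fin_cases i <;> fin_cases j <;>
      simp [Matrix.one_apply, e00, e01, e10, e11, hcc]
  rcases mul_self_eq_one_iff.1 hc1sq with h | h
  · left; rw [hgform, h, one_smul]
  · right; rw [hgform, h, neg_smul, one_smul]

lemma PL.exists_rep (x : PL k) : ∃ (v : Fin 2 → k) (hv : v ≠ 0), x = PL.mk v hv := by
  induction x using PL.ind with
  | h v hv => exact ⟨v, hv, rfl⟩

/-! ### the Diophantine endgame -/

lemma dioph3 {Nn o1 o2 o3 e3 : ℕ} (h1 : o1 * 2 = Nn) (h2 : o2 * 3 = Nn)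
    (h3 : o3 * e3 = Nn) (ho2 : 3 ≤ o2) (ho3 : 3 ≤ o3)
    (hsum : o1 + o2 + o3 = Nn + 2) : Nn = 12 ∨ Nn = 24 ∨ Nn = 60 := by
  have h6 : 6 * o3 = Nn + 12 := by omega
  have hdvd : o3 ∣ 12 := by
    have d1 : o3 ∣ Nn := ⟨e3, h3.symm⟩
    have d2 : o3 ∣ Nn + 12 := ⟨6, by omega⟩
    have d3 := Nat.dvd_sub d2 d1
    simpa using d3
  have hle : o3 ≤ 12 := Nat.le_of_dvd (by norm_num) hdvd
  interval_cases o3 <;> first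
    | omega
    | exact absurd hdvd (by decide)

lemma dioph2 {Nn o1 o2 o3 e2 e3 : ℕ} (h1 : o1 * 2 = Nn) (h2 : o2 * e2 = Nn)
    (h3 : o3 * e3 = Nn) (he2 : 2 ≤ e2) (he3 : 2 ≤ e3)
    (ho2 : 3 ≤ o2) (ho3 : 3 ≤ o3)
    (hsum : o1 + o2 + o3 = Nn + 2) : Nn = 12 ∨ Nn = 24 ∨ Nn = 60 := by
  have key : e2 = 2 ∨ e2 = 3 ∨ e3 = 2 ∨ e3 = 3 := by
    by_contra hcon
    push_neg at hcon
    have he2' : 4 ≤ e2 := by omega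
    have he3' : 4 ≤ e3 := by omega
    have b2 : 4 * o2 ≤ Nn := by
      calc 4 * o2 = o2 * 4 := by ring
        _ ≤ o2 * e2 := Nat.mul_le_mul_left o2 he2'
        _ = Nn := h2
    have b3 : 4 * o3 ≤ Nn := by
      calc 4 * o3 = o3 * 4 := by ring
        _ ≤ o3 * e3 := Nat.mul_le_mul_left o3 he3'
        _ = Nn := h3
    omega
  rcases key with h | h | h | h
  · subst h; omega
  · subst h; exact dioph3 h1 h2 h3 ho2 ho3 hsum
  · subst h; omega
  · subst h
    exact dioph3 h1 h3 h2 ho3 ho2 (by omega)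

lemma dioph {Nn o1 o2 o3 e1 e2 e3 : ℕ} (h1 : o1 * e1 = Nn) (h2 : o2 * e2 = Nn)
    (h3 : o3 * e3 = Nn) (he1 : 2 ≤ e1) (he2 : 2 ≤ e2) (he3 : 2 ≤ e3)
    (ho1 : 3 ≤ o1) (ho2 : 3 ≤ o2) (ho3 : 3 ≤ o3)
    (hsum : o1 + o2 + o3 = Nn + 2) : Nn = 12 ∨ Nn = 24 ∨ Nn = 60 := by
  have key : e1 = 2 ∨ e2 = 2 ∨ e3 = 2 := by
    by_contra hcon
    push_neg at hcon
    have he1' : 3 ≤ e1 := by omega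
    have he2' : 3 ≤ e2 := by omega
    have he3' : 3 ≤ e3 := by omega
    have b1 : 3 * o1 ≤ Nn := by
      calc 3 * o1 = o1 * 3 := by ring
        _ ≤ o1 * e1 := Nat.mul_le_mul_left o1 he1'
        _ = Nn := h1
    have b2 : 3 * o2 ≤ Nn := by
      calc 3 * o2 = o2 * 3 := by ring
        _ ≤ o2 * e2 := Nat.mul_le_mul_left o2 he2'
        _ = Nn := h2
    have b3 : 3 * o3 ≤ Nn := by
      calc 3 * o3 = o3 * 3 := by ring
        _ ≤ o3 * e3 := Nat.mul_le_mul_left o3 he3'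
        _ = Nn := h3
    omega
  rcases key with h | h | h
  · subst h; exact dioph2 h1 h2 h3 he2 he3 ho2 ho3 hsum
  · subst h; exact dioph2 h2 h1 h3 he1 he3 ho1 ho3 (by omega)
  · subst h; exact dioph2 h3 h1 h2 he1 he2 ho1 ho2 (by omega)



/-! ### part 2 : subgroups of order prime to p -/

set_option maxHeartbeats 1000000 in
lemma part2 (p : ℕ) [Fact p.Prime] (H : Subgroup (Matrix.SpecialLinearGroup (Fin 2) (ZMod p)))
    (hpn : ¬ p ∣ Nat.card ↥H) :
    (∀ a b c d : ↥H, ⁅⁅a, b⁆, ⁅c, d⁆⁆ = 1) ∨ Nat.card ↥H ∣ 240 := by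
  classical
  by_contra hcon
  push_neg at hcon
  obtain ⟨hnm, hnd⟩ := hcon
  obtain ⟨a₀, b₀, c₀, d₀, hne₀⟩ := hnm
  set kk := AlgebraicClosure (ZMod p) with hkk
  set φ : ZMod p →+* kk := algebraMap (ZMod p) kk with hφdef
  have hφinj : Function.Injective φ := φ.injective
  set e : Matrix.SpecialLinearGroup (Fin 2) (ZMod p) →* Matrix.SpecialLinearGroup (Fin 2) kk :=
    Matrix.SpecialLinearGroup.map φ with he
  have heval : ∀ g : Matrix.SpecialLinearGroup (Fin 2) (ZMod p), (e g).val = g.val.map φ := by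
    intro g
    rfl
  have heinj : Function.Injective e := by
    intro g h hgh
    apply Subtype.ext
    ext i j
    apply hφinj
    have h2 := congrArg (fun X => X.val i j) hgh
    simpa [heval, Matrix.map_apply] using h2
  set F : ↥H →* Matrix.SpecialLinearGroup (Fin 2) kk := e.comp H.subtype with hF
  have hFval : ∀ h : ↥H, (F h).val = (h : Matrix.SpecialLinearGroup (Fin 2) (ZMod p)).val.map φ :=
    fun h => heval _
  have hFinj : Function.Injective F := heinj.comp Subtype.coe_injective
  -- scalar transfer
  have hmap_one : ∀ M : Matrix (Fin 2) (Fin 2) (ZMod p), M.map φ = 1 ↔ M = 1 := by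
    intro M
    constructor
    · intro h
      ext i j
      apply hφinj
      have h2 := congrArg (fun X => X i j) h
      simp only [Matrix.map_apply] at h2
      rw [h2]
      simp [Matrix.one_apply, apply_ite φ]
    · intro h
      subst h
      ext i j
      simp [Matrix.map_apply, Matrix.one_apply, apply_ite φ]
  have hmap_negone : ∀ M : Matrix (Fin 2) (Fin 2) (ZMod p), M.map φ = -1 ↔ M = -1 := by
    intro M
    constructor
    · intro h
      ext i j
      apply hφinj
      have h2 := congrArg (fun X => X i j) h
      simp only [Matrix.map_apply] at h2
      rw [h2]
      simp [Matrix.one_apply, Matrix.neg_apply, apply_ite φ]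
    · intro h
      subst h
      ext i j
      simp [Matrix.map_apply, Matrix.one_apply, Matrix.neg_apply, apply_ite φ]
  -- action of H on the projective line
  letI actH : MulAction ↥H (PL kk) := MulAction.compHom _ F
  have hsmul : ∀ (h : ↥H) (x : PL kk), h • x = F h • x := fun _ _ => rfl
  set Zc : Subgroup ↥H := (MulAction.toPermHom ↥H (PL kk)).ker with hZcdef
  have hZc_mem : ∀ h : ↥H, h ∈ Zc ↔ ∀ x : PL kk, h • x = x := by
    intro h
    rw [hZcdef, MonoidHom.mem_ker]
    constructor
    · intro hh x
      have h2 := congrArg (fun π : Equiv.Perm (PL kk) => π x) hh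
      simpa using h2
    · intro hh
      ext x
      simpa using hh x
  have hZc_scalar : ∀ h : ↥H, h ∈ Zc ↔
      ((h : Matrix.SpecialLinearGroup (Fin 2) (ZMod p)).val = 1 ∨
       (h : Matrix.SpecialLinearGroup (Fin 2) (ZMod p)).val = -1) := by
    intro h
    rw [hZc_mem]
    constructor
    · intro hfix
      have hsc := scalar_of_fix_all (g := F h) (fun x => by rw [← hsmul]; exact hfix x)
      rcases hsc with h1 | h1
      · left
        rw [← hmap_one, ← hFval]
        exact h1
      · right
        rw [← hmap_negone, ← hFval]
        exact h1
    · intro hsc x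
      rw [hsmul]
      apply PL.neg_one_smul
      rcases hsc with h1 | h1
      · left; rw [hFval, h1, (hmap_one 1).2 rfl]
      · right; rw [hFval, h1, (hmap_negone (-1)).2 rfl]
  -- every nonscalar element has exactly two fixed points
  have fixpair : ∀ h : ↥H, h ∉ Zc →
      ∃ x y : PL kk, x ≠ y ∧ {z : PL kk | h • z = z} = {x, y} := by
    intro h hns
    have hm : F h ^ (orderOf h) = 1 := by rw [← map_pow, pow_orderOf_eq_one, _root_.map_one]
    have hmk : ((orderOf h : ℕ) : kk) ≠ 0 := by
      rw [Ne, CharP.cast_eq_zero_iff kk p]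
      intro hdvd
      exact hpn (hdvd.trans (orderOf_dvd_natCard h))
    have h1 : (F h).val ≠ 1 := by
      intro hval
      apply hns
      rw [hZc_scalar]
      left
      rw [← hmap_one, ← hFval]
      exact hval
    have h2 : (F h).val ≠ -1 := by
      intro hval
      apply hns
      rw [hZc_scalar]
      right
      rw [← hmap_negone, ← hFval]
      exact hval
    obtain ⟨x, y, hxy, hset⟩ := PL.two_fixed_points hm hmk h1 h2
    refine ⟨x, y, hxy, ?_⟩
    rw [← hset]
    ext z
    simp only [Set.mem_setOf_eq]
    rw [hsmul]
  -- the killer : a subgroup K with common eigenvector containing all commutators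
  have killer : ∀ (K : Subgroup ↥H) (v : Fin 2 → kk), v ≠ 0 →
      (∀ x : ↥H, x ∈ K → ∃ c : kk, (F x).val.mulVec v = c • v) →
      (∀ a b : ↥H, ⁅a, b⁆ ∈ K) → False := by
    intro K v hv heig hcm
    apply hne₀
    have hKcomm : ∀ x ∈ K, ∀ y ∈ K, x * y = y * x := by
      intro x hx y hy
      have hlemK := lemK (k := kk) p (S := K.map F) (v := v) hv ?_ ?_
      · have h2 := hlemK (F x) ⟨x, hx, rfl⟩ (F y) ⟨y, hy, rfl⟩
        apply hFinj
        rw [F.map_mul, F.map_mul, h2]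
      · rintro s ⟨w, hwK, rfl⟩
        exact heig w hwK
      · rintro s ⟨w, hwK, rfl⟩ hsp
        have hwp : w ^ p = 1 := by
          apply hFinj
          rw [map_pow, _root_.map_one]
          exact hsp
        have ho : orderOf w ∣ p := orderOf_dvd_of_pow_eq_one hwp
        rcases (Nat.Prime.eq_one_or_self_of_dvd Fact.out _ ho) with h1 | h1
        · have h2 := orderOf_eq_one_iff.1 h1
          rw [h2, _root_.map_one]
        · exfalso
          apply hpn
          have h3 := orderOf_dvd_natCard w
          rwa [h1] at h3
    have h1 : ⁅a₀, b₀⁆ ∈ K := hcm a₀ b₀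
    have h2 : ⁅c₀, d₀⁆ ∈ K := hcm c₀ d₀
    rw [commutatorElement_eq_one_iff_mul_comm]
    exact hKcomm _ h1 _ h2
  -- nonscalar element exists
  have hnonsc : ∃ h : ↥H, h ∉ Zc := by
    by_contra hall
    push_neg at hall
    apply hne₀
    have hcomm : ∀ x y : ↥H, x * y = y * x := by
      intro x y
      apply Subtype.ext
      apply Subtype.ext
      rw [show ((x * y : ↥H) : Matrix.SpecialLinearGroup (Fin 2) (ZMod p)).val
            = (x : Matrix.SpecialLinearGroup (Fin 2) (ZMod p)).val *
              (y : Matrix.SpecialLinearGroup (Fin 2) (ZMod p)).val from rfl,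
          show ((y * x : ↥H) : Matrix.SpecialLinearGroup (Fin 2) (ZMod p)).val
            = (y : Matrix.SpecialLinearGroup (Fin 2) (ZMod p)).val *
              (x : Matrix.SpecialLinearGroup (Fin 2) (ZMod p)).val from rfl]
      rcases (hZc_scalar x).1 (hall x) with h1 | h1 <;>
        rcases (hZc_scalar y).1 (hall y) with h2 | h2 <;>
        rw [h1, h2] <;> noncomm_ring
    rw [commutatorElement_eq_one_iff_mul_comm]
    exact hcomm _ _
  obtain ⟨h₀, hns₀⟩ := hnonsc
  -- the set of fixed points
  set Y : Set (PL kk) := {x | ∃ h : ↥H, h ∉ Zc ∧ h • x = x} with hYdef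
  haveI hZcnormal : Zc.Normal := MonoidHom.normal_ker _
  have hYinv : ∀ (h : ↥H) (x : PL kk), x ∈ Y → h • x ∈ Y := by
    rintro h x ⟨h0, hns, hfix⟩
    refine ⟨h * h0 * h⁻¹, ?_, ?_⟩
    · intro hmem
      apply hns
      have h2 := hZcnormal.conj_mem _ hmem h⁻¹
      have e2 : h⁻¹ * (h * h0 * h⁻¹) * h⁻¹⁻¹ = h0 := by group
      rwa [e2] at h2
    · rw [mul_smul, inv_smul_smul, mul_smul, hfix]
  have hYfin : Y.Finite := by
    have hsub : Y ⊆ ⋃ h : ↥H, {x | h ∉ Zc ∧ h • x = x} := by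
      rintro x ⟨h, hns, hfix⟩
      exact Set.mem_iUnion.2 ⟨h, hns, hfix⟩
    apply Set.Finite.subset _ hsub
    apply Set.finite_iUnion
    intro h
    by_cases hns : h ∈ Zc
    · have : {x : PL kk | h ∉ Zc ∧ h • x = x} = ∅ := by
        ext x
        simp [hns]
      rw [this]
      exact Set.finite_empty
    · obtain ⟨x, y, hxy, hset⟩ := fixpair h hns
      apply Set.Finite.subset ((Set.finite_singleton y).insert x)
      rintro z ⟨_, hz⟩
      have : z ∈ {w : PL kk | h • w = w} := hz
      rwa [hset] at this
  -- action on Y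
  letI actY : MulAction ↥H ↥Y :=
    { smul := fun h x => ⟨h • x.1, hYinv h x.1 x.2⟩
      one_smul := fun x => Subtype.ext (one_smul _ _)
      mul_smul := fun g h x => Subtype.ext (mul_smul g h x.1) }
  have hYsmul : ∀ (h : ↥H) (x : ↥Y), (h • x).1 = h • x.1 := fun _ _ => rfl
  haveI : Fintype ↥Y := hYfin.fintype
  haveI : Finite ↥H := Subtype.finite
  haveI : Fintype ↥H := Fintype.ofFinite ↥H
  haveI hfixfin : ∀ h : ↥H, Fintype (MulAction.fixedBy ↥Y h) := fun h => Fintype.ofFinite _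
  haveI : Fintype (Quotient (MulAction.orbitRel ↥H ↥Y)) := Fintype.ofFinite _
  -- Burnside
  have hburn := MulAction.sum_card_fixedBy_eq_card_orbits_mul_card_group ↥H ↥Y
  set cY := Fintype.card ↥Y with hcY
  set nH := Fintype.card ↥H with hnH
  set r := Fintype.card (Quotient (MulAction.orbitRel ↥H ↥Y)) with hr
  -- fixed point counts
  have hfixcard : ∀ h : ↥H, Fintype.card (MulAction.fixedBy ↥Y h) =
      if h ∈ Zc then cY else 2 := by
    intro h
    by_cases hs : h ∈ Zc
    · rw [if_pos hs]
      have hset : MulAction.fixedBy ↥Y h = Set.univ := by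
        ext x
        simp only [MulAction.mem_fixedBy, Set.mem_univ, iff_true]
        exact Subtype.ext ((hZc_mem h).1 hs x.1)
      calc Fintype.card (MulAction.fixedBy ↥Y h)
          = Nat.card (MulAction.fixedBy ↥Y h) := Nat.card_eq_fintype_card.symm
        _ = Nat.card ↥Y := by rw [hset]; exact Nat.card_congr (Equiv.Set.univ _)
        _ = cY := Nat.card_eq_fintype_card
    · rw [if_neg hs]
      obtain ⟨x, y, hxy, hset⟩ := fixpair h hs
      have hxmem : x ∈ {z : PL kk | h • z = z} := by
        rw [hset]; exact Set.mem_insert _ _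
      have hymem : y ∈ {z : PL kk | h • z = z} := by
        rw [hset]; exact Set.mem_insert_iff.2 (Or.inr rfl)
      have hxY : x ∈ Y := ⟨h, hs, hxmem⟩
      have hyY : y ∈ Y := ⟨h, hs, hymem⟩
      have hsetY : MulAction.fixedBy ↥Y h = {(⟨x, hxY⟩ : ↥Y), ⟨y, hyY⟩} := by
        ext z
        simp only [MulAction.mem_fixedBy, Set.mem_insert_iff, Set.mem_singleton_iff]
        constructor
        · intro hz
          have hz1 : z.1 ∈ {w : PL kk | h • w = w} := by
            have h2 : (h • z).1 = z.1 := congrArg Subtype.val hz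
            rw [hYsmul] at h2
            exact h2
          rw [hset] at hz1
          rcases hz1 with h1 | h1
          · exact Or.inl (Subtype.ext h1)
          · exact Or.inr (Subtype.ext h1)
        · rintro (rfl | rfl)
          · exact Subtype.ext (by rw [hYsmul]; exact hxmem)
          · exact Subtype.ext (by rw [hYsmul]; exact hymem)
      calc Fintype.card (MulAction.fixedBy ↥Y h)
          = Nat.card (MulAction.fixedBy ↥Y h) := Nat.card_eq_fintype_card.symm
        _ = 2 := by
            rw [hsetY, Nat.card_coe_set_eq,
              Set.ncard_pair (fun hq => hxy (congrArg Subtype.val hq))]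
  rw [Finset.sum_congr rfl (fun h _ => hfixcard h)] at hburn
  set zz := (Finset.univ.filter (fun h : ↥H => h ∈ Zc)).card with hzz
  set ww := (Finset.univ.filter (fun h : ↥H => ¬ h ∈ Zc)).card with hww
  have hsum_split : ∑ h : ↥H, (if h ∈ Zc then cY else 2) = zz * cY + ww * 2 := by
    rw [Finset.sum_ite, Finset.sum_const, Finset.sum_const, smul_eq_mul, smul_eq_mul]
  rw [hsum_split] at hburn
  have hzw : zz + ww = nH := by
    rw [hzz, hww, hnH, ← Finset.card_univ]
    exact Finset.card_filter_add_card_filter_not _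
  set z := Nat.card ↥Zc with hz
  have hzzz : zz = z := by
    rw [hz, Nat.card_eq_fintype_card, Fintype.card_subtype, hzz]
  -- nonemptiness
  obtain ⟨x₀, y₀, hxy₀, hset₀⟩ := fixpair h₀ hns₀
  have hx₀mem : x₀ ∈ {z : PL kk | h₀ • z = z} := by
    rw [hset₀]; exact Set.mem_insert _ _
  have hx₀Y : x₀ ∈ Y := ⟨h₀, hns₀, hx₀mem⟩
  haveI : Nonempty ↥Y := ⟨⟨x₀, hx₀Y⟩⟩
  haveI : Nonempty (Quotient (MulAction.orbitRel ↥H ↥Y)) := ⟨Quotient.mk'' ⟨x₀, hx₀Y⟩⟩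
  have hr1 : 1 ≤ r := by rw [hr]; exact Fintype.card_pos
  have hzpos : 1 ≤ z := by rw [hz]; exact Nat.card_pos
  have hzdvd : z ∣ Nat.card ↥H := Subgroup.card_subgroup_dvd_card Zc
  obtain ⟨Nn, hNn⟩ := hzdvd
  have hnn : nH = z * Nn := by rw [hnH, ← Nat.card_eq_fintype_card]; exact hNn
  -- per-orbit data
  have horb : ∀ ω : Quotient (MulAction.orbitRel ↥H ↥Y),
      ∃ o eZ : ℕ, Fintype.card (↥H ⧸ MulAction.stabilizer ↥H (Quotient.out ω)) = o ∧
        o * eZ = Nn ∧ 2 ≤ eZ ∧ 3 ≤ o := by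
    intro ω
    set y := Quotient.out ω with hy
    set K := MulAction.stabilizer ↥H y with hK
    set s := Nat.card ↥K with hs
    set o := Fintype.card (↥H ⧸ K) with ho
    have hos : Nat.card ↥H = o * s := by
      rw [Subgroup.card_eq_card_quotient_mul_card_subgroup K, hs, ho, Nat.card_eq_fintype_card]
    obtain ⟨v, hv, hxv⟩ := PL.exists_rep (y.1)
    have heigK : ∀ x : ↥H, x ∈ K → ∃ c : kk, (F x).val.mulVec v = c • v := by
      intro x hx
      have hfix : x • y = y := hx
      have hfix2 : x • y.1 = y.1 := by rw [← hYsmul, hfix]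
      rw [hxv] at hfix2
      exact (PL.smul_fixed_iff (F x) v hv).1 hfix2
    have hZcK : Zc ≤ K := by
      intro g hg
      show g • y = y
      exact Subtype.ext (by rw [hYsmul]; exact (hZc_mem g).1 hg y.1)
    obtain ⟨hw, hwns, hwfix⟩ := y.2
    have hwK : hw ∈ K := by
      show hw • y = y
      exact Subtype.ext (by rw [hYsmul]; exact hwfix)
    have hzs : z ∣ s := by rw [hz, hs]; exact Subgroup.card_dvd_of_le hZcK
    obtain ⟨eZ, heZ⟩ := hzs
    have hspos : 0 < s := by rw [hs]; exact Nat.card_pos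
    have hzneqs : z ≠ s := by
      intro hzeq
      have hKeq : Zc = K := Subgroup.eq_of_le_of_card_ge hZcK (by rw [← hz, ← hs, hzeq])
      exact hwns (hKeq ▸ hwK)
    have heZ2 : 2 ≤ eZ := by
      by_contra hlt
      push_neg at hlt
      interval_cases eZ
      · rw [mul_zero] at heZ; omega
      · rw [mul_one] at heZ; exact hzneqs heZ.symm
    have ho3 : 3 ≤ o := by
      by_contra hlt
      push_neg at hlt
      have hopos : 0 < o := by rw [ho]; exact Fintype.card_pos
      interval_cases o
      · have hKtop : K = ⊤ := by
          apply Subgroup.index_eq_one.1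
          rw [Subgroup.index_eq_card, Nat.card_eq_fintype_card, ← ho]
        exact killer K v hv heigK (fun a b => by rw [hKtop]; exact Subgroup.mem_top _)
      · have hidx : K.index = 2 := by
          rw [Subgroup.index_eq_card, Nat.card_eq_fintype_card, ← ho]
        apply killer K v hv heigK
        intro a b
        show a * b * a⁻¹ * b⁻¹ ∈ K
        rw [Subgroup.mul_mem_iff_of_index_two hidx, Subgroup.mul_mem_iff_of_index_two hidx,
          Subgroup.mul_mem_iff_of_index_two hidx, K.inv_mem_iff, K.inv_mem_iff]
        tauto
    refine ⟨o, eZ, rfl, ?_, heZ2, ho3⟩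
    have hcalc : z * (o * eZ) = z * Nn := by
      calc z * (o * eZ) = o * (z * eZ) := by ring
        _ = o * s := by rw [heZ]
        _ = Nat.card ↥H := hos.symm
        _ = z * Nn := hNn
    exact Nat.eq_of_mul_eq_mul_left hzpos hcalc
  choose oω eω hoω_card hoe he2 ho3 using horb
  have hcardYsum : cY = ∑ ω : Quotient (MulAction.orbitRel ↥H ↥Y),
      Fintype.card (↥H ⧸ MulAction.stabilizer ↥H (Quotient.out ω)) := by
    rw [hcY, Fintype.card_congr (MulAction.selfEquivSigmaOrbitsQuotientStabilizer ↥H ↥Y),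
      Fintype.card_sigma]
  have hsum_o : cY = ∑ ω : Quotient (MulAction.orbitRel ↥H ↥Y), oω ω := by
    rw [hcardYsum]
    exact Finset.sum_congr rfl (fun ω _ => hoω_card ω)
  have hb1 : 3 * r ≤ cY := by
    rw [hsum_o]
    have h3 := Finset.card_nsmul_le_sum Finset.univ oω 3 (fun ω _ => ho3 ω)
    rw [Finset.card_univ, smul_eq_mul] at h3
    rw [hr]
    linarith [h3]
  have hb2 : 2 * cY ≤ r * Nn := by
    rw [hsum_o, Finset.mul_sum]
    calc ∑ ω : Quotient (MulAction.orbitRel ↥H ↥Y), 2 * oω ω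
        ≤ ∑ _ω : Quotient (MulAction.orbitRel ↥H ↥Y), Nn := by
          apply Finset.sum_le_sum
          intro ω _
          calc 2 * oω ω = oω ω * 2 := by ring
            _ ≤ oω ω * eω ω := Nat.mul_le_mul_left _ (he2 ω)
            _ = Nn := hoe ω
      _ = r * Nn := by rw [Finset.sum_const, Finset.card_univ, smul_eq_mul, hr]
  have hburn2 : z * cY + ww * 2 = r * (z * Nn) := by
    rw [← hnn, ← hzzz]
    exact hburn
  have hzw2 : z + ww = z * Nn := by rw [← hnn, ← hzzz]; exact hzw
  have hmain : cY + 2 * Nn = r * Nn + 2 := by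
    have e3 : z * (cY + 2 * Nn) = z * (r * Nn + 2) := by
      calc z * (cY + 2 * Nn) = z * cY + 2 * (z * Nn) := by ring
        _ = z * cY + 2 * (z + ww) := by rw [hzw2]
        _ = (z * cY + ww * 2) + 2 * z := by ring
        _ = r * (z * Nn) + 2 * z := by rw [hburn2]
        _ = z * (r * Nn + 2) := by ring
    exact Nat.eq_of_mul_eq_mul_left hzpos e3
  have hq4 : r * Nn + 4 ≤ 4 * Nn := by linarith
  have hrle : r ≤ 3 := by
    by_contra h4
    push_neg at h4
    have h5 : 4 * Nn ≤ r * Nn := Nat.mul_le_mul_right Nn h4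
    linarith
  have hrcase : r = 1 ∨ r = 2 ∨ r = 3 := by omega
  rcases hrcase with hr3 | hr3 | hr3
  · rw [hr3] at hmain hb1
    omega
  · rw [hr3] at hmain hb1
    omega
  · rw [hr3] at hmain
    have hcY3 : cY = Nn + 2 := by omega
    have huc : (Finset.univ : Finset (Quotient (MulAction.orbitRel ↥H ↥Y))).card = 3 := by
      rw [Finset.card_univ, ← hr, hr3]
    obtain ⟨ω1, ω2, ω3, h12, h13, h23, huniv⟩ := Finset.card_eq_three.1 huc
    have hsum3 : oω ω1 + oω ω2 + oω ω3 = Nn + 2 := by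
      have e4 : cY = oω ω1 + (oω ω2 + oω ω3) := by
        rw [hsum_o, huniv, Finset.sum_insert (by simp [h12, h13]),
          Finset.sum_insert (by simp [h23]), Finset.sum_singleton]
      omega
    have hdio := dioph (hoe ω1) (hoe ω2) (hoe ω3) (he2 ω1) (he2 ω2) (he2 ω3)
      (ho3 ω1) (ho3 ω2) (ho3 ω3) hsum3
    have hzle2 : z ≤ 2 := by
      have hinj : Function.Injective (fun h : ↥Zc =>
          (decide ((h.1 : Matrix.SpecialLinearGroup (Fin 2) (ZMod p)).val = 1) : Bool)) := by
        intro g g' hgg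
        simp only [decide_eq_decide] at hgg
        by_cases hv1 : (g.1 : Matrix.SpecialLinearGroup (Fin 2) (ZMod p)).val = 1
        · have hv2 := hgg.1 hv1
          exact Subtype.ext (Subtype.ext (Subtype.ext (hv1.trans hv2.symm)))
        · have hv2 : ¬ (g'.1 : Matrix.SpecialLinearGroup (Fin 2) (ZMod p)).val = 1 :=
            fun h2 => hv1 (hgg.2 h2)
          have h1 := ((hZc_scalar g.1).1 g.2).resolve_left hv1
          have h2 := ((hZc_scalar g'.1).1 g'.2).resolve_left hv2
          exact Subtype.ext (Subtype.ext (Subtype.ext (h1.trans h2.symm)))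
      calc z = Nat.card ↥Zc := hz
        _ ≤ Nat.card Bool := Nat.card_le_card_of_injective _ hinj
        _ = 2 := by rw [Nat.card_eq_fintype_card, Fintype.card_bool]
    apply hnd
    have hzval : z = 1 ∨ z = 2 := by omega
    rcases hzval with hz1 | hz1 <;> rcases hdio with hN | hN | hN <;>
      rw [hNn, hz1, hN] <;> norm_num


end Dickson

theorem stmt13 (p : ℕ) (hp : p.Prime)
    (H : Subgroup (Matrix.SpecialLinearGroup (Fin 2) (ZMod p))) (hH : H ≠ ⊤) :
    (∀ a b c d : H, ⁅⁅a, b⁆, ⁅c, d⁆⁆ = 1) ∨ Nat.card H ∣ 240 := by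
  haveI := Fact.mk hp
  classical
  by_cases hpn : p ∣ Nat.card ↥H
  · -- p divides |H| : H is contained in a Borel or is everything
    haveI : Fintype ↥H := Fintype.ofFinite ↥H
    obtain ⟨x, hx⟩ := exists_prime_orderOf_dvd_card (G := ↥H) p
      (by rwa [Nat.card_eq_fintype_card] at hpn)
    set u : Matrix.SpecialLinearGroup (Fin 2) (ZMod p) := (x : Matrix.SpecialLinearGroup (Fin 2) (ZMod p)) with hudef
    have huord : orderOf u = p :=
      (orderOf_injective H.subtype (Subgroup.subtype_injective H) x).trans hx
    have hup : u ^ p = 1 := by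
      have h4 := pow_orderOf_eq_one u
      rwa [huord] at h4
    have hu1 : u ≠ 1 := by
      intro h
      have h2 := huord
      rw [h, orderOf_one] at h2
      exact hp.one_lt.ne' h2.symm
    set kk := AlgebraicClosure (ZMod p) with hkk
    set φ : ZMod p →+* kk := algebraMap (ZMod p) kk with hφ
    set e := Matrix.SpecialLinearGroup.map (n := Fin 2) φ with he
    have heup : (e u) ^ p = 1 := by rw [← map_pow, hup, _root_.map_one]
    have htr2 : (e u).val.trace = 2 := Dickson.trace_two_of_pow_p p heup
    have htru : u.val.trace = 2 := by
      apply φ.injective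
      have h3 : (e u).val.trace = φ (u.val.trace) := by
        rw [show (e u).val = u.val.map φ from rfl]
        rw [Matrix.trace_fin_two, Matrix.trace_fin_two, Matrix.map_apply, Matrix.map_apply,
          map_add]
      rw [← h3, htr2]
      rw [show ((2 : ZMod p) = (1 : ZMod p) + 1) from by norm_num, map_add, _root_.map_one]
      norm_num
    rcases Dickson.part1 p H x.2 htru hu1 with ⟨v, hv, hev⟩ | htop
    · left
      intro a b c d
      have h1 := Dickson.lemM (S := H) hv hev ↑a a.2 ↑b b.2 ↑c c.2 ↑d d.2
      apply Subtype.ext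
      exact h1
    · exact absurd htop hH
  · exact Dickson.part2 p H hpn
end

section
/- Let X be a nonempty, compact, metrizable, totally disconnected, perfect topological space (a Cantor space), let G be a group and let α : G → Homeo(X) be an action of G on X by homeomorphisms. Let T(α) be the topological full group of α. Suppose x ∈ X has infinite orbit Orb(x) = {α(g)(x) : g ∈ G}. Then T(α) preserves Orb(x) and acts highly transitively on it: for every n ≥ 1 and all n-tuples (y₁,…,y_n) and (z₁,…,z_n) of pairwise distinct points of Orb(x), there exists φ ∈ T(α) with φ(yᵢ) = zᵢ for all 1 ≤ i ≤ n. -/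
/-- `φ` belongs to the topological full group of the action `α` of `G` on `X`:
there are a finite partition of `X` into nonempty clopen sets `C₁, …, C_p` and elements
`g₁, …, g_p ∈ G` such that `φ` agrees with `α(gᵢ)` on `Cᵢ` for each `i`. -/
def InTopFullGroup {X : Type*} [TopologicalSpace X] {G : Type*} [Group G]
    (α : G → X ≃ₜ X) (φ : X ≃ₜ X) : Prop :=
  ∃ (p : ℕ) (C : Fin p → Set X) (g : Fin p → G),
    (∀ i, IsClopen (C i)) ∧ (∀ i, (C i).Nonempty) ∧
    (∀ i j, i ≠ j → Disjoint (C i) (C j)) ∧ (⋃ i, C i) = Set.univ ∧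
    ∀ i, ∀ x ∈ C i, φ x = α (g i) x

section Aux

variable {X : Type*} [TopologicalSpace X] {G : Type*} [Group G] (α : G → X ≃ₜ X)

lemma alpha_inv_apply (hone : α 1 = Homeomorph.refl X)
    (hmul : ∀ g h : G, ∀ p : X, α (g * h) p = α g (α h p)) (g : G) (p : X) :
    α g⁻¹ (α g p) = p := by
  rw [← hmul, inv_mul_cancel, hone]; rfl

lemma alpha_symm_apply (hone : α 1 = Homeomorph.refl X)
    (hmul : ∀ g h : G, ∀ p : X, α (g * h) p = α g (α h p)) (g : G) (z : X) :
    (α g).symm z = α g⁻¹ z := by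
  apply (α g).injective
  rw [Homeomorph.apply_symm_apply, ← hmul, mul_inv_cancel, hone]; rfl

/-- Criterion for membership in the topological full group where the pieces may be empty and
indexed by any finite type. -/
lemma mem_TFG_of_fintype {ι : Type} [Fintype ι] (φ : X ≃ₜ X) (C : ι → Set X) (g : ι → G)
    (hclo : ∀ i, IsClopen (C i)) (hdisj : ∀ i j, i ≠ j → Disjoint (C i) (C j))
    (hcov : (⋃ i, C i) = Set.univ) (hag : ∀ i, ∀ x ∈ C i, φ x = α (g i) x) :
    InTopFullGroup α φ := by
  classical
  let s : Type := {i : ι // (C i).Nonempty}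
  let e : Fin (Fintype.card s) ≃ s := (Fintype.equivFin s).symm
  refine ⟨Fintype.card s, fun j => C (e j).1, fun j => g (e j).1,
    fun j => hclo _, fun j => (e j).2, fun i j hij => hdisj _ _ ?_, ?_,
    fun i z hz => hag _ _ hz⟩
  · intro hval
    exact hij (e.injective (Subtype.ext hval))
  · apply Set.eq_univ_of_forall
    intro z
    have hz : z ∈ ⋃ i, C i := hcov ▸ Set.mem_univ z
    obtain ⟨i, hi⟩ := Set.mem_iUnion.mp hz
    have his : (C i).Nonempty := ⟨z, hi⟩
    refine Set.mem_iUnion.mpr ⟨e.symm ⟨i, his⟩, ?_⟩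
    simpa [e.apply_symm_apply] using hi

lemma TFG_refl [Nonempty X] (hone : α 1 = Homeomorph.refl X) :
    InTopFullGroup α (Homeomorph.refl X) :=
  ⟨1, fun _ => Set.univ, fun _ => 1, fun _ => isClopen_univ, fun _ => Set.univ_nonempty,
    fun i j hij => absurd (Subsingleton.elim i j) hij, by rw [Set.iUnion_const],
    fun _ z _ => by rw [hone]⟩

lemma TFG_trans (hmul : ∀ g h : G, ∀ p : X, α (g * h) p = α g (α h p))
    {φ ψ : X ≃ₜ X} (hφ : InTopFullGroup α φ) (hψ : InTopFullGroup α ψ) :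
    InTopFullGroup α (φ.trans ψ) := by
  obtain ⟨p, C, g, hC1, -, hC3, hC4, hC5⟩ := hφ
  obtain ⟨q, D, h, hD1, -, hD3, hD4, hD5⟩ := hψ
  apply mem_TFG_of_fintype α (ι := Fin p × Fin q) _
    (fun ij => C ij.1 ∩ φ ⁻¹' D ij.2) (fun ij => h ij.2 * g ij.1)
  · intro ij
    exact (hC1 _).inter ((hD1 _).preimage φ.continuous)
  · intro i j hij
    by_cases h1 : i.1 = j.1
    · have h2 : i.2 ≠ j.2 := fun hh => hij (Prod.ext h1 hh)
      exact (((hD3 _ _ h2).preimage φ).mono Set.inter_subset_right Set.inter_subset_right)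
    · exact ((hC3 _ _ h1).mono Set.inter_subset_left Set.inter_subset_left)
  · apply Set.eq_univ_of_forall
    intro z
    have hz : z ∈ ⋃ i, C i := hC4 ▸ Set.mem_univ z
    obtain ⟨i, hi⟩ := Set.mem_iUnion.mp hz
    have hz2 : φ z ∈ ⋃ j, D j := hD4 ▸ Set.mem_univ (φ z)
    obtain ⟨j, hj⟩ := Set.mem_iUnion.mp hz2
    exact Set.mem_iUnion.mpr ⟨(i, j), ⟨hi, hj⟩⟩
  · rintro ij z ⟨hz1, hz2⟩
    show ψ (φ z) = _
    rw [hD5 _ _ hz2, hC5 _ _ hz1, hmul]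

lemma TFG_symm (hone : α 1 = Homeomorph.refl X)
    (hmul : ∀ g h : G, ∀ p : X, α (g * h) p = α g (α h p))
    {φ : X ≃ₜ X} (hφ : InTopFullGroup α φ) : InTopFullGroup α φ.symm := by
  obtain ⟨p, C, g, hC1, -, hC3, hC4, hC5⟩ := hφ
  apply mem_TFG_of_fintype α (ι := Fin p) _ (fun i => φ.symm ⁻¹' C i) (fun i => (g i)⁻¹)
  · intro i; exact (hC1 i).preimage φ.symm.continuous
  · intro i j hij; exact (hC3 i j hij).preimage _
  · apply Set.eq_univ_of_forall
    intro z
    have hz : φ.symm z ∈ ⋃ i, C i := hC4 ▸ Set.mem_univ _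
    obtain ⟨i, hi⟩ := Set.mem_iUnion.mp hz
    exact Set.mem_iUnion.mpr ⟨i, hi⟩
  · intro i z hz
    have h1 : φ (φ.symm z) = α (g i) (φ.symm z) := hC5 i _ hz
    have h2 : z = α (g i) (φ.symm z) := by rw [← h1, Homeomorph.apply_symm_apply]
    have h3 : α (g i)⁻¹ z = φ.symm z := by
      conv_lhs => rw [h2]
      exact alpha_inv_apply α hone hmul _ _
    exact h3.symm

/-- The key "move" lemma: an element of the topological full group sending `a` to `α h a`
while fixing a given finite set. -/
lemma TFG_move [CompactSpace X] [T2Space X] [TotallyDisconnectedSpace X]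
    (hone : α 1 = Homeomorph.refl X)
    (hmul : ∀ g h : G, ∀ p : X, α (g * h) p = α g (α h p))
    (h : G) (a : X) (hab : α h a ≠ a) (F : Set X) (hF : F.Finite)
    (haF : a ∉ F) (hbF : α h a ∉ F) :
    ∃ φ : X ≃ₜ X, InTopFullGroup α φ ∧ φ a = α h a ∧ ∀ w ∈ F, φ w = w := by
  classical
  obtain ⟨B, A, hB, hA, hbB, haA, hABd⟩ := t2_separation hab
  have hFc : IsClosed F := hF.isClosed
  set O : Set X := A ∩ (α h) ⁻¹' B ∩ Fᶜ ∩ (α h) ⁻¹' Fᶜ with hO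
  have hOopen : IsOpen O :=
    (((hA.inter (hB.preimage (α h).continuous)).inter hFc.isOpen_compl).inter
      (hFc.isOpen_compl.preimage (α h).continuous))
  have haO : a ∈ O := ⟨⟨⟨haA, hbB⟩, haF⟩, hbF⟩
  obtain ⟨U, hU, haU, hUO⟩ := compact_exists_isClopen_in_isOpen hOopen haO
  set V : Set X := (α h).symm ⁻¹' U with hVdef
  have hV : IsClopen V := hU.preimage (α h).symm.continuous
  have hmemV : ∀ z, z ∈ V ↔ (α h).symm z ∈ U := fun z => Iff.rfl
  have hUV : Disjoint U V := by
    rw [Set.disjoint_left]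
    intro z hzU hzV
    have hzA : z ∈ A := (hUO hzU).1.1.1
    have h1 : (α h).symm z ∈ U := hzV
    have h2 : α h ((α h).symm z) ∈ B := (hUO h1).1.1.2
    rw [Homeomorph.apply_symm_apply] at h2
    exact Set.disjoint_left.mp hABd h2 hzA
  have hVF : ∀ z ∈ V, z ∉ F := by
    intro z hz
    have h1 : (α h).symm z ∈ U := hz
    have h2 : α h ((α h).symm z) ∈ Fᶜ := (hUO h1).2
    rwa [Homeomorph.apply_symm_apply] at h2
  have hUF : ∀ z ∈ U, z ∉ F := fun z hz => (hUO hz).1.2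
  -- the piecewise map
  set f : X → X := U.piecewise (α h) (V.piecewise (α h).symm id) with hfdef
  have hfU : ∀ z ∈ U, f z = α h z := fun z hz => Set.piecewise_eq_of_mem _ _ _ hz
  have hfV : ∀ z ∈ V, f z = (α h).symm z := by
    intro z hz
    have h1 : z ∉ U := fun hzU => Set.disjoint_left.mp hUV hzU hz
    rw [hfdef]
    rw [Set.piecewise_eq_of_notMem _ _ _ h1, Set.piecewise_eq_of_mem _ _ _ hz]
  have hfO : ∀ z, z ∉ U → z ∉ V → f z = z := by
    intro z h1 h2
    rw [hfdef, Set.piecewise_eq_of_notMem _ _ _ h1, Set.piecewise_eq_of_notMem _ _ _ h2]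
    rfl
  have hinvol : ∀ z, f (f z) = z := by
    intro z
    by_cases hzU : z ∈ U
    · have h2 : α h z ∈ V := by
        rw [hmemV, Homeomorph.symm_apply_apply]; exact hzU
      rw [hfU z hzU, hfV _ h2, Homeomorph.symm_apply_apply]
    · by_cases hzV : z ∈ V
      · have h2 : (α h).symm z ∈ U := hzV
        rw [hfV z hzV, hfU _ h2, Homeomorph.apply_symm_apply]
      · rw [hfO z hzU hzV, hfO z hzU hzV]
  have hcont : Continuous f := by
    apply Continuous.piecewise
    · intro a ha; rw [hU.frontier_eq] at ha; exact absurd ha (Set.notMem_empty a)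
    · exact (α h).continuous
    · apply Continuous.piecewise
      · intro a ha; rw [hV.frontier_eq] at ha; exact absurd ha (Set.notMem_empty a)
      · exact (α h).symm.continuous
      · exact continuous_id
  refine ⟨⟨⟨f, f, hinvol, hinvol⟩, hcont, hcont⟩, ?_, hfU a haU, ?_⟩
  · -- membership in the topological full group
    apply mem_TFG_of_fintype α (ι := Fin 3) _ ![U, V, (U ∪ V)ᶜ] ![h, h⁻¹, 1]
    · intro i
      fin_cases i
      · exact hU
      · exact hV
      · exact (hU.union hV).compl
    · intro i j hij
      have d1 : Disjoint U (U ∪ V)ᶜ :=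
        disjoint_compl_right.mono Set.subset_union_left le_rfl
      have d2 : Disjoint V (U ∪ V)ᶜ :=
        disjoint_compl_right.mono Set.subset_union_right le_rfl
      fin_cases i <;> fin_cases j <;>
        simp only [Matrix.cons_val_zero, Matrix.cons_val_one, Matrix.head_cons,
          Matrix.cons_val_two, Matrix.tail_cons] <;>
        first
          | exact absurd rfl hij
          | exact hUV
          | exact hUV.symm
          | exact d1
          | exact d1.symm
          | exact d2
          | exact d2.symm
    · apply Set.eq_univ_of_forall
      intro z
      by_cases h1 : z ∈ U
      · exact Set.mem_iUnion.mpr ⟨0, h1⟩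
      · by_cases h2 : z ∈ V
        · exact Set.mem_iUnion.mpr ⟨1, h2⟩
        · refine Set.mem_iUnion.mpr ⟨2, ?_⟩
          simp only [Matrix.cons_val_two, Matrix.tail_cons, Matrix.head_cons, Set.mem_compl_iff,
            Set.mem_union]
          tauto
    · intro i z hz
      fin_cases i
      · simpa using hfU z hz
      · show f z = α h⁻¹ z
        rw [hfV z hz, alpha_symm_apply α hone hmul]
      · show f z = α 1 z
        simp only [Set.mem_compl_iff, Set.mem_union] at hz
        rw [hfO z (fun hh => hz (Or.inl hh)) (fun hh => hz (Or.inr hh)), hone]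
        rfl
  · -- fixes F
    intro w hw
    have h1 : w ∉ U := fun hh => hUF w hh hw
    have h2 : w ∉ V := fun hh => hVF w hh hw
    exact hfO w h1 h2

end Aux

theorem stmt16 (X : Type*) [TopologicalSpace X] [Nonempty X] [CompactSpace X]
    [TopologicalSpace.MetrizableSpace X] [TotallyDisconnectedSpace X]
    (hperf : Perfect (Set.univ : Set X))
    (G : Type*) [Group G] (α : G → X ≃ₜ X)
    (hone : α 1 = Homeomorph.refl X)
    (hmul : ∀ g h : G, ∀ p : X, α (g * h) p = α g (α h p))
    (x : X) (hinf : (Set.range fun g : G => α g x).Infinite) :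
    (∀ φ : X ≃ₜ X, InTopFullGroup α φ →
      ∀ y ∈ Set.range fun g : G => α g x, φ y ∈ Set.range fun g : G => α g x) ∧
    (∀ n : ℕ, 1 ≤ n → ∀ y z : Fin n → X,
      (∀ i, y i ∈ Set.range fun g : G => α g x) →
      (∀ i, z i ∈ Set.range fun g : G => α g x) →
      Function.Injective y → Function.Injective z →
      ∃ φ : X ≃ₜ X, InTopFullGroup α φ ∧ ∀ i, φ (y i) = z i) := by
  classical
  set Orb : Set X := Set.range fun g : G => α g x with hOrb
  -- any element of the orbit can be moved to any other by some `α h`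
  have key_orbit : ∀ a ∈ Orb, ∀ b ∈ Orb, ∃ h : G, α h a = b := by
    rintro a ⟨g1, hg1⟩ b ⟨g2, hg2⟩
    refine ⟨g2 * g1⁻¹, ?_⟩
    rw [← hg1, ← hg2, hmul, alpha_inv_apply α hone hmul]
  -- the move-tuple lemma
  have move_tuple : ∀ (n : ℕ) (y w : Fin n → X), (∀ i, y i ∈ Orb) → (∀ i, w i ∈ Orb) →
      Function.Injective y → Function.Injective w → (∀ i j, y i ≠ w j) →
      ∃ φ : X ≃ₜ X, InTopFullGroup α φ ∧ ∀ i, φ (y i) = w i := by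
    intro n y w hy hw hyinj hwinj hd
    have main : ∀ k : ℕ, ∃ φ : X ≃ₜ X, InTopFullGroup α φ ∧
        (∀ i : Fin n, (i : ℕ) < k → φ (y i) = w i) ∧
        (∀ i : Fin n, k ≤ (i : ℕ) → φ (y i) = y i) := by
      intro k
      induction k with
      | zero =>
        exact ⟨Homeomorph.refl X, TFG_refl α hone,
          fun i hi => absurd hi (Nat.not_lt_zero _), fun i _ => rfl⟩
      | succ k ih =>
        obtain ⟨φk, hφk, hlt, hge⟩ := ih
        by_cases hkn : k < n
        · set kk : Fin n := ⟨k, hkn⟩ with hkk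
          obtain ⟨h, hh⟩ := key_orbit (y kk) (hy kk) (w kk) (hw kk)
          set F : Set X := (Set.range y ∪ Set.range w) \ {y kk, w kk} with hF
          have hFfin : F.Finite :=
            (((Set.finite_range y).union (Set.finite_range w)).diff)
          have haF : y kk ∉ F := fun hh2 => hh2.2 (Or.inl rfl)
          have hbF : α h (y kk) ∉ F := by
            rw [hh]; exact fun hh2 => hh2.2 (Or.inr rfl)
          have hne : α h (y kk) ≠ y kk := by rw [hh]; exact (hd kk kk).symm
          obtain ⟨σ, hσTFG, hσa, hσF⟩ :=
            TFG_move α hone hmul h (y kk) hne F hFfin haF hbF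
          refine ⟨φk.trans σ, TFG_trans α hmul hφk hσTFG, ?_, ?_⟩
          · intro i hi
            show σ (φk (y i)) = w i
            rcases Nat.lt_succ_iff_lt_or_eq.mp hi with hik | hik
            · rw [hlt i hik]
              apply hσF
              refine ⟨Or.inr (Set.mem_range_self i), ?_⟩
              intro hmem
              rcases hmem with hmem | hmem
              · exact (hd kk i).symm hmem
              · have hikk : i = kk := hwinj hmem
                rw [hikk] at hik
                simp [hkk] at hik
            · have hikk : i = kk := Fin.ext hik
              rw [hikk, hge kk le_rfl, hσa, hh]
          · intro i hi
            show σ (φk (y i)) = y i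
            have hik : k ≤ (i : ℕ) := Nat.le_of_succ_le hi
            rw [hge i hik]
            apply hσF
            have hik2 : i ≠ kk := by
              intro hEq; rw [hEq] at hi; simp [hkk] at hi
            refine ⟨Or.inl (Set.mem_range_self i), ?_⟩
            intro hmem
            rcases hmem with hmem | hmem
            · exact hik2 (hyinj hmem)
            · exact hd i kk hmem
        · refine ⟨φk, hφk, fun i hi => hlt i ?_, fun i hi => hge i ?_⟩
          · exact lt_of_lt_of_le i.isLt (le_of_not_gt hkn)
          · omega
    obtain ⟨φ, hφ, hφ1, -⟩ := main n
    exact ⟨φ, hφ, fun i => hφ1 i i.isLt⟩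
  constructor
  · -- the orbit is invariant
    rintro φ ⟨p, C, g, -, -, -, hcov, hag⟩ y ⟨gy, hgy⟩
    have hy : y ∈ ⋃ i, C i := hcov ▸ Set.mem_univ y
    obtain ⟨i, hi⟩ := Set.mem_iUnion.mp hy
    refine ⟨g i * gy, ?_⟩
    show α (g i * gy) x = φ y
    have hgy' : α gy x = y := hgy
    rw [hmul, hgy', hag i y hi]
  · -- high transitivity
    intro n _ y z hy hz hyinj hzinj
    set S : Set X := Orb \ (Set.range y ∪ Set.range z) with hS
    have hSinf : S.Infinite :=
      hinf.diff ((Set.finite_range y).union (Set.finite_range z))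
    set e : ℕ ↪ S := Set.Infinite.natEmbedding S hSinf with he
    set w : Fin n → X := fun i => (e (i : ℕ) : X) with hw
    have hwS : ∀ i, w i ∈ S := fun i => (e (i : ℕ)).2
    have hwOrb : ∀ i, w i ∈ Orb := fun i => (hwS i).1
    have hwinj : Function.Injective w := by
      intro i j hij
      have := e.injective (Subtype.ext hij)
      exact Fin.ext (by exact_mod_cast this)
    have hd1 : ∀ i j, y i ≠ w j := by
      intro i j hEq
      exact (hwS j).2 (Or.inl ⟨i, hEq⟩)
    have hd2 : ∀ i j, z i ≠ w j := by
      intro i j hEq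
      exact (hwS j).2 (Or.inr ⟨i, hEq⟩)
    obtain ⟨φ1, hφ1TFG, hφ1⟩ := move_tuple n y w hy hwOrb hyinj hwinj hd1
    obtain ⟨φ2, hφ2TFG, hφ2⟩ := move_tuple n z w hz hwOrb hzinj hwinj hd2
    refine ⟨φ1.trans φ2.symm, TFG_trans α hmul hφ1TFG (TFG_symm α hone hmul hφ2TFG), ?_⟩
    intro i
    show φ2.symm (φ1 (y i)) = z i
    rw [hφ1 i, ← hφ2 i, Homeomorph.symm_apply_apply]
end

section
/- Let a = [[1,2],[0,1]] and b = [[1,0],[2,1]] in SL₂(ℤ). Then a and b freely generate a free subgroup of rank 2 of SL₂(ℤ) (the homomorphism from the free group on two generators sending them to a and b is injective with image ⟨a,b⟩), and the subgroup ⟨a,b⟩ has finite index in SL₂(ℤ). -/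
/-- The Sanov matrix `a = [[1,2],[0,1]]` in `SL₂(ℤ)`. -/
def sanovA : Matrix.SpecialLinearGroup (Fin 2) ℤ :=
  ⟨!![1, 2; 0, 1], by simp [Matrix.det_fin_two_of]⟩

/-- The Sanov matrix `b = [[1,0],[2,1]]` in `SL₂(ℤ)`. -/
def sanovB : Matrix.SpecialLinearGroup (Fin 2) ℤ :=
  ⟨!![1, 0; 2, 1], by simp [Matrix.det_fin_two_of]⟩

abbrev SL2Z := Matrix.SpecialLinearGroup (Fin 2) ℤ

/-- nonzero integer vectors -/
abbrev SanovV := {v : Fin 2 → ℤ // v ≠ 0}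

instance sanovAction : MulAction SL2Z SanovV where
  smul g v := ⟨g.1.mulVec v.1, by
    intro h
    apply v.2
    have : (g⁻¹ * g).1.mulVec v.1 = 0 := by
      rw [Matrix.SpecialLinearGroup.coe_mul, ← Matrix.mulVec_mulVec, h, Matrix.mulVec_zero]
    simpa using this⟩
  one_smul v := Subtype.ext (by show (1 : SL2Z).1.mulVec v.1 = v.1; simp)
  mul_smul g h v := Subtype.ext (by
    show (g * h).1.mulVec v.1 = g.1.mulVec (h.1.mulVec v.1)
    rw [Matrix.SpecialLinearGroup.coe_mul, Matrix.mulVec_mulVec])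

lemma sanov_smul_coe (g : SL2Z) (v : SanovV) : (g • v).1 = g.1.mulVec v.1 := rfl

def sanovAi : SL2Z := ⟨!![1, -2; 0, 1], by simp [Matrix.det_fin_two_of]⟩
def sanovBi : SL2Z := ⟨!![1, 0; -2, 1], by simp [Matrix.det_fin_two_of]⟩

lemma sanovA_inv : sanovA⁻¹ = sanovAi := by
  apply inv_eq_of_mul_eq_one_right
  ext i j
  rw [Matrix.SpecialLinearGroup.coe_mul]
  fin_cases i <;> fin_cases j <;>
    simp [sanovA, sanovAi, Matrix.mul_apply, Fin.sum_univ_two]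

lemma sanovB_inv : sanovB⁻¹ = sanovBi := by
  apply inv_eq_of_mul_eq_one_right
  ext i j
  rw [Matrix.SpecialLinearGroup.coe_mul]
  fin_cases i <;> fin_cases j <;>
    simp [sanovB, sanovBi, Matrix.mul_apply, Fin.sum_univ_two]

lemma smul_A (v : SanovV) : (sanovA • v).1 = ![v.1 0 + 2 * v.1 1, v.1 1] := by
  rw [sanov_smul_coe]; funext i
  fin_cases i <;>
    simp [sanovA, Matrix.mulVec, dotProduct, Fin.sum_univ_two] <;> ring

lemma smul_Ai (v : SanovV) : (sanovA⁻¹ • v).1 = ![v.1 0 - 2 * v.1 1, v.1 1] := by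
  rw [sanovA_inv, sanov_smul_coe]; funext i
  fin_cases i <;>
    simp [sanovAi, Matrix.mulVec, dotProduct, Fin.sum_univ_two] <;> ring

lemma smul_B (v : SanovV) : (sanovB • v).1 = ![v.1 0, v.1 1 + 2 * v.1 0] := by
  rw [sanov_smul_coe]; funext i
  fin_cases i <;>
    simp [sanovB, Matrix.mulVec, dotProduct, Fin.sum_univ_two] <;> ring

lemma smul_Bi (v : SanovV) : (sanovB⁻¹ • v).1 = ![v.1 0, v.1 1 - 2 * v.1 0] := by
  rw [sanovB_inv, sanov_smul_coe]; funext i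
  fin_cases i <;>
    simp [sanovBi, Matrix.mulVec, dotProduct, Fin.sum_univ_two] <;> ring

lemma sanov_nz (v : SanovV) : v.1 0 ≠ 0 ∨ v.1 1 ≠ 0 := by
  by_contra h
  push_neg at h
  apply v.2
  funext i
  fin_cases i <;> simp [h.1, h.2]

def sanovXA : Set SanovV := {v | 0 ≤ v.1 1 * (v.1 0 - v.1 1)}
def sanovYA : Set SanovV := {v | v.1 1 * (v.1 0 + v.1 1) < 0}
def sanovXB : Set SanovV := {v | 0 < v.1 0 * (v.1 1 - v.1 0) ∨ v.1 0 = 0}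
def sanovYB : Set SanovV := {v | v.1 0 * (v.1 0 + v.1 1) ≤ 0 ∧ v.1 0 ≠ 0}

lemma sanov_dXAXB : Disjoint sanovXA sanovXB := by
  rw [Set.disjoint_left]
  rintro v hv (hv' | hv') <;>
    simp only [sanovXA, Set.mem_setOf_eq] at hv
  · nlinarith [sq_nonneg (v.1 0 - v.1 1)]
  · rw [hv'] at hv
    have hww : v.1 1 * v.1 1 = 0 := le_antisymm (by linarith) (mul_self_nonneg _)
    rcases sanov_nz v with h | h
    · exact h hv'
    · exact h (mul_self_eq_zero.mp hww)

lemma sanov_dYAYB : Disjoint sanovYA sanovYB := by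
  rw [Set.disjoint_left]
  rintro v hv ⟨h1, h2⟩
  simp only [sanovYA, Set.mem_setOf_eq] at hv
  nlinarith [sq_nonneg (v.1 0 + v.1 1)]

lemma sanov_dXAYA : Disjoint sanovXA sanovYA := by
  rw [Set.disjoint_left]
  intro v hv hv'
  simp only [sanovXA, Set.mem_setOf_eq] at hv
  simp only [sanovYA, Set.mem_setOf_eq] at hv'
  nlinarith [sq_nonneg (v.1 1)]

lemma sanov_dXAYB : Disjoint sanovXA sanovYB := by
  rw [Set.disjoint_left]
  rintro v hv ⟨h1, h2⟩
  simp only [sanovXA, Set.mem_setOf_eq] at hv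
  have h3 : v.1 0 * v.1 0 = 0 :=
    le_antisymm (by nlinarith [mul_self_nonneg (v.1 1)]) (mul_self_nonneg _)
  exact h2 (mul_self_eq_zero.mp h3)

lemma sanov_dXBYA : Disjoint sanovXB sanovYA := by
  rw [Set.disjoint_left]
  rintro v (hv | hv) hv' <;>
    simp only [sanovYA, Set.mem_setOf_eq] at hv'
  · nlinarith [mul_self_nonneg (v.1 0), mul_self_nonneg (v.1 1)]
  · rw [hv] at hv'
    nlinarith [mul_self_nonneg (v.1 1)]

lemma sanov_dXBYB : Disjoint sanovXB sanovYB := by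
  rw [Set.disjoint_left]
  rintro v (hv | hv) ⟨h1, h2⟩
  · nlinarith [mul_self_nonneg (v.1 0)]
  · exact h2 hv

theorem sanov_injective :
    Function.Injective ⇑(FreeGroup.lift (fun i : Bool => if i then sanovA else sanovB)) := by
  apply FreeGroup.injective_lift_of_ping_pong _
      (fun i => if i then sanovXA else sanovXB) (fun i => if i then sanovYA else sanovYB)
  · -- nonempty
    intro i
    cases i
    · exact ⟨⟨![0, 1], by intro h; simpa using congrFun h 1⟩, Or.inr rfl⟩
    · exact ⟨⟨![1, 0], by intro h; simpa using congrFun h 0⟩, by simp [sanovXA]⟩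
  · intro i j hij
    cases i <;> cases j <;> first
      | exact absurd rfl hij
      | exact sanov_dXAXB.symm
      | exact sanov_dXAXB
  · intro i j hij
    cases i <;> cases j <;> first
      | exact absurd rfl hij
      | exact sanov_dYAYB.symm
      | exact sanov_dYAYB
  · intro i j
    cases i <;> cases j
    · exact sanov_dXBYB
    · exact sanov_dXBYA
    · exact sanov_dXAYB
    · exact sanov_dXAYA
  · -- a i • (Y i)ᶜ ⊆ X i
    intro i
    cases i <;> rintro x ⟨y, hy, rfl⟩
    · -- b
      have hy' : y ∉ sanovYB := hy
      simp only [sanovYB, Set.mem_setOf_eq, not_and_or, not_le, not_not] at hy'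
      show sanovB • y ∈ sanovXB
      simp only [sanovXB, Set.mem_setOf_eq, smul_B]
      simp only [Matrix.cons_val_zero, Matrix.cons_val_one, Matrix.head_cons]
      rcases hy' with hy' | hy'
      · left; nlinarith [hy']
      · right; exact hy'
    · -- a
      have hy' : y ∉ sanovYA := hy
      simp only [sanovYA, Set.mem_setOf_eq, not_lt] at hy'
      show sanovA • y ∈ sanovXA
      simp only [sanovXA, Set.mem_setOf_eq, smul_A]
      simp only [Matrix.cons_val_zero, Matrix.cons_val_one, Matrix.head_cons]
      nlinarith [hy']
  · -- (a i)⁻¹ • (X i)ᶜ ⊆ Y i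
    intro i
    cases i <;> rintro x ⟨y, hy, rfl⟩
    · -- b
      have hy' : y ∉ sanovXB := hy
      simp only [sanovXB, Set.mem_setOf_eq, not_or, not_lt] at hy'
      show sanovB⁻¹ • y ∈ sanovYB
      simp only [sanovYB, Set.mem_setOf_eq, smul_Bi]
      simp only [Matrix.cons_val_zero, Matrix.cons_val_one, Matrix.head_cons]
      exact ⟨by nlinarith [hy'.1], hy'.2⟩
    · -- a
      have hy' : y ∉ sanovXA := hy
      simp only [sanovXA, Set.mem_setOf_eq, not_le] at hy'
      show sanovA⁻¹ • y ∈ sanovYA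
      simp only [sanovYA, Set.mem_setOf_eq, smul_Ai]
      simp only [Matrix.cons_val_zero, Matrix.cons_val_one, Matrix.head_cons]
      nlinarith [hy']

instance : Fact (Even (Fintype.card (Fin 2))) := ⟨by simp⟩

/-- `H = ⟨a, b⟩`. -/
def sanovH : Subgroup SL2Z := Subgroup.closure {sanovA, sanovB}

lemma sanovA_mem : sanovA ∈ sanovH := Subgroup.subset_closure (by simp)
lemma sanovB_mem : sanovB ∈ sanovH := Subgroup.subset_closure (by simp)

lemma sanovA_zpow (k : ℤ) :
    sanovA ^ k = (⟨!![1, 2 * k; 0, 1], by simp [Matrix.det_fin_two_of]⟩ : SL2Z) := by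
  induction k using Int.induction_on with
  | zero => ext i j; fin_cases i <;> fin_cases j <;> simp
  | succ n ih =>
      rw [zpow_add, zpow_one]
      ext i j
      rw [Matrix.SpecialLinearGroup.coe_mul, ih]
      fin_cases i <;> fin_cases j <;>
        simp [sanovA, Matrix.mul_apply, Fin.sum_univ_two] <;> ring
  | pred n ih =>
      rw [sub_eq_add_neg, zpow_add]
      ext i j
      rw [Matrix.SpecialLinearGroup.coe_mul, ih, zpow_neg, zpow_one, sanovA_inv]
      fin_cases i <;> fin_cases j <;>
        simp [sanovAi, Matrix.mul_apply, Fin.sum_univ_two] <;> ring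

lemma sanovB_zpow (k : ℤ) :
    sanovB ^ k = (⟨!![1, 0; 2 * k, 1], by simp [Matrix.det_fin_two_of]⟩ : SL2Z) := by
  induction k using Int.induction_on with
  | zero => ext i j; fin_cases i <;> fin_cases j <;> simp
  | succ n ih =>
      rw [zpow_add, zpow_one]
      ext i j
      rw [Matrix.SpecialLinearGroup.coe_mul, ih]
      fin_cases i <;> fin_cases j <;>
        simp [sanovB, Matrix.mul_apply, Fin.sum_univ_two] <;> ring
  | pred n ih =>
      rw [sub_eq_add_neg, zpow_add]
      ext i j
      rw [Matrix.SpecialLinearGroup.coe_mul, ih, zpow_neg, zpow_one, sanovB_inv]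
      fin_cases i <;> fin_cases j <;>
        simp [sanovBi, Matrix.mul_apply, Fin.sum_univ_two] <;> ring

lemma sanov_neg_inv (x : SL2Z) : (-x)⁻¹ = -x⁻¹ :=
  inv_eq_of_mul_eq_one_right (by rw [neg_mul_neg, mul_inv_cancel])

/-- `H' = H ∪ -H` as a subgroup. -/
def sanovH' : Subgroup SL2Z where
  carrier := {g | g ∈ sanovH ∨ -g ∈ sanovH}
  one_mem' := Or.inl (one_mem _)
  mul_mem' := by
    rintro x y (hx | hx) (hy | hy)
    · exact Or.inl (mul_mem hx hy)
    · exact Or.inr (by rw [← mul_neg]; exact mul_mem hx hy)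
    · exact Or.inr (by rw [← neg_mul]; exact mul_mem hx hy)
    · exact Or.inl (by rw [← neg_mul_neg x y]; exact mul_mem hx hy)
  inv_mem' := by
    rintro x (hx | hx)
    · exact Or.inl (inv_mem hx)
    · exact Or.inr (by rw [← sanov_neg_inv]; exact inv_mem hx)

/-- Division step: reduce `p` modulo `2r`. -/
lemma sanov_div_step (p r : ℤ) (hr : r ≠ 0) (hpr : p % 2 ≠ r % 2) :
    ∃ k : ℤ, (p + 2 * k * r).natAbs < r.natAbs := by
  suffices h : ∀ r : ℤ, 0 < r → p % 2 ≠ r % 2 → ∃ k : ℤ, (p + 2 * k * r).natAbs < r.natAbs by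
    rcases hr.lt_or_gt with h1 | h1
    · obtain ⟨k, hk⟩ := h (-r) (by omega) (by omega)
      exact ⟨-k, by simpa [mul_comm, mul_assoc, neg_mul, mul_neg] using hk⟩
    · exact h r h1 hpr
  intro r hrpos hpr'
  set t := p % (2 * r) with ht
  set q := p / (2 * r) with hq
  have h2r : (0:ℤ) < 2 * r := by omega
  have htp : 2 * r * q + t = p := Int.mul_ediv_add_emod p (2 * r)
  have ht0 : 0 ≤ t := Int.emod_nonneg p (by omega)
  have ht2 : t < 2 * r := Int.emod_lt_of_pos p h2r
  have hteq : t % 2 = p % 2 := by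
    have : (p - 2 * (r * q)) % 2 = p % 2 := by
      have h' : p - 2 * (r * q) = p + 2 * -(r * q) := by ring
      rw [h', Int.add_mul_emod_self_left]
    have ht' : t = p - 2 * (r * q) := by linarith [htp]
    rw [ht', this]
  rcases lt_or_ge t r with h | h
  · refine ⟨-q, ?_⟩
    have : p + 2 * -q * r = t := by linarith [htp]
    rw [this]
    omega
  · refine ⟨-q - 1, ?_⟩
    have : p + 2 * (-q - 1) * r = t - 2 * r := by linarith [htp]
    rw [this]
    omega

lemma sanov_mulA_entries (k : ℤ) (g : SL2Z) :
    ((sanovA ^ k * g) : SL2Z).1 = !![g.1 0 0 + 2 * k * g.1 1 0, g.1 0 1 + 2 * k * g.1 1 1;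
      g.1 1 0, g.1 1 1] := by
  rw [Matrix.SpecialLinearGroup.coe_mul, sanovA_zpow]
  ext i j
  fin_cases i <;> fin_cases j <;>
    simp [Matrix.mul_apply, Fin.sum_univ_two] <;> ring

lemma sanov_mulB_entries (k : ℤ) (g : SL2Z) :
    ((sanovB ^ k * g) : SL2Z).1 = !![g.1 0 0, g.1 0 1;
      g.1 1 0 + 2 * k * g.1 0 0, g.1 1 1 + 2 * k * g.1 0 1] := by
  rw [Matrix.SpecialLinearGroup.coe_mul, sanovB_zpow]
  ext i j
  fin_cases i <;> fin_cases j <;>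
    simp [Matrix.mul_apply, Fin.sum_univ_two] <;> ring

lemma sanovH_le_H' : sanovH ≤ sanovH' := fun _ hx => Or.inl hx

lemma sanov_euclid : ∀ (n : ℕ) (g : SL2Z), g.1 0 0 % 2 = 1 → g.1 0 1 % 2 = 0 →
    g.1 1 0 % 2 = 0 → (g.1 0 0).natAbs + (g.1 1 0).natAbs ≤ n → g ∈ sanovH' := by
  intro n
  induction n with
  | zero => intro g hp hq hr hm; exact absurd hp (by omega)
  | succ n ih =>
    intro g hp hq hr hm
    by_cases hr0 : g.1 1 0 = 0
    · -- base case: upper triangular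
      have hdet : g.1 0 0 * g.1 1 1 = 1 := by
        have h := g.2
        rw [Matrix.det_fin_two] at h
        rw [hr0] at h; linarith [h]
      obtain ⟨m, hm2⟩ : 2 ∣ g.1 0 1 := Int.dvd_of_emod_eq_zero hq
      rcases Int.eq_one_or_neg_one_of_mul_eq_one' hdet with ⟨h1, h2⟩ | ⟨h1, h2⟩
      · left
        have hg : g = sanovA ^ m := by
          rw [sanovA_zpow]
          ext i j
          fin_cases i <;> fin_cases j <;> simp [h1, h2, hr0, hm2]
        rw [hg]; exact zpow_mem sanovA_mem m
      · right
        have hg : -g = sanovA ^ (-m) := by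
          rw [sanovA_zpow]
          ext i j
          rw [Matrix.SpecialLinearGroup.coe_neg]
          fin_cases i <;> fin_cases j <;> simp [h1, h2, hr0, hm2]
        rw [hg]; exact zpow_mem sanovA_mem (-m)
    · by_cases hcmp : (g.1 1 0).natAbs < (g.1 0 0).natAbs
      · -- reduce the top-left entry using a^k
        obtain ⟨k, hk⟩ := sanov_div_step (g.1 0 0) (g.1 1 0) hr0 (by omega)
        have hent := sanov_mulA_entries k g
        have h00 : (sanovA ^ k * g).1 0 0 = g.1 0 0 + 2 * k * g.1 1 0 := by rw [hent]; simp
        have h01 : (sanovA ^ k * g).1 0 1 = g.1 0 1 + 2 * k * g.1 1 1 := by rw [hent]; simp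
        have h10 : (sanovA ^ k * g).1 1 0 = g.1 1 0 := by rw [hent]; simp
        have hmem : sanovA ^ k * g ∈ sanovH' := by
          apply ih
          · rw [h00]
            have he : g.1 0 0 + 2 * k * g.1 1 0 = g.1 0 0 + 2 * (k * g.1 1 0) := by ring
            rw [he, Int.add_mul_emod_self_left]; exact hp
          · rw [h01]
            have he : g.1 0 1 + 2 * k * g.1 1 1 = g.1 0 1 + 2 * (k * g.1 1 1) := by ring
            rw [he, Int.add_mul_emod_self_left]; exact hq
          · rw [h10]; exact hr
          · rw [h00, h10]; omega
        have hg : g = sanovA ^ (-k) * (sanovA ^ k * g) := by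
          rw [← mul_assoc, ← zpow_add]; simp
        rw [hg]
        exact mul_mem (sanovH_le_H' (zpow_mem sanovA_mem (-k))) hmem
      · -- reduce the bottom-left entry using b^k
        have hp0 : g.1 0 0 ≠ 0 := by omega
        obtain ⟨k, hk⟩ := sanov_div_step (g.1 1 0) (g.1 0 0) hp0 (by omega)
        have hent := sanov_mulB_entries k g
        have h00 : (sanovB ^ k * g).1 0 0 = g.1 0 0 := by rw [hent]; simp
        have h01 : (sanovB ^ k * g).1 0 1 = g.1 0 1 := by rw [hent]; simp
        have h10 : (sanovB ^ k * g).1 1 0 = g.1 1 0 + 2 * k * g.1 0 0 := by rw [hent]; simp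
        have hmem : sanovB ^ k * g ∈ sanovH' := by
          apply ih
          · rw [h00]; exact hp
          · rw [h01]; exact hq
          · rw [h10]
            have he : g.1 1 0 + 2 * k * g.1 0 0 = g.1 1 0 + 2 * (k * g.1 0 0) := by ring
            rw [he, Int.add_mul_emod_self_left]; exact hr
          · rw [h00, h10]; omega
        have hg : g = sanovB ^ (-k) * (sanovB ^ k * g) := by
          rw [← mul_assoc, ← zpow_add]; simp
        rw [hg]
        exact mul_mem (sanovH_le_H' (zpow_mem sanovB_mem (-k))) hmem

/-- reduction mod 2 -/
def sanovRed : SL2Z →* Matrix.SpecialLinearGroup (Fin 2) (ZMod 2) :=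
  Matrix.SpecialLinearGroup.map (Int.castRingHom (ZMod 2))

lemma sanov_entry_parity {x : ℤ} (h : ((x : ZMod 2) = 0 ∨ (x : ZMod 2) = 1)) :
    (x : ZMod 2) = 0 ∧ x % 2 = 0 ∨ (x : ZMod 2) = 1 ∧ x % 2 = 1 := by
  rcases h with h | h
  · exact Or.inl ⟨h, by
      have := (ZMod.intCast_zmod_eq_zero_iff_dvd x 2).mp h
      omega⟩
  · refine Or.inr ⟨h, ?_⟩
    have h0 : ((x - 1 : ℤ) : ZMod 2) = 0 := by push_cast [h]; ring
    have := (ZMod.intCast_zmod_eq_zero_iff_dvd (x - 1) 2).mp h0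
    omega

lemma sanov_ker_le : sanovRed.ker ≤ sanovH' := by
  intro g hg
  rw [MonoidHom.mem_ker] at hg
  have hmat : ∀ i j, ((g.1 i j : ZMod 2)) = (1 : Matrix (Fin 2) (Fin 2) (ZMod 2)) i j := by
    intro i j
    have := congrArg (fun x => (x : Matrix (Fin 2) (Fin 2) (ZMod 2)) i j) (congrArg Subtype.val hg)
    simpa [sanovRed, Matrix.SpecialLinearGroup.map_apply_coe] using this
  have h00 : ((g.1 0 0 : ZMod 2)) = 1 := by simpa using hmat 0 0
  have h01 : ((g.1 0 1 : ZMod 2)) = 0 := by simpa using hmat 0 1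
  have h10 : ((g.1 1 0 : ZMod 2)) = 0 := by simpa using hmat 1 0
  have hp : g.1 0 0 % 2 = 1 := by
    rcases sanov_entry_parity (Or.inr h00) with ⟨h, _⟩ | ⟨_, h⟩
    · rw [h00] at h; exact absurd h (by decide)
    · exact h
  have hq : g.1 0 1 % 2 = 0 := by
    rcases sanov_entry_parity (Or.inl h01) with ⟨_, h⟩ | ⟨h, _⟩
    · exact h
    · rw [h01] at h; exact absurd h (by decide)
  have hr : g.1 1 0 % 2 = 0 := by
    rcases sanov_entry_parity (Or.inl h10) with ⟨_, h⟩ | ⟨h, _⟩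
    · exact h
    · rw [h10] at h; exact absurd h (by decide)
  exact sanov_euclid ((g.1 0 0).natAbs + (g.1 1 0).natAbs) g hp hq hr le_rfl

lemma sanovH'_finiteIndex : sanovH'.FiniteIndex :=
  Subgroup.finiteIndex_of_le sanov_ker_le

lemma sanov_neg_one_mem : (-1 : SL2Z) ∈ sanovH' := Or.inr (by rw [neg_neg]; exact one_mem _)

lemma sanovH_finiteIndex : sanovH.FiniteIndex := by
  have hle : sanovH ≤ sanovH' := sanovH_le_H'
  have hrel : sanovH.relIndex sanovH' ≠ 0 := by
    rw [Subgroup.relIndex]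
    have hsurj : Function.Surjective
        (fun b : Bool => if b then QuotientGroup.mk (s := sanovH.subgroupOf sanovH') 1
          else QuotientGroup.mk ⟨-1, sanov_neg_one_mem⟩) := by
      intro x
      induction x using QuotientGroup.induction_on with
      | H y =>
        rcases y.2 with hy | hy
        · refine ⟨true, ?_⟩
          simp only [if_true]
          rw [QuotientGroup.eq]
          apply Subgroup.mem_subgroupOf.mpr
          simpa using hy
        · refine ⟨false, ?_⟩
          simp only [Bool.false_eq_true, if_false]
          rw [QuotientGroup.eq]
          apply Subgroup.mem_subgroupOf.mpr
          show ((⟨-1, sanov_neg_one_mem⟩ : sanovH')⁻¹ * y : sanovH').1 ∈ sanovH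
          have : ((⟨-1, sanov_neg_one_mem⟩ : sanovH')⁻¹ * y : sanovH').1 = -y.1 := by
            simp [sanov_neg_inv]
          rw [this]; exact hy
    have hfin : Finite (sanovH' ⧸ sanovH.subgroupOf sanovH') := Finite.of_surjective _ hsurj
    have hne : Nonempty (sanovH' ⧸ sanovH.subgroupOf sanovH') := ⟨QuotientGroup.mk 1⟩
    exact Nat.card_ne_zero.mpr ⟨hne, hfin⟩
  constructor
  rw [← Subgroup.relIndex_mul_index hle]
  exact Nat.mul_ne_zero hrel sanovH'_finiteIndex.index_ne_zero

theorem stmt18 :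
    Function.Injective
      ⇑(FreeGroup.lift (fun i : Bool => if i then sanovA else sanovB)) ∧
    (Subgroup.closure {sanovA, sanovB}).FiniteIndex ∧
    MonoidHom.range (FreeGroup.lift (fun i : Bool => if i then sanovA else sanovB)) =
      Subgroup.closure {sanovA, sanovB} := by
  refine ⟨sanov_injective, sanovH_finiteIndex, ?_⟩
  rw [FreeGroup.range_lift_eq_closure]
  congr 1
  ext x
  simp only [Set.mem_range, Set.mem_insert_iff, Set.mem_singleton_iff]
  constructor
  · rintro ⟨b, rfl⟩
    cases b
    · simp
    · simp
  · rintro (rfl | rfl)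
    · exact ⟨true, rfl⟩
    · exact ⟨false, rfl⟩
end
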